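/- arXiv:2005.07056 — 10 statements merged into one kernel-verified Lean document; each statement's English description precedes it below -/
import Mathlib

section
/- Let n be a positive integer and define the matrix A ∈ M_{n³,n}(ℂ) (rows indexed by triples (a,b,c) ∈ {1,…,n}³, columns by l ∈ {1,…,n}) by A((a,b,c), l) = 1/√n if a = b and l = c, and A((a,b,c), l) = 0 otherwise. Then: (i) AᴴA = 1_n; (ii) for every X ∈ M_n(ℂ) and all a, a' ∈ {1,…,n}, Σ_{b,c=1}^{n} (A X Aᴴ)((a,b,c),(a',b,c)) = (Tr X / n)·δ_{a,a'} (the partial trace of AXAᴴ over the last two tensor factors equals Ω_n(X)); and (iii) for every X ∈ M_n(ℂ) and all b,b',c,c' ∈ {1,…,n}, Σ_{a=1}^{n} (A X Aᴴ)((a,b,c),(a,b',c')) = (1/n)·δ_{b,b'}·X(c,c') (the partial trace of AXAᴴ over the first tensor factor equals (1/n)·1_n ⊗ X). -/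
open Matrix BigOperators

/-- The isometry `A ∈ M_{n³,n}(ℂ)` with entries
`A((a,b,c),l) = 1/√n` if `a = b` and `l = c` (else 0) satisfies `AᴴA = 1`,
and conjugation by `A` followed by the two partial traces yields the completely
depolarizing channel `Ω_n` and the complementary channel `X ↦ (1/n)·1_n ⊗ X`. -/
theorem stmt_0 (n : ℕ) (hn : 0 < n)
    (A : Matrix (Fin n × Fin n × Fin n) (Fin n) ℂ)
    (hA : ∀ (a b c l : Fin n),
      A (a, b, c) l = if a = b ∧ l = c then (1 : ℂ) / (Real.sqrt n : ℂ) else 0) :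
    Aᴴ * A = 1 ∧
    (∀ (X : Matrix (Fin n) (Fin n) ℂ) (a a' : Fin n),
      (∑ b : Fin n, ∑ c : Fin n, (A * X * Aᴴ) (a, b, c) (a', b, c)) =
        (Matrix.trace X / (n : ℂ)) * (if a = a' then 1 else 0)) ∧
    (∀ (X : Matrix (Fin n) (Fin n) ℂ) (b b' c c' : Fin n),
      (∑ a : Fin n, (A * X * Aᴴ) (a, b, c) (a, b', c')) =
        ((1 : ℂ) / (n : ℂ)) * (if b = b' then 1 else 0) * X c c') := by
  have hn0 : (n : ℂ) ≠ 0 := Nat.cast_ne_zero.mpr hn.ne'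
  have hsq : ((Real.sqrt n : ℂ)) * ((Real.sqrt n : ℂ)) = (n : ℂ) := by
    rw [← Complex.ofReal_mul, Real.mul_self_sqrt (Nat.cast_nonneg n)]
    simp
  have hsq' : (1 : ℂ) / (Real.sqrt n : ℂ) * ((1 : ℂ) / (Real.sqrt n : ℂ)) = 1 / n := by
    rw [div_mul_div_comm, one_mul, hsq]
  have hconj : (starRingEnd ℂ) ((1 : ℂ) / (Real.sqrt n : ℂ)) = (1 : ℂ) / (Real.sqrt n : ℂ) := by
    simp
  have key : ∀ (X : Matrix (Fin n) (Fin n) ℂ) (a b c a' b' c' : Fin n),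
      (A * X * Aᴴ) (a, b, c) (a', b', c') =
        (if a = b then 1 else 0) * (if a' = b' then 1 else 0) * ((1 / (n : ℂ)) * X c c') := by
    intro X a b c a' b' c'
    simp only [Matrix.mul_apply, Matrix.conjTranspose_apply, hA]
    by_cases hab : a = b <;> by_cases ha'b' : a' = b' <;>
      simp [hab, ha'b', hconj, Finset.sum_ite_eq, Finset.sum_ite_eq', ite_and,
        apply_ite (starRingEnd ℂ), mul_ite, mul_zero, mul_assoc]
    have h2 : ((Real.sqrt n : ℂ))⁻¹ * ((Real.sqrt n : ℂ))⁻¹ = ((n : ℂ))⁻¹ := by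
      rw [← mul_inv, hsq]
    rw [mul_comm (X c c'), ← mul_assoc, h2]
  refine ⟨?_, ?_, ?_⟩
  · ext l l'
    simp only [Matrix.mul_apply, Matrix.conjTranspose_apply, hA, Fintype.sum_prod_type]
    by_cases hll' : l = l'
    · subst hll'
      simp [hconj, ite_and, Finset.sum_ite_eq, Finset.sum_ite_eq', hsq', Matrix.one_apply,
        Finset.mul_sum, Finset.card_univ, mul_comm ((n:ℂ)⁻¹)]
      field_simp
      rw [sq, hsq]
      exact div_self hn0
    · simp only [Matrix.one_apply, hll', if_neg hll']
      refine Finset.sum_eq_zero fun a _ => Finset.sum_eq_zero fun b _ => Finset.sum_eq_zero fun c _ => ?_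
      by_cases h : a = b ∧ l = c <;> by_cases h' : a = b ∧ l' = c <;>
        simp_all [h, h']
  · intro X a a'
    simp only [key]
    by_cases haa' : a = a'
    · subst haa'
      simp [Finset.sum_ite_eq, Matrix.trace, Matrix.diag, Finset.mul_sum, div_eq_mul_inv,
        mul_comm]
    · rw [if_neg haa', mul_zero]
      refine Finset.sum_eq_zero fun b _ => Finset.sum_eq_zero fun c _ => ?_
      by_cases h1 : a = b <;> by_cases h2 : a' = b <;> simp_all
  · intro X b b' c c'
    simp only [key]
    by_cases hbb' : b = b'
    · subst hbb'
      simp [Finset.sum_ite_eq, Finset.mul_sum]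
      try ring
    · simp only [if_neg hbb']
      refine Eq.trans (Finset.sum_eq_zero fun a _ => ?_) (by ring)
      by_cases h1 : a = b <;> by_cases h2 : a = b' <;> simp_all
end

section
/- Let n be a positive integer and let U_1, …, U_{n²} ∈ M_n(ℂ) be unitary matrices that are pairwise orthogonal with respect to the Hilbert–Schmidt inner product, i.e. Tr(U_jᴴ U_k) = 0 whenever j ≠ k. Then for every X ∈ M_n(ℂ), (1/n²) Σ_{k=1}^{n²} U_k X U_kᴴ = (Tr X / n)·1_n. -/
open Matrix BigOperators

/-- Any `n²` pairwise Hilbert–Schmidt-orthogonal unitary matrices give a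
mixed-unitary decomposition of the completely depolarizing channel `Ω_n`. -/
theorem stmt_1 (n : ℕ) (hn : 0 < n)
    (U : Fin (n ^ 2) → Matrix (Fin n) (Fin n) ℂ)
    (hU : ∀ k, (U k)ᴴ * U k = 1 ∧ U k * (U k)ᴴ = 1)
    (horth : ∀ j k, j ≠ k → Matrix.trace ((U j)ᴴ * U k) = 0) :
    ∀ X : Matrix (Fin n) (Fin n) ℂ,
      (1 / (n ^ 2 : ℂ)) • ∑ k, U k * X * (U k)ᴴ = (Matrix.trace X / (n : ℂ)) • 1 := by
  have hn0 : (n : ℂ) ≠ 0 := Nat.cast_ne_zero.mpr hn.ne'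
  set A : Matrix (Fin (n ^ 2)) (Fin n × Fin n) ℂ := fun k p => U k p.1 p.2 with hA
  have h1 : A * Aᴴ = (n : ℂ) • 1 := by
    ext j k
    simp only [mul_apply, conjTranspose_apply, Matrix.smul_apply, one_apply, smul_eq_mul]
    simp only [hA]
    rw [Fintype.sum_prod_type]
    by_cases h : j = k
    · subst h
      have htr : Matrix.trace ((U j)ᴴ * U j) = (n : ℂ) := by
        rw [(hU j).1, Matrix.trace_one]; simp
      rw [if_pos rfl, mul_one, ← htr, Matrix.trace]
      simp only [Matrix.diag, mul_apply, conjTranspose_apply]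
      rw [Finset.sum_comm]
      congr 1; ext a; congr 1; ext b; ring
    · rw [if_neg h, mul_zero]
      have h0 := horth k j (fun hh => h hh.symm)
      rw [Matrix.trace] at h0
      simp only [Matrix.diag, mul_apply, conjTranspose_apply] at h0
      rw [← h0, Finset.sum_comm]
      congr 1; ext a; congr 1; ext b; ring
  have e : Fin (n ^ 2) ≃ Fin n × Fin n :=
    (finCongr (sq n)).trans finProdFinEquiv.symm
  have h2 : Aᴴ * A = (n : ℂ) • 1 := by
    have hAB : A * ((n : ℂ)⁻¹ • Aᴴ) = 1 := by
      rw [Matrix.mul_smul, h1, smul_smul, inv_mul_cancel₀ hn0, one_smul]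
    have hBA := (Matrix.mul_eq_one_comm_of_equiv e).mp hAB
    rw [Matrix.smul_mul] at hBA
    calc Aᴴ * A = (n : ℂ) • ((n : ℂ)⁻¹ • (Aᴴ * A)) := by
          rw [smul_smul, mul_inv_cancel₀ hn0, one_smul]
      _ = (n : ℂ) • 1 := by rw [hBA]
  have key : ∀ (a b c d : Fin n),
      (∑ k, U k a b * (starRingEnd ℂ) (U k c d)) =
        if a = c ∧ b = d then (n : ℂ) else 0 := by
    intro a b c d
    have h := congrFun (congrFun h2 (a, b)) (c, d)
    simp only [mul_apply, conjTranspose_apply, Matrix.smul_apply, one_apply, smul_eq_mul] at h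
    simp only [hA] at h
    have : (∑ k, U k a b * (starRingEnd ℂ) (U k c d))
        = star (∑ k, star (U k a b) * U k c d) := by
      rw [star_sum]; congr 1; ext k
      rw [StarMul.star_mul, star_star, mul_comm, starRingEnd_apply]
    rw [this, h]
    split_ifs with h1' h2' h2'
    · simp
    · exact absurd (Prod.ext_iff.mp h1') h2'
    · exact absurd (Prod.ext_iff.mpr h2') h1'
    · simp
  intro X
  ext i j
  rw [Matrix.smul_apply, Matrix.smul_apply, Matrix.sum_apply, Matrix.one_apply]
  have step : (∑ k, (U k * X * (U k)ᴴ) i j)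
      = ∑ b, ∑ a, X a b * ∑ k, U k i a * (starRingEnd ℂ) (U k j b) := by
    simp only [mul_apply, conjTranspose_apply, Finset.sum_mul, Finset.mul_sum]
    rw [Finset.sum_comm]
    refine Finset.sum_congr rfl fun b _ => ?_
    rw [Finset.sum_comm]
    refine Finset.sum_congr rfl fun a _ => ?_
    refine Finset.sum_congr rfl fun k _ => ?_
    simp only [starRingEnd_apply]
    ring
  rw [step]
  by_cases hij : i = j
  · subst hij
    rw [if_pos rfl]
    have hsum : (∑ b, ∑ a, X a b * ∑ k, U k i a * (starRingEnd ℂ) (U k i b))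
        = Matrix.trace X * n := by
      have hb : ∀ b : Fin n,
          (∑ a, X a b * ∑ k, U k i a * (starRingEnd ℂ) (U k i b)) = X b b * n := by
        intro b
        rw [Finset.sum_eq_single b]
        · rw [key]; simp
        · intro a _ hab; rw [key]; simp [hab]
        · simp
      simp only [hb]
      rw [← Finset.sum_mul]; rfl
    rw [hsum, smul_eq_mul, smul_eq_mul]
    have h2n : ((n : ℂ) ^ 2) ≠ 0 := pow_ne_zero _ hn0
    field_simp
  · rw [if_neg hij]
    have hz : ∀ (b a : Fin n), (∑ k, U k i a * (starRingEnd ℂ) (U k j b)) = 0 := by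
      intro b a; rw [key]; simp [hij]
    simp [hz]
end

section
/- Let G be a finite group, let d be a positive integer, and let ρ : G → U(d) be a group homomorphism into the group of d×d complex unitary matrices. Let N be the complex dimension of the linear span of {ρ(g) : g ∈ G} in M_d(ℂ). Suppose M is a positive integer, q_1, …, q_M are strictly positive reals with Σ_k q_k = 1, and V_1, …, V_M ∈ M_d(ℂ) are unitary matrices such that (1/|G|) Σ_{g ∈ G} ρ(g) X ρ(g)ᴴ = Σ_{k=1}^{M} q_k V_k X V_kᴴ for every X ∈ M_d(ℂ). Then M ≥ N. -/
open Matrix BigOperators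

noncomputable def matEquiv (d : ℕ) : Matrix (Fin d) (Fin d) ℂ ≃ₗ[ℂ] EuclideanSpace ℂ (Fin d × Fin d) where
  toFun A := WithLp.toLp 2 (fun p : Fin d × Fin d => A p.1 p.2)
  invFun v := Matrix.of fun i j => v (i, j)
  map_add' _ _ := rfl
  map_smul' _ _ := rfl
  left_inv _ := rfl
  right_inv _ := rfl

lemma matEquiv_ofLp (d : ℕ) (A : Matrix (Fin d) (Fin d) ℂ) (p : Fin d × Fin d) :
    (matEquiv d A).ofLp p = A p.1 p.2 := rfl

lemma expand_sum {d : ℕ} {ι : Type*} [Fintype ι] (c : ι → ℂ) (A : ι → Matrix (Fin d) (Fin d) ℂ)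
    (W : Matrix (Fin d) (Fin d) ℂ) :
    ∑ a, c a * ((∑ p : Fin d × Fin d, starRingEnd ℂ (W p.1 p.2) * A a p.1 p.2) *
      starRingEnd ℂ (∑ p : Fin d × Fin d, starRingEnd ℂ (W p.1 p.2) * A a p.1 p.2)) =
    ∑ p : Fin d × Fin d, ∑ r : Fin d × Fin d,
      starRingEnd ℂ (W p.1 p.2) * W r.1 r.2 *
        ∑ a, c a * (A a p.1 p.2 * starRingEnd ℂ (A a r.1 r.2)) := by
  simp only [map_sum, _root_.map_mul, Complex.conj_conj, Finset.mul_sum, Finset.sum_mul]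
  conv_rhs => rw [Finset.sum_comm]
  rw [Finset.sum_comm]
  refine Finset.sum_congr rfl fun p _ => ?_
  rw [Finset.sum_comm]
  refine Finset.sum_congr rfl fun r _ => ?_
  refine Finset.sum_congr rfl fun a _ => ?_
  ring


/-- Any mixed-unitary decomposition (with strictly positive weights) of
the twirling channel of a unitary representation of a finite group uses at least `N`
unitaries, where `N` is the dimension of the span of the representation matrices. -/
theorem stmt_5 (G : Type*) [Group G] [Fintype G] (d : ℕ) (hd : 0 < d)
    (ρ : G →* Matrix.unitaryGroup (Fin d) ℂ)
    (N : ℕ)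
    (hN : N = Module.finrank ℂ
      ↥(Submodule.span ℂ (Set.range fun g : G => (ρ g : Matrix (Fin d) (Fin d) ℂ))))
    (M : ℕ) (hM : 0 < M)
    (q : Fin M → ℝ) (hq : ∀ k, 0 < q k) (hq1 : ∑ k, q k = 1)
    (V : Fin M → Matrix (Fin d) (Fin d) ℂ)
    (hV : ∀ k, (V k)ᴴ * V k = 1 ∧ V k * (V k)ᴴ = 1)
    (hdec : ∀ X : Matrix (Fin d) (Fin d) ℂ,
      (1 / (Fintype.card G : ℂ)) •
          ∑ g : G, (ρ g : Matrix (Fin d) (Fin d) ℂ) * X * ((ρ g : Matrix (Fin d) (Fin d) ℂ))ᴴ =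
        ∑ k, (q k : ℂ) • (V k * X * (V k)ᴴ)) :
    N ≤ M := by
  classical
  set c : ℂ := (Fintype.card G : ℂ) with hc
  have hcne : c ≠ 0 := by
    simp [hc, Fintype.card_ne_zero]
  -- entrywise Choi identity
  have h1 : ∀ j l i k : Fin d,
      (1 / c) * ∑ g : G, (ρ g : Matrix (Fin d) (Fin d) ℂ) i j *
          starRingEnd ℂ ((ρ g : Matrix (Fin d) (Fin d) ℂ) k l) =
      ∑ m, (q m : ℂ) * (V m i j * starRingEnd ℂ (V m k l)) := by
    intro j l i k
    have h := hdec (Matrix.single j l (1 : ℂ))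
    have h' := congrFun (congrFun h i) k
    simpa [Matrix.smul_apply, Matrix.sum_apply, Matrix.mul_apply, Matrix.single,
      conjTranspose_apply, mul_ite, ite_mul, Finset.mul_sum, ite_and, Finset.sum_ite_eq,
      Finset.sum_ite_eq'] using h'
  -- the vectorization
  set e := matEquiv d with he
  set Sρ : Submodule ℂ (EuclideanSpace ℂ (Fin d × Fin d)) :=
    Submodule.span ℂ (Set.range fun g : G => e ((ρ g : Matrix (Fin d) (Fin d) ℂ))) with hSρ
  set SV : Submodule ℂ (EuclideanSpace ℂ (Fin d × Fin d)) :=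
    Submodule.span ℂ (Set.range fun k => e (V k)) with hSV
  -- key scalar identity
  have key : ∀ W : Matrix (Fin d) (Fin d) ℂ,
      ∑ g : G, (1 / c) *
          ((∑ p : Fin d × Fin d, starRingEnd ℂ (W p.1 p.2) * (ρ g : Matrix (Fin d) (Fin d) ℂ) p.1 p.2) *
            starRingEnd ℂ (∑ p : Fin d × Fin d, starRingEnd ℂ (W p.1 p.2) * (ρ g : Matrix (Fin d) (Fin d) ℂ) p.1 p.2)) =
      ∑ k, (q k : ℂ) *
          ((∑ p : Fin d × Fin d, starRingEnd ℂ (W p.1 p.2) * V k p.1 p.2) *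
            starRingEnd ℂ (∑ p : Fin d × Fin d, starRingEnd ℂ (W p.1 p.2) * V k p.1 p.2)) := by
    intro W
    rw [expand_sum (fun _ : G => 1 / c) (fun g => (ρ g : Matrix (Fin d) (Fin d) ℂ)) W,
      expand_sum (fun k => (q k : ℂ)) V W]
    refine Finset.sum_congr rfl fun p _ => Finset.sum_congr rfl fun r _ => ?_
    congr 1
    rw [← Finset.mul_sum]
    exact h1 p.2 r.2 p.1 r.1
  -- span of ρ is inside span of V
  have hsub : Sρ ≤ SV := by
    rw [← Submodule.orthogonal_orthogonal SV]
    rw [hSρ, Submodule.span_le]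
    rintro _ ⟨g, rfl⟩
    rw [SetLike.mem_coe, Submodule.mem_orthogonal]
    intro w hw
    -- w ⟂ every V k
    have hwV : ∀ k, (∑ p : Fin d × Fin d, starRingEnd ℂ (w p) * V k p.1 p.2) = 0 := by
      intro k
      have h0 : (inner ℂ (e (V k)) w : ℂ) = 0 := by
        rw [Submodule.mem_orthogonal] at hw
        exact hw _ (Submodule.subset_span ⟨k, rfl⟩)
      have h0' : (inner ℂ w (e (V k)) : ℂ) = 0 := by
        rw [← inner_conj_symm, h0, map_zero]
      simpa [PiLp.inner_apply, RCLike.inner_apply, matEquiv_ofLp, he, mul_comm] using h0'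
    -- define W as the matrix of w
    set W : Matrix (Fin d) (Fin d) ℂ := Matrix.of fun i j => w (i, j) with hW
    have hWw : ∀ p : Fin d × Fin d, W p.1 p.2 = w p := fun p => rfl
    have hkey := key W
    have hRHS : (∑ k, (q k : ℂ) *
        ((∑ p : Fin d × Fin d, starRingEnd ℂ (W p.1 p.2) * V k p.1 p.2) *
          starRingEnd ℂ (∑ p : Fin d × Fin d, starRingEnd ℂ (W p.1 p.2) * V k p.1 p.2))) = 0 := by
      refine Finset.sum_eq_zero fun k _ => ?_
      have := hwV k
      simp only [hWw]
      rw [this, zero_mul, mul_zero]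
    rw [hRHS] at hkey
    -- deduce each term is zero
    have hterms : ∀ g : G,
        (∑ p : Fin d × Fin d, starRingEnd ℂ (w p) * (ρ g : Matrix (Fin d) (Fin d) ℂ) p.1 p.2) = 0 := by
      have hsum : (∑ g : G, Complex.normSq
          (∑ p : Fin d × Fin d, starRingEnd ℂ (w p) * (ρ g : Matrix (Fin d) (Fin d) ℂ) p.1 p.2)) = 0 := by
        have h2 : (∑ g : G, ((Complex.normSq
            (∑ p : Fin d × Fin d, starRingEnd ℂ (w p) * (ρ g : Matrix (Fin d) (Fin d) ℂ) p.1 p.2) : ℝ) : ℂ)) = 0 := by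
          have h3 := hkey
          rw [← Finset.mul_sum] at h3
          have h4 : (∑ g : G,
              ((∑ p : Fin d × Fin d, starRingEnd ℂ (w p) * (ρ g : Matrix (Fin d) (Fin d) ℂ) p.1 p.2) *
                starRingEnd ℂ (∑ p : Fin d × Fin d, starRingEnd ℂ (w p) * (ρ g : Matrix (Fin d) (Fin d) ℂ) p.1 p.2))) = 0 := by
            have := mul_eq_zero.mp h3
            rcases this with h | h
            · exact absurd h (by simp [hcne])
            · simpa [hWw] using h
          rw [← h4]
          refine Finset.sum_congr rfl fun g _ => ?_
          exact (Complex.mul_conj _).symm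
        have := h2
        rw [← Complex.ofReal_sum] at this
        exact_mod_cast this
      intro g
      have hnn : ∀ g ∈ (Finset.univ : Finset G), 0 ≤ Complex.normSq
          (∑ p : Fin d × Fin d, starRingEnd ℂ (w p) * (ρ g : Matrix (Fin d) (Fin d) ℂ) p.1 p.2) :=
        fun _ _ => Complex.normSq_nonneg _
      have := (Finset.sum_eq_zero_iff_of_nonneg hnn).mp hsum g (Finset.mem_univ g)
      exact Complex.normSq_eq_zero.mp this
    -- conclude inner product zero
    have : (inner ℂ w (e ((ρ g : Matrix (Fin d) (Fin d) ℂ))) : ℂ) = 0 := by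
      simpa [PiLp.inner_apply, RCLike.inner_apply, matEquiv_ofLp, he, mul_comm] using hterms g
    exact this
  -- dimension count
  have hmapρ : Sρ = Submodule.map e.toLinearMap
      (Submodule.span ℂ (Set.range fun g : G => (ρ g : Matrix (Fin d) (Fin d) ℂ))) := by
    rw [hSρ, Submodule.map_span]
    congr 1
    rw [← Set.range_comp]
    rfl
  have hdimρ : N = Module.finrank ℂ Sρ := by
    rw [hN, hmapρ, LinearEquiv.finrank_map_eq]
  have hdimV : Module.finrank ℂ SV ≤ M := by
    simpa [Set.finrank] using finrank_range_le_card (R := ℂ) (fun k => e (V k))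
  calc N = Module.finrank ℂ Sρ := hdimρ
    _ ≤ Module.finrank ℂ SV := Submodule.finrank_mono hsub
    _ ≤ M := hdimV
end

section
/- Let n and N be positive integers, let k and M be integers, and define the matrix U ∈ M_n(ℂ) by U(a,b) = (1/n) Σ_{c=1}^{n} exp(2πi·c(b−a)/n) · exp(2πi·k(M+(a−1)n+c)/N) for a, b ∈ {1,…,n}. Then U is unitary: U Uᴴ = Uᴴ U = 1_n. -/
open Matrix BigOperators

private lemma exp_div_zpow (m : ℕ) (z : ℤ) :
    Complex.exp (2 * (Real.pi : ℂ) * Complex.I * (z : ℂ) / (m : ℂ)) =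
      Complex.exp (2 * (Real.pi : ℂ) * Complex.I / (m : ℂ)) ^ z := by
  rw [← Complex.exp_int_mul]
  congr 1
  ring

private lemma star_zeta_zpow (m : ℕ) (z : ℤ) :
    star (Complex.exp (2 * (Real.pi : ℂ) * Complex.I / (m : ℂ)) ^ z) =
      Complex.exp (2 * (Real.pi : ℂ) * Complex.I / (m : ℂ)) ^ (-z) := by
  rw [show (star : ℂ → ℂ) = (starRingEnd ℂ) from rfl]
  rw [map_zpow₀, ← Complex.exp_conj]
  have h : (starRingEnd ℂ) (2 * (Real.pi : ℂ) * Complex.I / (m : ℂ)) =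
      -(2 * (Real.pi : ℂ) * Complex.I / (m : ℂ)) := by
    simp only [map_div₀, _root_.map_mul, Complex.conj_I, Complex.conj_ofReal,
      Complex.conj_natCast, map_ofNat]
    ring
  rw [h, Complex.exp_neg, _root_.inv_zpow, ← _root_.zpow_neg]

private lemma zeta_pow_nat (n : ℕ) (hn : 0 < n) :
    Complex.exp (2 * (Real.pi : ℂ) * Complex.I / (n : ℂ)) ^ (n : ℤ) = 1 := by
  have hn0 : (n : ℂ) ≠ 0 := Nat.cast_ne_zero.mpr hn.ne'
  rw [← Complex.exp_int_mul]
  rw [show ((n : ℤ) : ℂ) * (2 * (Real.pi : ℂ) * Complex.I / (n : ℂ)) =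
      2 * (Real.pi : ℂ) * Complex.I from by push_cast; field_simp]
  exact Complex.exp_two_pi_mul_I

private lemma sum_zeta (n : ℕ) (hn : 0 < n) (d : ℤ) (h1 : -(n : ℤ) < d) (hd2 : d < n) :
    ∑ b : Fin n, Complex.exp (2 * (Real.pi : ℂ) * Complex.I / (n : ℂ)) ^ (d * (b.val : ℤ)) =
      if d = 0 then (n : ℂ) else 0 := by
  set ζ : ℂ := Complex.exp (2 * (Real.pi : ℂ) * Complex.I / (n : ℂ)) with hζ
  by_cases hd : d = 0
  · simp [hd]
  · simp only [hd, if_false]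
    have hsum : ∑ b : Fin n, ζ ^ (d * (b.val : ℤ)) = ∑ b ∈ Finset.range n, (ζ ^ d) ^ b := by
      rw [Fin.sum_univ_eq_sum_range (fun b => ζ ^ (d * (b : ℤ)))]
      exact Finset.sum_congr rfl fun b _ => by rw [_root_.zpow_mul, zpow_natCast]
    rw [hsum]
    have hne : ζ ^ d ≠ 1 := by
      intro h
      rw [hζ, ← Complex.exp_int_mul, Complex.exp_eq_one_iff] at h
      obtain ⟨m, hm⟩ := h
      have hn0 : (n : ℂ) ≠ 0 := Nat.cast_ne_zero.mpr hn.ne'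
      have hπ : (Real.pi : ℂ) ≠ 0 := by exact_mod_cast Real.pi_ne_zero
      have h2 : (2 * (Real.pi : ℂ) * Complex.I) ≠ 0 := by
        simp [hπ, Complex.I_ne_zero]
      have hdm : (d : ℂ) = (m : ℂ) * n := by
        field_simp at hm
        apply mul_right_cancel₀ h2
        linear_combination (2 * (Real.pi : ℂ) * Complex.I) * hm
      have hdm' : d = m * n := by exact_mod_cast hdm
      have hdvd : (n : ℤ) ∣ d := ⟨m, by linarith⟩
      have habs : (n : ℤ) ≤ |d| := Int.le_of_dvd (abs_pos.mpr hd) ((dvd_abs _ _).mpr hdvd)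
      have : |d| < n := abs_lt.mpr ⟨h1, hd2⟩
      omega
    rw [geom_sum_eq hne]
    have hone : (ζ ^ d) ^ n = 1 := by
      rw [← zpow_natCast, ← _root_.zpow_mul, mul_comm, _root_.zpow_mul, zeta_pow_nat n hn, _root_.one_zpow]
    rw [hone]
    simp

/-- The building-block matrix
`U(a,b) = (1/n) Σ_{c=1}^n exp(2πi·c(b−a)/n)·exp(2πi·k(M+(a−1)n+c)/N)`
(for `a,b ∈ {1,…,n}`) is unitary. -/
theorem stmt_8 (n N : ℕ) (hn : 0 < n) (hN : 0 < N) (k M : ℤ)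
    (U : Matrix (Fin n) (Fin n) ℂ)
    (hU : ∀ a b : Fin n, U a b = (1 / (n : ℂ)) *
      ∑ c : Fin n,
        Complex.exp (2 * (Real.pi : ℂ) * Complex.I *
            (((c.val : ℂ) + 1) * ((b.val : ℂ) - (a.val : ℂ))) / (n : ℂ)) *
        Complex.exp (2 * (Real.pi : ℂ) * Complex.I * (k : ℂ) *
            ((M : ℂ) + (a.val : ℂ) * (n : ℂ) + ((c.val : ℂ) + 1)) / (N : ℂ))) :
    U * Uᴴ = 1 ∧ Uᴴ * U = 1 := by
  have hn0 : (n : ℂ) ≠ 0 := Nat.cast_ne_zero.mpr hn.ne'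
  set ζ : ℂ := Complex.exp (2 * (Real.pi : ℂ) * Complex.I / (n : ℂ)) with hζdef
  set η : ℂ := Complex.exp (2 * (Real.pi : ℂ) * Complex.I / (N : ℂ)) with hηdef
  have hζ0 : ζ ≠ 0 := Complex.exp_ne_zero _
  have hη0 : η ≠ 0 := Complex.exp_ne_zero _
  have hstarζ : ∀ z : ℤ, star (ζ ^ z) = ζ ^ (-z) := fun z => by
    rw [hζdef]; exact star_zeta_zpow n z
  have hstarη : ∀ z : ℤ, star (η ^ z) = η ^ (-z) := fun z => by
    rw [hηdef]; exact star_zeta_zpow N z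
  set F : Matrix (Fin n) (Fin n) ℂ :=
    Matrix.of (fun c b : Fin n => ζ ^ (((c.val : ℤ) + 1) * (b.val : ℤ))) with hFdef
  set D : Matrix (Fin n) (Fin n) ℂ :=
    Matrix.diagonal (fun a : Fin n => η ^ (k * (M + (a.val : ℤ) * n))) with hDdef
  set E : Matrix (Fin n) (Fin n) ℂ :=
    Matrix.diagonal (fun c : Fin n => η ^ (k * ((c.val : ℤ) + 1))) with hEdef
  have hEF : ∀ (X : Matrix (Fin n) (Fin n) ℂ) (c b : Fin n),
      (E * X) c b = η ^ (k * ((c.val : ℤ) + 1)) * X c b := fun X c b => by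
    rw [hEdef]; exact Matrix.diagonal_mul _ _ _ _
  have hDX : ∀ (X : Matrix (Fin n) (Fin n) ℂ) (a b : Fin n),
      (D * X) a b = η ^ (k * (M + (a.val : ℤ) * n)) * X a b := fun X a b => by
    rw [hDdef]; exact Matrix.diagonal_mul _ _ _ _
  -- U equals the factored form
  have hUeq : U = (1 / (n : ℂ)) • (D * (Fᴴ * (E * F))) := by
    ext a b
    rw [hU, Matrix.smul_apply, hDX, Matrix.mul_apply, smul_eq_mul]
    congr 1
    rw [Finset.mul_sum]
    apply Finset.sum_congr rfl
    intro c _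
    rw [Matrix.conjTranspose_apply, hEF, hFdef]
    simp only [Matrix.of_apply, hstarζ]
    have e1 : 2 * (Real.pi : ℂ) * Complex.I *
        (((c.val : ℂ) + 1) * ((b.val : ℂ) - (a.val : ℂ))) / (n : ℂ) =
        2 * (Real.pi : ℂ) * Complex.I *
          ((((((c.val : ℤ) + 1) * ((b.val : ℤ) - (a.val : ℤ))) : ℤ) : ℂ)) / (n : ℂ) := by
      push_cast; ring
    have e2 : 2 * (Real.pi : ℂ) * Complex.I * (k : ℂ) *
        ((M : ℂ) + (a.val : ℂ) * (n : ℂ) + ((c.val : ℂ) + 1)) / (N : ℂ) =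
        2 * (Real.pi : ℂ) * Complex.I *
          ((((k * (M + (a.val : ℤ) * n + ((c.val : ℤ) + 1))) : ℤ) : ℂ)) / (N : ℂ) := by
      push_cast; ring
    rw [e1, e2, exp_div_zpow, exp_div_zpow, ← hζdef, ← hηdef]
    rw [show ((c.val : ℤ) + 1) * ((b.val : ℤ) - (a.val : ℤ)) =
        (-(((c.val : ℤ) + 1) * (a.val : ℤ))) + ((c.val : ℤ) + 1) * (b.val : ℤ) from by ring,
      show k * (M + (a.val : ℤ) * n + ((c.val : ℤ) + 1)) =
        k * (M + (a.val : ℤ) * n) + k * ((c.val : ℤ) + 1) from by ring,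
      zpow_add₀ hζ0, zpow_add₀ hη0]
    ring
  -- F is √n-unitary
  have hFFH : F * Fᴴ = (n : ℂ) • 1 := by
    ext c c'
    simp only [Matrix.mul_apply, Matrix.conjTranspose_apply, hFdef, Matrix.of_apply,
      hstarζ, Matrix.smul_apply, Matrix.one_apply, smul_eq_mul]
    have step : ∀ b : Fin n, ζ ^ (((c.val : ℤ) + 1) * (b.val : ℤ)) *
        ζ ^ (-(((c'.val : ℤ) + 1) * (b.val : ℤ))) =
        ζ ^ (((c.val : ℤ) - (c'.val : ℤ)) * (b.val : ℤ)) := by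
      intro b
      rw [← zpow_add₀ hζ0]
      congr 1
      ring
    rw [Finset.sum_congr rfl (fun b _ => step b), hζdef,
      sum_zeta n hn ((c.val : ℤ) - (c'.val : ℤ)) (by omega) (by omega)]
    by_cases h : c = c'
    · simp [h]
    · have : (c.val : ℤ) - (c'.val : ℤ) ≠ 0 := by
        simp only [ne_eq, sub_eq_zero]
        exact_mod_cast fun hh => h (Fin.ext (by exact_mod_cast hh))
      simp [h, this]
  have hFHF : Fᴴ * F = (n : ℂ) • 1 := by
    ext b b'
    simp only [Matrix.mul_apply, Matrix.conjTranspose_apply, hFdef, Matrix.of_apply,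
      hstarζ, Matrix.smul_apply, Matrix.one_apply, smul_eq_mul]
    have step : ∀ c : Fin n, ζ ^ (-(((c.val : ℤ) + 1) * (b.val : ℤ))) *
        ζ ^ (((c.val : ℤ) + 1) * (b'.val : ℤ)) =
        ζ ^ ((b'.val : ℤ) - (b.val : ℤ)) * ζ ^ (((b'.val : ℤ) - (b.val : ℤ)) * (c.val : ℤ)) := by
      intro c
      rw [← zpow_add₀ hζ0, ← zpow_add₀ hζ0]
      congr 1
      ring
    rw [Finset.sum_congr rfl (fun c _ => step c), ← Finset.mul_sum, hζdef,
      sum_zeta n hn ((b'.val : ℤ) - (b.val : ℤ)) (by omega) (by omega)]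
    by_cases h : b = b'
    · simp [h]
    · have : (b'.val : ℤ) - (b.val : ℤ) ≠ 0 := by
        simp only [ne_eq, sub_eq_zero]
        exact_mod_cast fun hh => h (Fin.ext (by exact_mod_cast hh.symm))
      simp [h, this]
  -- diagonal unitaries
  have hkey : ∀ z : ℤ, η ^ z * star (η ^ z) = 1 := by
    intro z
    rw [hstarη, ← zpow_add₀ hη0, add_neg_cancel, zpow_zero]
  have hDDH : D * Dᴴ = 1 := by
    rw [hDdef, Matrix.diagonal_conjTranspose, Matrix.diagonal_mul_diagonal]
    convert Matrix.diagonal_one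
    simp only [Pi.star_apply]
    exact hkey _
  have hDHD : Dᴴ * D = 1 := by
    rw [hDdef, Matrix.diagonal_conjTranspose, Matrix.diagonal_mul_diagonal]
    convert Matrix.diagonal_one
    simp only [Pi.star_apply]
    rw [mul_comm]
    exact hkey _
  have hEHE : Eᴴ * E = 1 := by
    rw [hEdef, Matrix.diagonal_conjTranspose, Matrix.diagonal_mul_diagonal]
    convert Matrix.diagonal_one
    simp only [Pi.star_apply]
    rw [mul_comm]
    exact hkey _
  have hEEH : E * Eᴴ = 1 := by
    rw [hEdef, Matrix.diagonal_conjTranspose, Matrix.diagonal_mul_diagonal]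
    convert Matrix.diagonal_one
    simp only [Pi.star_apply]
    exact hkey _
  -- helpers
  have hF1 : ∀ X : Matrix (Fin n) (Fin n) ℂ, F * (Fᴴ * X) = (n : ℂ) • X := fun X => by
    rw [← Matrix.mul_assoc, hFFH, Matrix.smul_mul, Matrix.one_mul]
  have hF2 : ∀ X : Matrix (Fin n) (Fin n) ℂ, Fᴴ * (F * X) = (n : ℂ) • X := fun X => by
    rw [← Matrix.mul_assoc, hFHF, Matrix.smul_mul, Matrix.one_mul]
  have hE1 : ∀ X : Matrix (Fin n) (Fin n) ℂ, E * (Eᴴ * X) = X := fun X => by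
    rw [← Matrix.mul_assoc, hEEH, Matrix.one_mul]
  have hE2 : ∀ X : Matrix (Fin n) (Fin n) ℂ, Eᴴ * (E * X) = X := fun X => by
    rw [← Matrix.mul_assoc, hEHE, Matrix.one_mul]
  have hD2 : ∀ X : Matrix (Fin n) (Fin n) ℂ, Dᴴ * (D * X) = X := fun X => by
    rw [← Matrix.mul_assoc, hDHD, Matrix.one_mul]
  have hstar : star (1 / (n : ℂ)) = 1 / (n : ℂ) := by simp
  have hfin : ∀ (c : ℂ) (A : Matrix (Fin n) (Fin n) ℂ), c = 1 → A = 1 → c • A = 1 := by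
    rintro c A rfl rfl
    exact one_smul _ _
  constructor
  · rw [hUeq, Matrix.conjTranspose_smul, hstar, Matrix.smul_mul, Matrix.mul_smul, smul_smul]
    simp only [Matrix.conjTranspose_mul, Matrix.conjTranspose_conjTranspose, Matrix.mul_assoc]
    rw [hF1]
    simp only [Matrix.mul_smul, smul_smul]
    rw [hE1, hF2]
    simp only [Matrix.mul_smul, smul_smul]
    exact hfin _ _ (by field_simp) hDDH
  · rw [hUeq, Matrix.conjTranspose_smul, hstar, Matrix.smul_mul, Matrix.mul_smul, smul_smul]
    simp only [Matrix.conjTranspose_mul, Matrix.conjTranspose_conjTranspose, Matrix.mul_assoc]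
    rw [hD2, hF1]
    simp only [Matrix.mul_smul, smul_smul]
    rw [hE2, hFHF]
    simp only [smul_smul]
    exact hfin _ _ (by field_simp) rfl
end

section
/- Let n and N be positive integers with N ≥ n², and let M be an integer. For each k ∈ {1,…,N} define U_k ∈ M_n(ℂ) by U_k(a,b) = (1/n) Σ_{c=1}^{n} exp(2πi·c(b−a)/n) · exp(2πi·k(M+(a−1)n+c)/N) for a, b ∈ {1,…,n}. Then for every X ∈ M_n(ℂ), (1/N) Σ_{k=1}^{N} U_k X U_kᴴ = (Tr X / n)·1_n. -/
open Matrix BigOperators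

noncomputable def ee (t : ℤ) (m : ℕ) : ℂ :=
  Complex.exp (2 * (Real.pi : ℂ) * Complex.I * (t : ℂ) / (m : ℂ))

lemma ee_add (s t : ℤ) (m : ℕ) : ee (s + t) m = ee s m * ee t m := by
  rw [ee, ee, ee, ← Complex.exp_add]
  congr 1
  push_cast
  ring

lemma ee_eq_one (m : ℕ) (t : ℤ) (h : (m : ℤ) ∣ t) : ee t m = 1 := by
  obtain ⟨j, rfl⟩ := h
  rcases Nat.eq_zero_or_pos m with hm | hm
  · subst hm; simp [ee]
  · rw [ee]
    have hm' : (m : ℂ) ≠ 0 := Nat.cast_ne_zero.mpr hm.ne'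
    have h1 : 2 * (Real.pi : ℂ) * Complex.I * (((m : ℤ) * j : ℤ) : ℂ) / (m : ℂ)
        = (j : ℂ) * (2 * (Real.pi : ℂ) * Complex.I) := by
      push_cast
      field_simp
    rw [h1, Complex.exp_int_mul_two_pi_mul_I]

lemma ee_ne_one (m : ℕ) (hm : 0 < m) (t : ℤ) (h : ¬ (m : ℤ) ∣ t) : ee t m ≠ 1 := by
  intro he
  rw [ee, Complex.exp_eq_one_iff] at he
  obtain ⟨j, hj⟩ := he
  have hm' : (m : ℂ) ≠ 0 := Nat.cast_ne_zero.mpr hm.ne'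
  have hpi : (Real.pi : ℂ) ≠ 0 := Complex.ofReal_ne_zero.mpr Real.pi_ne_zero
  have hI : Complex.I ≠ 0 := Complex.I_ne_zero
  have h2 : (2 : ℂ) * (Real.pi : ℂ) * Complex.I ≠ 0 := by simp [hpi, hI]
  have ht : (t : ℂ) = (j : ℂ) * (m : ℂ) := by
    field_simp at hj
    exact mul_left_cancel₀ h2 (by linear_combination (2 * (Real.pi : ℂ) * Complex.I) * hj)
  have ht2 : t = j * m := by exact_mod_cast ht
  exact h ⟨j, by rw [ht2, mul_comm]⟩

lemma ee_pow (t : ℤ) (m : ℕ) (s : ℕ) : ee t m ^ s = ee (s * t) m := by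
  rw [ee, ee, ← Complex.exp_nat_mul]
  congr 1
  push_cast
  ring

lemma ee_sum (m : ℕ) (hm : 0 < m) (t : ℤ) :
    ∑ j : Fin m, ee ((j.val + 1) * t) m = if (m : ℤ) ∣ t then (m : ℂ) else 0 := by
  have hterm : ∀ j : Fin m, ee (((j.val : ℤ) + 1) * t) m = ee t m ^ (j.val + 1) := by
    intro j
    have hc : ((j.val : ℤ) + 1) * t = ((j.val + 1 : ℕ) : ℤ) * t := by push_cast; ring
    rw [hc]
    exact (ee_pow t m (j.val + 1)).symm
  by_cases h : (m : ℤ) ∣ t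
  · rw [if_pos h]
    have h1 : ee t m = 1 := ee_eq_one m t h
    calc ∑ j : Fin m, ee ((j.val + 1) * t) m = ∑ j : Fin m, (1 : ℂ) := by
          refine Finset.sum_congr rfl fun j _ => ?_
          rw [hterm j, h1]
          exact one_pow _
      _ = (m : ℂ) := by simp
  · rw [if_neg h]
    have hne := ee_ne_one m hm t h
    calc ∑ j : Fin m, ee ((j.val + 1) * t) m = ∑ j : Fin m, ee t m * ee t m ^ (j.val) := by
          refine Finset.sum_congr rfl fun j _ => ?_
          rw [hterm j, pow_succ]
          ring
      _ = ee t m * ∑ j ∈ Finset.range m, ee t m ^ j := by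
          rw [← Finset.mul_sum, Fin.sum_univ_eq_sum_range (fun j => ee t m ^ j)]
      _ = 0 := by
          rw [geom_sum_eq hne, ee_pow]
          rw [ee_eq_one m (m * t) ⟨t, rfl⟩]
          simp

lemma ee_conj (t : ℤ) (m : ℕ) : (starRingEnd ℂ) (ee t m) = ee (-t) m := by
  rw [ee, ee, ← Complex.exp_conj]
  congr 1
  simp only [map_div₀, _root_.map_mul, Complex.conj_I, Complex.conj_ofReal, map_intCast,
    map_natCast, map_ofNat]
  push_cast
  ring

lemma dvd_iff_eq (n : ℕ) (p q : Fin n) :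
    ((n : ℤ) ∣ ((p.val : ℤ) - (q.val : ℤ))) ↔ p = q := by
  constructor
  · intro h
    have hp : (p.val : ℤ) < n := by exact_mod_cast p.isLt
    have hq : (q.val : ℤ) < n := by exact_mod_cast q.isLt
    have habs : |(p.val : ℤ) - q.val| < n := by
      rw [abs_lt]; omega
    have h0 := Int.eq_zero_of_abs_lt_dvd h habs
    exact Fin.ext (by omega)
  · rintro rfl; simp

lemma dvd_iff_pair (n N : ℕ) (hn : 0 < n) (hN : n ^ 2 ≤ N) (a b c d : Fin n) :
    ((N : ℤ) ∣ (((a.val : ℤ) - b.val) * n + ((c.val : ℤ) - d.val))) ↔ (a = b ∧ c = d) := by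
  have ha : (a.val : ℤ) < n := by exact_mod_cast a.isLt
  have hb : (b.val : ℤ) < n := by exact_mod_cast b.isLt
  have hc : (c.val : ℤ) < n := by exact_mod_cast c.isLt
  have hd : (d.val : ℤ) < n := by exact_mod_cast d.isLt
  have ha0 : (0:ℤ) ≤ a.val := by positivity
  have hb0 : (0:ℤ) ≤ b.val := by positivity
  have hc0 : (0:ℤ) ≤ c.val := by positivity
  have hd0 : (0:ℤ) ≤ d.val := by positivity
  have hn0 : (0:ℤ) < n := by exact_mod_cast hn
  constructor
  · intro h
    have hab : |(a.val:ℤ) - b.val| ≤ (n:ℤ) - 1 := by rw [abs_le]; omega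
    have hcd : |(c.val:ℤ) - d.val| ≤ (n:ℤ) - 1 := by rw [abs_le]; omega
    have hNn : (n:ℤ)^2 ≤ N := by exact_mod_cast hN
    have habs : |((a.val:ℤ) - b.val) * n + ((c.val:ℤ) - d.val)| < N := by
      calc |((a.val:ℤ) - b.val) * n + ((c.val:ℤ) - d.val)|
          ≤ |((a.val:ℤ) - b.val) * n| + |(c.val:ℤ) - d.val| := abs_add_le _ _
        _ = |(a.val:ℤ) - b.val| * n + |(c.val:ℤ) - d.val| := by
            rw [abs_mul, abs_of_nonneg hn0.le]
        _ ≤ ((n:ℤ) - 1) * n + ((n:ℤ) - 1) := by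
            refine add_le_add (mul_le_mul_of_nonneg_right hab hn0.le) hcd
        _ = (n:ℤ)^2 - 1 := by ring
        _ < N := by omega
    have ht0 := Int.eq_zero_of_abs_lt_dvd h habs
    have hdvd : (n:ℤ) ∣ ((c.val:ℤ) - d.val) :=
      ⟨(b.val:ℤ) - a.val, by linear_combination ht0⟩
    have hcd0 : (c.val:ℤ) - d.val = 0 :=
      Int.eq_zero_of_abs_lt_dvd hdvd (by rw [abs_lt]; omega)
    have hmul : ((a.val:ℤ) - b.val) * n = 0 := by linear_combination ht0 - hcd0
    have hab0 : (a.val:ℤ) - b.val = 0 := by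
      rcases mul_eq_zero.mp hmul with h' | h'
      · exact h'
      · exact absurd h' hn0.ne'
    exact ⟨Fin.ext (by omega), Fin.ext (by omega)⟩
  · rintro ⟨rfl, rfl⟩; simp

lemma step2_aux (nn NN : ℕ) (x : ℂ) (s1 t1 s2 t2 A B : ℤ)
    (hA : A = s1 + t1) (hB : B = s2 + t2) :
    (1/(nn:ℂ) * (ee s1 nn * ee s2 NN)) * x * (1/(nn:ℂ) * (ee t1 nn * ee t2 NN))
      = (1/(nn:ℂ))^2 * (x * ee A nn * ee B NN) := by
  subst hA hB
  rw [ee_add, ee_add]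
  ring

lemma expand_aux {n1 : ℕ} (x u : ℂ) (F G : Fin n1 → ℂ) :
    (u * ∑ c : Fin n1, F c) * x * (u * ∑ d : Fin n1, G d)
      = u^2 * ∑ c : Fin n1, ∑ d : Fin n1, x * (F c * G d) := by
  have h : (u * ∑ c : Fin n1, F c) * x * (u * ∑ d : Fin n1, G d)
      = u^2 * x * ((∑ c : Fin n1, F c) * (∑ d : Fin n1, G d)) := by ring
  rw [h, Finset.sum_mul_sum Finset.univ Finset.univ F G]
  simp only [Finset.mul_sum]
  refine Finset.sum_congr rfl fun c _ => Finset.sum_congr rfl fun d _ => ?_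
  ring


/-- For `N ≥ n²`, the `N` matrices
`U_k(a,b) = (1/n) Σ_{c=1}^n exp(2πi·c(b−a)/n)·exp(2πi·k(M+(a−1)n+c)/N)`,
`k ∈ {1,…,N}`, give a mixed-unitary decomposition of the completely depolarizing
channel `Ω_n`. -/
theorem stmt_9 (n N : ℕ) (hn : 0 < n) (hN : n ^ 2 ≤ N) (M : ℤ)
    (U : Fin N → Matrix (Fin n) (Fin n) ℂ)
    (hU : ∀ (k : Fin N) (a b : Fin n), U k a b = (1 / (n : ℂ)) *
      ∑ c : Fin n,
        Complex.exp (2 * (Real.pi : ℂ) * Complex.I *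
            (((c.val : ℂ) + 1) * ((b.val : ℂ) - (a.val : ℂ))) / (n : ℂ)) *
        Complex.exp (2 * (Real.pi : ℂ) * Complex.I * ((k.val : ℂ) + 1) *
            ((M : ℂ) + (a.val : ℂ) * (n : ℂ) + ((c.val : ℂ) + 1)) / (N : ℂ))) :
    ∀ X : Matrix (Fin n) (Fin n) ℂ,
      (1 / (N : ℂ)) • ∑ k, U k * X * (U k)ᴴ = (Matrix.trace X / (n : ℂ)) • 1 := by
  have hNpos : 0 < N := lt_of_lt_of_le (by positivity) hN
  have hn' : (n : ℂ) ≠ 0 := Nat.cast_ne_zero.mpr hn.ne'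
  have hN' : (N : ℂ) ≠ 0 := Nat.cast_ne_zero.mpr hNpos.ne'
  have hU' : ∀ (k : Fin N) (a b : Fin n), U k a b = (1 / (n : ℂ)) *
      ∑ c : Fin n, ee (((c.val : ℤ) + 1) * ((b.val : ℤ) - (a.val : ℤ))) n *
        ee (((k.val : ℤ) + 1) * (M + (a.val : ℤ) * n + ((c.val : ℤ) + 1))) N := by
    intro k a b
    rw [hU]
    congr 1
    refine Finset.sum_congr rfl fun c _ => ?_
    simp only [ee]
    congr 1
    · congr 1
      push_cast
      ring
    · congr 1
      push_cast
      ring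
  have hUc : ∀ (k : Fin N) (b q : Fin n), (starRingEnd ℂ) (U k b q) = (1 / (n : ℂ)) *
      ∑ d : Fin n, ee (-(((d.val : ℤ) + 1) * ((q.val : ℤ) - (b.val : ℤ)))) n *
        ee (-(((k.val : ℤ) + 1) * (M + (b.val : ℤ) * n + ((d.val : ℤ) + 1)))) N := by
    intro k b q
    rw [hU' k b q, _root_.map_mul, map_sum]
    congr 1
    · simp [map_div₀]
    · refine Finset.sum_congr rfl fun d _ => ?_
      rw [_root_.map_mul, ee_conj, ee_conj]
  intro X
  ext a b
  have step1 : ((1 / (N : ℂ)) • ∑ k, U k * X * (U k)ᴴ) a b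
      = (1 / (N : ℂ)) * ∑ k : Fin N, ∑ q : Fin n, ∑ p : Fin n,
          U k a p * X p q * (starRingEnd ℂ) (U k b q) := by
    simp only [Matrix.smul_apply, Matrix.sum_apply, Matrix.mul_apply,
      Matrix.conjTranspose_apply, smul_eq_mul, Finset.sum_mul, Complex.star_def]
  have step2 : ∀ (k : Fin N) (q p : Fin n),
      U k a p * X p q * (starRingEnd ℂ) (U k b q)
      = (1/(n:ℂ))^2 * ∑ c : Fin n, ∑ d : Fin n,
          X p q * ee (((c.val:ℤ)+1) * ((p.val:ℤ) - a.val)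
              - ((d.val:ℤ)+1) * ((q.val:ℤ) - b.val)) n
            * ee (((k.val:ℤ)+1) * (((a.val:ℤ) - b.val) * n + ((c.val:ℤ) - d.val))) N := by
    intro k q p
    rw [hU' k a p, hUc k b q, expand_aux (X p q) (1/(n:ℂ))]
    congr 1
    refine Finset.sum_congr rfl fun c _ => Finset.sum_congr rfl fun d _ => ?_
    have h1 : ee (((c.val:ℤ)+1) * ((p.val:ℤ) - a.val)
          - ((d.val:ℤ)+1) * ((q.val:ℤ) - b.val)) n
        = ee (((c.val:ℤ)+1) * ((p.val:ℤ) - a.val)) n *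
          ee (-(((d.val:ℤ)+1) * ((q.val:ℤ) - b.val))) n := by
      rw [show ((c.val:ℤ)+1) * ((p.val:ℤ) - a.val) - ((d.val:ℤ)+1) * ((q.val:ℤ) - b.val)
          = (((c.val:ℤ)+1) * ((p.val:ℤ) - a.val))
            + (-(((d.val:ℤ)+1) * ((q.val:ℤ) - b.val))) from by ring, ee_add]
    have h2 : ee (((k.val:ℤ)+1) * (((a.val:ℤ) - b.val) * n + ((c.val:ℤ) - d.val))) N
        = ee (((k.val:ℤ)+1) * (M + (a.val:ℤ) * n + ((c.val:ℤ) + 1))) N *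
          ee (-(((k.val:ℤ)+1) * (M + (b.val:ℤ) * n + ((d.val:ℤ) + 1)))) N := by
      rw [show ((k.val:ℤ)+1) * (((a.val:ℤ) - b.val) * n + ((c.val:ℤ) - d.val))
          = (((k.val:ℤ)+1) * (M + (a.val:ℤ) * n + ((c.val:ℤ) + 1)))
            + (-(((k.val:ℤ)+1) * (M + (b.val:ℤ) * n + ((d.val:ℤ) + 1)))) from by ring, ee_add]
    rw [h1, h2]
    ring
  have swap : ∀ f : Fin N → Fin n → Fin n → Fin n → Fin n → ℂ,
      ∑ k : Fin N, ∑ q : Fin n, ∑ p : Fin n, ∑ c : Fin n, ∑ d : Fin n, f k q p c d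
      = ∑ q : Fin n, ∑ p : Fin n, ∑ c : Fin n, ∑ d : Fin n, ∑ k : Fin N, f k q p c d := by
    intro f
    rw [Finset.sum_comm]
    refine Finset.sum_congr rfl fun q _ => ?_
    rw [Finset.sum_comm]
    refine Finset.sum_congr rfl fun p _ => ?_
    rw [Finset.sum_comm]
    refine Finset.sum_congr rfl fun c _ => ?_
    exact Finset.sum_comm
  have e1 : ∑ k : Fin N, ∑ q : Fin n, ∑ p : Fin n,
        U k a p * X p q * (starRingEnd ℂ) (U k b q)
      = (1/(n:ℂ))^2 * ∑ q : Fin n, ∑ p : Fin n, ∑ c : Fin n, ∑ d : Fin n,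
          (X p q * ee (((c.val:ℤ)+1) * ((p.val:ℤ) - a.val)
              - ((d.val:ℤ)+1) * ((q.val:ℤ) - b.val)) n)
            * (if a = b ∧ c = d then (N:ℂ) else 0) := by
    calc ∑ k : Fin N, ∑ q : Fin n, ∑ p : Fin n,
          U k a p * X p q * (starRingEnd ℂ) (U k b q)
        = ∑ k : Fin N, ∑ q : Fin n, ∑ p : Fin n, (1/(n:ℂ))^2 * ∑ c : Fin n, ∑ d : Fin n,
            X p q * ee (((c.val:ℤ)+1) * ((p.val:ℤ) - a.val)
                - ((d.val:ℤ)+1) * ((q.val:ℤ) - b.val)) n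
              * ee (((k.val:ℤ)+1) * (((a.val:ℤ) - b.val) * n + ((c.val:ℤ) - d.val))) N := by
          refine Finset.sum_congr rfl fun k _ => Finset.sum_congr rfl fun q _ =>
            Finset.sum_congr rfl fun p _ => step2 k q p
      _ = (1/(n:ℂ))^2 * ∑ q : Fin n, ∑ p : Fin n, ∑ c : Fin n, ∑ d : Fin n,
            (X p q * ee (((c.val:ℤ)+1) * ((p.val:ℤ) - a.val)
                - ((d.val:ℤ)+1) * ((q.val:ℤ) - b.val)) n)
              * ∑ k : Fin N, ee (((k.val:ℤ)+1) * (((a.val:ℤ) - b.val) * n + ((c.val:ℤ) - d.val))) N := by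
          simp only [← Finset.mul_sum]
          rw [swap]
          refine congrArg _ (Finset.sum_congr rfl fun q _ => Finset.sum_congr rfl fun p _ =>
            Finset.sum_congr rfl fun c _ => Finset.sum_congr rfl fun d _ => ?_)
          rw [← Finset.mul_sum]
      _ = (1/(n:ℂ))^2 * ∑ q : Fin n, ∑ p : Fin n, ∑ c : Fin n, ∑ d : Fin n,
            (X p q * ee (((c.val:ℤ)+1) * ((p.val:ℤ) - a.val)
                - ((d.val:ℤ)+1) * ((q.val:ℤ) - b.val)) n)
              * (if a = b ∧ c = d then (N:ℂ) else 0) := by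
          refine congrArg _ (Finset.sum_congr rfl fun q _ => Finset.sum_congr rfl fun p _ =>
            Finset.sum_congr rfl fun c _ => Finset.sum_congr rfl fun d _ => ?_)
          rw [ee_sum N hNpos, if_congr (dvd_iff_pair n N hn hN a b c d) rfl rfl]
  rw [step1, e1]
  by_cases hab : a = b
  · subst hab
    simp only [true_and]
    have e2 : ∀ (q p c : Fin n),
        ∑ d : Fin n, (X p q * ee (((c.val:ℤ)+1) * ((p.val:ℤ) - a.val)
            - ((d.val:ℤ)+1) * ((q.val:ℤ) - a.val)) n) * (if c = d then (N:ℂ) else 0)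
        = (X p q * ee (((c.val:ℤ)+1) * ((p.val:ℤ) - (q.val:ℤ))) n) * N := by
      intro q p c
      simp only [mul_ite, mul_zero, Finset.sum_ite_eq, Finset.mem_univ, if_true]
      congr 2
      ring
    have e3 : ∀ (q p : Fin n),
        ∑ c : Fin n, (X p q * ee (((c.val:ℤ)+1) * ((p.val:ℤ) - (q.val:ℤ))) n) * (N:ℂ)
        = X p q * (if p = q then (n:ℂ) else 0) * N := by
      intro q p
      have : ∑ c : Fin n, (X p q * ee (((c.val:ℤ)+1) * ((p.val:ℤ) - (q.val:ℤ))) n) * (N:ℂ)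
          = (X p q * ∑ c : Fin n, ee (((c.val:ℤ)+1) * ((p.val:ℤ) - (q.val:ℤ))) n) * N := by
        rw [Finset.mul_sum, Finset.sum_mul]
      rw [this, ee_sum n hn, if_congr (dvd_iff_eq n p q) rfl rfl]
    have e4 : ∀ p : Fin n,
        ∑ q : Fin n, X p q * (if p = q then (n:ℂ) else 0) * (N:ℂ) = X p p * n * N := by
      intro p
      simp only [mul_ite, mul_zero, ite_mul, zero_mul, Finset.sum_ite_eq,
        Finset.mem_univ, if_true]
    have e4 : ∀ q : Fin n,
        ∑ p : Fin n, X p q * (if p = q then (n:ℂ) else 0) * (N:ℂ) = X q q * n * N := by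
      intro q
      simp only [mul_ite, mul_zero, ite_mul, zero_mul, Finset.sum_ite_eq',
        Finset.mem_univ, if_true]
    have E : ∑ q : Fin n, ∑ p : Fin n, ∑ c : Fin n, ∑ d : Fin n,
          (X p q * ee (((c.val:ℤ)+1) * ((p.val:ℤ) - a.val)
              - ((d.val:ℤ)+1) * ((q.val:ℤ) - a.val)) n)
            * (if c = d then (N:ℂ) else 0)
        = Matrix.trace X * n * N := by
      calc ∑ q : Fin n, ∑ p : Fin n, ∑ c : Fin n, ∑ d : Fin n,
            (X p q * ee (((c.val:ℤ)+1) * ((p.val:ℤ) - a.val)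
                - ((d.val:ℤ)+1) * ((q.val:ℤ) - a.val)) n)
              * (if c = d then (N:ℂ) else 0)
          = ∑ q : Fin n, ∑ p : Fin n, X p q * (if p = q then (n:ℂ) else 0) * N := by
            refine Finset.sum_congr rfl fun q _ => Finset.sum_congr rfl fun p _ => ?_
            calc ∑ c : Fin n, ∑ d : Fin n,
                  (X p q * ee (((c.val:ℤ)+1) * ((p.val:ℤ) - a.val)
                      - ((d.val:ℤ)+1) * ((q.val:ℤ) - a.val)) n)
                    * (if c = d then (N:ℂ) else 0)
                = ∑ c : Fin n,
                    (X p q * ee (((c.val:ℤ)+1) * ((p.val:ℤ) - (q.val:ℤ))) n) * N :=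
                  Finset.sum_congr rfl fun c _ => e2 q p c
              _ = X p q * (if p = q then (n:ℂ) else 0) * N := e3 q p
        _ = ∑ q : Fin n, X q q * n * N := Finset.sum_congr rfl fun q _ => e4 q
        _ = (∑ q : Fin n, X q q) * n * N := by rw [Finset.sum_mul, Finset.sum_mul]
        _ = Matrix.trace X * n * N := by
            have htr : Matrix.trace X = ∑ q : Fin n, X q q := rfl
            rw [htr]
    rw [E, Matrix.smul_apply, Matrix.one_apply_eq, smul_eq_mul, mul_one]
    field_simp
  · have hzero : ∑ q : Fin n, ∑ p : Fin n, ∑ c : Fin n, ∑ d : Fin n,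
        (X p q * ee (((c.val:ℤ)+1) * ((p.val:ℤ) - a.val)
            - ((d.val:ℤ)+1) * ((q.val:ℤ) - b.val)) n)
          * (if a = b ∧ c = d then (N:ℂ) else 0) = 0 := by
      refine Finset.sum_eq_zero fun q _ => Finset.sum_eq_zero fun p _ =>
        Finset.sum_eq_zero fun c _ => Finset.sum_eq_zero fun d _ => ?_
      rw [if_neg (fun h => hab h.1), mul_zero]
    rw [hzero]
    simp [Matrix.smul_apply, Matrix.one_apply_ne hab]
end

section
/- Let n, n', N be positive integers and let M, M' be integers. For each k ∈ {1,…,N} define U_k ∈ M_n(ℂ) by U_k(a,b) = (1/n) Σ_{c=1}^{n} exp(2πi·c(b−a)/n) · exp(2πi·k(M+(a−1)n+c)/N), and define U'_k ∈ M_{n'}(ℂ) by U'_k(a',b') = (1/n') Σ_{c'=1}^{n'} exp(2πi·c'(b'−a')/n') · exp(2πi·k(M'+(a'−1)n'+c')/N). Suppose that for all a, c ∈ {1,…,n} and all a', c' ∈ {1,…,n'} one has M+(a−1)n+c ≢ M'+(a'−1)n'+c' (mod N). Then Σ_{k=1}^{N} U_k X (U'_k)ᴴ = 0 for every X ∈ M_{n,n'}(ℂ).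 -/
open Matrix BigOperators

private lemma key_sum_zero (N : ℕ) (hN : 0 < N) (d : ℤ) (hd : ¬ ((N:ℤ) ∣ d)) :
    ∑ k : Fin N, Complex.exp (2 * (Real.pi:ℂ) * Complex.I * ((k.val:ℂ)+1) * (d:ℂ) / N) = 0 := by
  have hN0 : (N:ℂ) ≠ 0 := Nat.cast_ne_zero.2 hN.ne'
  set ω : ℂ := Complex.exp (2 * (Real.pi:ℂ) * Complex.I * d / N) with hω
  have hωN : ω ^ N = 1 := by
    rw [hω, ← Complex.exp_nat_mul]
    have h : (N:ℂ) * (2 * (Real.pi:ℂ) * Complex.I * d / N) = d * (2 * Real.pi * Complex.I) := by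
      field_simp
    rw [h, Complex.exp_int_mul_two_pi_mul_I]
  have hω1 : ω ≠ 1 := by
    intro h
    rw [hω, Complex.exp_eq_one_iff] at h
    obtain ⟨m, hm⟩ := h
    apply hd ⟨m, ?_⟩
    have h2pi : (2 * (Real.pi:ℂ) * Complex.I) ≠ 0 := by
      simp [Real.pi_ne_zero, Complex.I_ne_zero]
    have h3 : (d:ℂ) = ((N * m : ℤ) : ℂ) := by
      have := mul_left_cancel₀ h2pi (show 2*(Real.pi:ℂ)*Complex.I*(d:ℂ) =
          2*(Real.pi:ℂ)*Complex.I*((N*m:ℤ):ℂ) by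
        push_cast; field_simp at hm; linear_combination (2*(Real.pi:ℂ)*Complex.I) * hm)
      exact this
    exact_mod_cast h3
  have hterm : ∀ k : Fin N,
      Complex.exp (2 * (Real.pi:ℂ) * Complex.I * ((k.val:ℂ)+1) * d / N) = ω^(k.val+1) := by
    intro k
    rw [hω, ← Complex.exp_nat_mul]
    congr 1
    push_cast
    field_simp
  calc ∑ k : Fin N, Complex.exp (2 * (Real.pi:ℂ) * Complex.I * ((k.val:ℂ)+1) * d / N)
      = ∑ k : Fin N, ω^(k.val+1) := Finset.sum_congr rfl fun k _ => hterm k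
    _ = ∑ i ∈ Finset.range N, ω^(i+1) := Fin.sum_univ_eq_sum_range (fun i => ω^(i+1)) N
    _ = ∑ i ∈ Finset.range N, ω * ω^i := by simp [pow_succ, mul_comm]
    _ = ω * ((ω^N - 1)/(ω - 1)) := by rw [← Finset.mul_sum, geom_sum_eq hω1]
    _ = 0 := by rw [hωN]; simp

private lemma exp_mul_star_exp (N : ℕ) (k : Fin N) (e e' : ℤ) :
    Complex.exp (2 * (Real.pi:ℂ) * Complex.I * ((k.val:ℂ)+1) * (e:ℂ) / N) *
      star (Complex.exp (2 * (Real.pi:ℂ) * Complex.I * ((k.val:ℂ)+1) * (e':ℂ) / N)) =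
    Complex.exp (2 * (Real.pi:ℂ) * Complex.I * ((k.val:ℂ)+1) * ((e - e' : ℤ):ℂ) / N) := by
  have hstar : star (Complex.exp (2 * (Real.pi:ℂ) * Complex.I * ((k.val:ℂ)+1) * (e':ℂ) / N)) =
      Complex.exp (2 * (Real.pi:ℂ) * Complex.I * ((k.val:ℂ)+1) * ((-e' : ℤ):ℂ) / N) := by
    have h0 : star (Complex.exp (2 * (Real.pi:ℂ) * Complex.I * ((k.val:ℂ)+1) * (e':ℂ) / N))
        = (starRingEnd ℂ) (Complex.exp (2 * (Real.pi:ℂ) * Complex.I * ((k.val:ℂ)+1) * (e':ℂ) / N)) := rfl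
    rw [h0, ← Complex.exp_conj]
    congr 1
    simp only [map_div₀, _root_.map_mul, map_add, _root_.map_one, map_ofNat, map_natCast,
      map_intCast, Complex.conj_ofReal, Complex.conj_I]
    push_cast
    ring
  rw [hstar, ← Complex.exp_add]
  congr 1
  push_cast
  ring

/-- Cross-block vanishing lemma: if the exponents of the two families
`U_k` and `U'_k` occupy disjoint residue classes modulo `N`, then
`Σ_{k=1}^N U_k X (U'_k)ᴴ = 0`. -/
theorem stmt_10 (n n' N : ℕ) (hn : 0 < n) (hn' : 0 < n') (hN : 0 < N) (M M' : ℤ)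
    (U : Fin N → Matrix (Fin n) (Fin n) ℂ)
    (hU : ∀ (k : Fin N) (a b : Fin n), U k a b = (1 / (n : ℂ)) *
      ∑ c : Fin n,
        Complex.exp (2 * (Real.pi : ℂ) * Complex.I *
            (((c.val : ℂ) + 1) * ((b.val : ℂ) - (a.val : ℂ))) / (n : ℂ)) *
        Complex.exp (2 * (Real.pi : ℂ) * Complex.I * ((k.val : ℂ) + 1) *
            ((M : ℂ) + (a.val : ℂ) * (n : ℂ) + ((c.val : ℂ) + 1)) / (N : ℂ)))
    (U' : Fin N → Matrix (Fin n') (Fin n') ℂ)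
    (hU' : ∀ (k : Fin N) (a' b' : Fin n'), U' k a' b' = (1 / (n' : ℂ)) *
      ∑ c' : Fin n',
        Complex.exp (2 * (Real.pi : ℂ) * Complex.I *
            (((c'.val : ℂ) + 1) * ((b'.val : ℂ) - (a'.val : ℂ))) / (n' : ℂ)) *
        Complex.exp (2 * (Real.pi : ℂ) * Complex.I * ((k.val : ℂ) + 1) *
            ((M' : ℂ) + (a'.val : ℂ) * (n' : ℂ) + ((c'.val : ℂ) + 1)) / (N : ℂ)))
    (hdisj : ∀ (a c : Fin n) (a' c' : Fin n'),
      ¬ (M + (a.val : ℤ) * (n : ℤ) + ((c.val : ℤ) + 1) ≡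
          M' + (a'.val : ℤ) * (n' : ℤ) + ((c'.val : ℤ) + 1) [ZMOD (N : ℤ)])) :
    ∀ X : Matrix (Fin n) (Fin n') ℂ, ∑ k, U k * X * (U' k)ᴴ = 0 := by
  intro X
  -- integer exponents
  set e1 : Fin n → Fin n → ℤ := fun a c => M + (a.val : ℤ) * n + ((c.val : ℤ) + 1) with he1
  set e2 : Fin n' → Fin n' → ℤ := fun a' c' => M' + (a'.val : ℤ) * n' + ((c'.val : ℤ) + 1) with he2
  -- phase factors independent of k
  set φ : Fin n → Fin n → Fin n → ℂ := fun a b c =>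
    Complex.exp (2 * (Real.pi : ℂ) * Complex.I *
      (((c.val : ℂ) + 1) * ((b.val : ℂ) - (a.val : ℂ))) / (n : ℂ)) with hφ
  set ψ : Fin n' → Fin n' → Fin n' → ℂ := fun a' b' c' =>
    Complex.exp (2 * (Real.pi : ℂ) * Complex.I *
      (((c'.val : ℂ) + 1) * ((b'.val : ℂ) - (a'.val : ℂ))) / (n' : ℂ)) with hψ
  set E : Fin N → ℤ → ℂ := fun k e =>
    Complex.exp (2 * (Real.pi:ℂ) * Complex.I * ((k.val:ℂ)+1) * (e:ℂ) / N) with hE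
  have hUe : ∀ (k : Fin N) (a b : Fin n),
      U k a b = (1 / (n : ℂ)) * ∑ c : Fin n, φ a b c * E k (e1 a c) := by
    intro k a b
    rw [hU]
    congr 1
    refine Finset.sum_congr rfl fun c _ => ?_
    rw [hφ, hE, he1]
    congr 2
    push_cast
    ring
  have hU'e : ∀ (k : Fin N) (a' b' : Fin n'),
      U' k a' b' = (1 / (n' : ℂ)) * ∑ c' : Fin n', ψ a' b' c' * E k (e2 a' c') := by
    intro k a' b'
    rw [hU']
    congr 1
    refine Finset.sum_congr rfl fun c' _ => ?_
    rw [hψ, hE, he2]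
    congr 2
    push_cast
    ring
  ext a b'
  rw [Matrix.sum_apply, Matrix.zero_apply]
  have hentry : ∀ k : Fin N, (U k * X * (U' k)ᴴ) a b' =
      ∑ j : Fin n', ∑ b : Fin n, ∑ c : Fin n, ∑ c' : Fin n',
        ((1 / (n : ℂ)) * (1 / (n' : ℂ)) * φ a b c * X b j * star (ψ b' j c')) *
          (E k (e1 a c) * star (E k (e2 b' c'))) := by
    intro k
    simp only [Matrix.mul_apply, Matrix.conjTranspose_apply, hUe, hU'e]
    rw [Finset.sum_congr rfl (fun j _ => ?_)]
    have hstar : star ((1 / (n' : ℂ)) * ∑ c' : Fin n', ψ b' j c' * E k (e2 b' c')) =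
        (1 / (n' : ℂ)) * ∑ c' : Fin n', star (ψ b' j c') * star (E k (e2 b' c')) := by
      rw [star_mul']
      congr 1
      · simp
      · rw [star_sum]
        exact Finset.sum_congr rfl fun c' _ => star_mul' _ _
    rw [hstar]
    simp only [Finset.mul_sum, Finset.sum_mul]
    rw [Finset.sum_comm]
    refine Finset.sum_congr rfl fun b _ => ?_
    rw [Finset.sum_comm]
    refine Finset.sum_congr rfl fun c _ => Finset.sum_congr rfl fun c' _ => ?_
    ring
  rw [Finset.sum_congr rfl fun k _ => hentry k]
  rw [Finset.sum_comm]
  refine Finset.sum_eq_zero fun j _ => ?_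
  rw [Finset.sum_comm]
  refine Finset.sum_eq_zero fun b _ => ?_
  rw [Finset.sum_comm]
  refine Finset.sum_eq_zero fun c _ => ?_
  rw [Finset.sum_comm]
  refine Finset.sum_eq_zero fun c' _ => ?_
  rw [← Finset.mul_sum]
  have hsum : ∑ k : Fin N, E k (e1 a c) * star (E k (e2 b' c')) = 0 := by
    have hcomb : ∀ k : Fin N, E k (e1 a c) * star (E k (e2 b' c')) =
        E k (e1 a c - e2 b' c') := fun k => exp_mul_star_exp N k _ _
    rw [Finset.sum_congr rfl fun k _ => hcomb k]
    refine key_sum_zero N hN _ ?_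
    intro hdvd
    exact hdisj a c b' c' (Int.ModEq.symm (Int.modEq_iff_dvd.2 hdvd))
  rw [hsum, mul_zero]
end

section
/- Let p be a positive integer, let m_1, …, m_p and n_1, …, n_p be positive integers, set d = m_1 n_1 + ⋯ + m_p n_p and N = n_1² + ⋯ + n_p², and set N_1 = 0 and N_ℓ = n_1² + ⋯ + n_{ℓ−1}² for ℓ ∈ {2,…,p}. Index ℂ^d by triples (ℓ, a, b) with ℓ ∈ {1,…,p}, a ∈ {1,…,m_ℓ}, b ∈ {1,…,n_ℓ}, and define Φ : M_d(ℂ) → M_d(ℂ) by Φ(X)((ℓ,a,b),(ℓ',a',b')) = δ_{ℓ,ℓ'}·δ_{b,b'}·(1/n_ℓ)·Σ_{c=1}^{n_ℓ} X((ℓ,a,c),(ℓ,a',c)). For each k ∈ {1,…,N} and ℓ ∈ {1,…,p} define U_{k,ℓ} ∈ M_{n_ℓ}(ℂ) by U_{k,ℓ}(a,b) = (1/n_ℓ) Σ_{c=1}^{n_ℓ} exp(2πi·c(b−a)/n_ℓ)·exp(2πi·k(N_ℓ+(a−1)n_ℓ+c)/N), and define U_k ∈ M_d(ℂ) blockwise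 by U_k((ℓ,a,b),(ℓ',a',b')) = δ_{ℓ,ℓ'}·δ_{a,a'}·U_{k,ℓ}(b,b'). Then each U_k is unitary, and Φ(X) = (1/N) Σ_{k=1}^{N} U_k X U_kᴴ for every X ∈ M_d(ℂ). -/
open Matrix BigOperators

noncomputable def EE (t : ℤ) (M : ℕ) : ℂ :=
  Complex.exp (2 * (Real.pi : ℂ) * Complex.I * ((t : ℂ) / (M : ℂ)))

lemma EE_mul (t s : ℤ) (M : ℕ) : EE t M * EE s M = EE (t + s) M := by
  simp only [EE, ← Complex.exp_add]
  congr 1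
  push_cast
  ring

lemma EE_conj (t : ℤ) (M : ℕ) : (starRingEnd ℂ) (EE t M) = EE (-t) M := by
  rw [EE, ← Complex.exp_conj]
  congr 1
  simp only [_root_.map_mul, map_div₀, Complex.conj_I, map_ofNat, Complex.conj_ofReal,
    Complex.conj_natCast, map_intCast]
  push_cast
  ring

lemma EE_eq_one_of_dvd (t : ℤ) (M : ℕ) (hM : 0 < M) (h : (M:ℤ) ∣ t) : EE t M = 1 := by
  obtain ⟨s, rfl⟩ := h
  have hM' : (M:ℂ) ≠ 0 := Nat.cast_ne_zero.mpr hM.ne'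
  rw [EE, show 2 * (Real.pi:ℂ) * Complex.I * ((((M:ℤ)*s : ℤ):ℂ) / (M:ℂ)) = s * (2*Real.pi*Complex.I) by
    push_cast
    field_simp]
  exact Complex.exp_int_mul_two_pi_mul_I s

lemma EE_ne_one (t : ℤ) (M : ℕ) (hM : 0 < M) (h : ¬ (M:ℤ) ∣ t) : EE t M ≠ 1 := by
  intro hc
  rw [EE, Complex.exp_eq_one_iff] at hc
  obtain ⟨n, hn⟩ := hc
  have hM' : (M:ℂ) ≠ 0 := Nat.cast_ne_zero.mpr hM.ne'
  have h2 : (2*(Real.pi:ℂ)*Complex.I) ≠ 0 := by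
    simp [Real.pi_ne_zero, Complex.I_ne_zero, Complex.ofReal_ne_zero]
  have ht : (t:ℂ) = n * M := by
    have h3 : 2*(Real.pi:ℂ)*Complex.I * t = 2*(Real.pi:ℂ)*Complex.I * (n * M) := by
      field_simp at hn
      linear_combination (2*(Real.pi:ℂ)*Complex.I) * hn
    exact mul_left_cancel₀ h2 h3
  have : t = n * M := by exact_mod_cast ht
  exact h ⟨n, by linarith [this]⟩

lemma EE_pow (t : ℤ) (M : ℕ) (j : ℕ) : EE t M ^ j = EE (t * j) M := by
  induction j with
  | zero => simp [EE]
  | succ n ih =>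
    rw [pow_succ, ih, EE_mul]
    congr 1
    push_cast
    ring

lemma EE_sum (M : ℕ) (hM : 0 < M) (t : ℤ) :
    ∑ x : Fin M, EE (t * ((x:ℤ) + 1)) M = if (M:ℤ) ∣ t then (M:ℂ) else 0 := by
  by_cases h : (M:ℤ) ∣ t
  · simp only [h, if_true]
    have h1 : ∀ x : Fin M, EE (t * ((x:ℤ)+1)) M = 1 := fun x =>
      EE_eq_one_of_dvd _ _ hM (Dvd.dvd.mul_right h _)
    simp [h1]
  · simp only [h, if_false]
    have hz : EE t M ≠ 1 := EE_ne_one t M hM h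
    have h1 : ∀ x : Fin M, EE (t * ((x:ℤ) + 1)) M = EE t M * EE t M ^ (x:ℕ) := by
      intro x
      rw [EE_pow, EE_mul]
      congr 1
      push_cast
      ring
    rw [Finset.sum_congr rfl (fun x _ => h1 x), ← Finset.mul_sum,
      Fin.sum_univ_eq_sum_range (fun j => EE t M ^ j), geom_sum_eq hz,
      EE_pow, EE_eq_one_of_dvd _ _ hM (dvd_mul_left _ _)]
    simp

lemma EE_sum_eq_ite (M : ℕ) (hM : 0 < M) (t : ℤ) (hlo : -(M:ℤ) < t) (hhi : t < M) :
    ∑ x : Fin M, EE (t * ((x:ℤ) + 1)) M = if t = 0 then (M:ℂ) else 0 := by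
  rw [EE_sum M hM t]
  congr 1
  simp only [eq_iff_iff]
  constructor
  · intro hd
    by_contra ht
    have h1 := Int.le_of_dvd (abs_pos.mpr ht) ((dvd_abs _ _).mpr hd)
    have h2 : |t| < M := abs_lt.mpr ⟨hlo, hhi⟩
    linarith
  · rintro rfl; exact dvd_zero _

lemma base_inj {a b c d n : ℕ} (hc : c < n) (hd : d < n) (h : a*n+c = b*n+d) :
    a = b ∧ c = d := by
  have hab : a = b := by
    rcases Nat.lt_trichotomy a b with h' | h' | h'
    · exfalso
      have : a*n + c < b*n + d := by
        calc a*n + c < a*n + n := by omega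
        _ = (a+1)*n := by ring
        _ ≤ b*n := Nat.mul_le_mul_right n h'
        _ ≤ b*n + d := Nat.le_add_right _ _
      omega
    · exact h'
    · exfalso
      have : b*n + d < a*n + c := by
        calc b*n + d < b*n + n := by omega
        _ = (b+1)*n := by ring
        _ ≤ a*n := Nat.mul_le_mul_right n h'
        _ ≤ a*n + c := Nat.le_add_right _ _
      omega
  subst hab
  omega

/-- Explicit minimal mixed-unitary decomposition of the channel
`Φ = (𝟙_{M_{m₁}} ⊗ Ω_{n₁}) ⊕ ⋯ ⊕ (𝟙_{M_{m_p}} ⊗ Ω_{n_p})` on `M_d(ℂ)`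
(`d = Σ m_ℓ n_ℓ`, indices given by triples `(ℓ,a,b)`) as the average of the
`N = Σ n_ℓ²` explicitly constructed block-diagonal unitaries `U_k`. -/
theorem stmt_11 (p : ℕ) (hp : 0 < p)
    (m nn : Fin p → ℕ) (hm : ∀ ℓ, 0 < m ℓ) (hnn : ∀ ℓ, 0 < nn ℓ)
    (N : ℕ) (hN : N = ∑ ℓ : Fin p, (nn ℓ) ^ 2)
    (Nl : Fin p → ℕ)
    (hNl : ∀ ℓ : Fin p, Nl ℓ = ∑ j ∈ Finset.univ.filter (fun j : Fin p => j < ℓ), (nn j) ^ 2)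
    (Φ : Matrix ((ℓ : Fin p) × (Fin (m ℓ) × Fin (nn ℓ))) ((ℓ : Fin p) × (Fin (m ℓ) × Fin (nn ℓ))) ℂ →
         Matrix ((ℓ : Fin p) × (Fin (m ℓ) × Fin (nn ℓ))) ((ℓ : Fin p) × (Fin (m ℓ) × Fin (nn ℓ))) ℂ)
    (hΦ : ∀ X (i i' : (ℓ : Fin p) × (Fin (m ℓ) × Fin (nn ℓ))),
      Φ X i i' =
        if h : i.1 = i'.1 then
          (if Fin.cast (congrArg nn h) i.2.2 = i'.2.2 then
            (1 / (nn i'.1 : ℂ)) *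
              ∑ c : Fin (nn i'.1),
                X ⟨i'.1, (Fin.cast (congrArg m h) i.2.1, c)⟩ ⟨i'.1, (i'.2.1, c)⟩
          else 0)
        else 0)
    (Ublk : Fin N → (ℓ : Fin p) → Matrix (Fin (nn ℓ)) (Fin (nn ℓ)) ℂ)
    (hUblk : ∀ (k : Fin N) (ℓ : Fin p) (a b : Fin (nn ℓ)),
      Ublk k ℓ a b = (1 / (nn ℓ : ℂ)) *
        ∑ c : Fin (nn ℓ),
          Complex.exp (2 * (Real.pi : ℂ) * Complex.I *
              (((c.val : ℂ) + 1) * ((b.val : ℂ) - (a.val : ℂ))) / (nn ℓ : ℂ)) *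
          Complex.exp (2 * (Real.pi : ℂ) * Complex.I * ((k.val : ℂ) + 1) *
              ((Nl ℓ : ℂ) + (a.val : ℂ) * (nn ℓ : ℂ) + ((c.val : ℂ) + 1)) / (N : ℂ)))
    (U : Fin N →
      Matrix ((ℓ : Fin p) × (Fin (m ℓ) × Fin (nn ℓ))) ((ℓ : Fin p) × (Fin (m ℓ) × Fin (nn ℓ))) ℂ)
    (hU : ∀ (k : Fin N) (i i' : (ℓ : Fin p) × (Fin (m ℓ) × Fin (nn ℓ))),
      U k i i' =
        if h : i.1 = i'.1 then
          (if Fin.cast (congrArg m h) i.2.1 = i'.2.1 then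
            Ublk k i'.1 (Fin.cast (congrArg nn h) i.2.2) i'.2.2
          else 0)
        else 0) :
    (∀ k, (U k)ᴴ * U k = 1 ∧ U k * (U k)ᴴ = 1) ∧
    (∀ X, Φ X = (1 / (N : ℂ)) • ∑ k, U k * X * (U k)ᴴ) := by
  -- basic positivity
  have hNpos : 0 < N := by
    rw [hN]
    exact Finset.sum_pos (fun j _ => pow_pos (hnn j) 2) ⟨⟨0, hp⟩, Finset.mem_univ _⟩
  -- block bounds
  have hstep : ∀ ℓ : Fin p, Nl ℓ + nn ℓ ^ 2 = ∑ j ∈ Finset.univ.filter (fun j : Fin p => j ≤ ℓ), nn j ^ 2 := by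
    intro ℓ
    have hins : Finset.univ.filter (fun j : Fin p => j ≤ ℓ) =
        insert ℓ (Finset.univ.filter (fun j : Fin p => j < ℓ)) := by
      ext j
      simp [le_iff_lt_or_eq, or_comm]
    rw [hins, Finset.sum_insert (by simp), hNl]
    ring
  have hNl_le : ∀ ℓ : Fin p, Nl ℓ + nn ℓ ^ 2 ≤ N := by
    intro ℓ
    rw [hstep, hN]
    exact Finset.sum_le_sum_of_subset (Finset.filter_subset _ _)
  have hNl_lt : ∀ ℓ ℓ' : Fin p, ℓ < ℓ' → Nl ℓ + nn ℓ ^ 2 ≤ Nl ℓ' := by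
    intro ℓ ℓ' hll
    rw [hstep, hNl ℓ']
    refine Finset.sum_le_sum_of_subset ?_
    intro j hj
    simp only [Finset.mem_filter, Finset.mem_univ, true_and] at hj ⊢
    exact lt_of_le_of_lt hj hll
  -- the "address" of (ℓ, a, c)
  have hr_bound : ∀ (ℓ : Fin p) (a c : Fin (nn ℓ)), (a:ℕ) * nn ℓ + (c:ℕ) < nn ℓ ^ 2 := by
    intro ℓ a c
    have ha : (a:ℕ) + 1 ≤ nn ℓ := a.isLt
    calc (a:ℕ) * nn ℓ + (c:ℕ) < (a:ℕ) * nn ℓ + nn ℓ := by omega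
    _ = ((a:ℕ)+1) * nn ℓ := by ring
    _ ≤ nn ℓ * nn ℓ := Nat.mul_le_mul_right _ ha
    _ = nn ℓ ^ 2 := (sq (nn ℓ)).symm
  have hinj : ∀ (ℓ ℓ' : Fin p) (a c : Fin (nn ℓ)) (a' c' : Fin (nn ℓ')),
      Nl ℓ + ((a:ℕ) * nn ℓ + (c:ℕ)) = Nl ℓ' + ((a':ℕ) * nn ℓ' + (c':ℕ)) →
      ℓ = ℓ' ∧ (a:ℕ) = (a':ℕ) ∧ (c:ℕ) = (c':ℕ) := by
    intro ℓ ℓ' a c a' c' h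
    have hll : ℓ = ℓ' := by
      rcases lt_trichotomy ℓ ℓ' with h' | h' | h'
      · exfalso
        have h1 := hr_bound ℓ a c
        have h2 := hNl_lt ℓ ℓ' h'
        omega
      · exact h'
      · exfalso
        have h1 := hr_bound ℓ' a' c'
        have h2 := hNl_lt ℓ' ℓ h'
        omega
    subst hll
    have h3 : (a:ℕ) * nn ℓ + (c:ℕ) = (a':ℕ) * nn ℓ + (c':ℕ) := by omega
    exact ⟨rfl, base_inj c.isLt c'.isLt h3⟩
  -- normalized formula for Ublk
  have hUb : ∀ (k : Fin N) (ℓ : Fin p) (a b : Fin (nn ℓ)),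
      Ublk k ℓ a b = (1 / (nn ℓ : ℂ)) *
        ∑ c : Fin (nn ℓ),
          EE (((c:ℤ)+1) * ((b:ℤ) - (a:ℤ))) (nn ℓ) *
          EE (((k:ℤ)+1) * ((Nl ℓ : ℤ) + (a:ℤ) * (nn ℓ : ℤ) + (c:ℤ) + 1)) N := by
    intro k ℓ a b
    rw [hUblk]
    congr 1
    refine Finset.sum_congr rfl fun c _ => ?_
    congr 1
    · rw [EE]
      congr 1
      push_cast
      ring
    · rw [EE]
      congr 1
      push_cast
      ring
  have hUbconj : ∀ (k : Fin N) (ℓ : Fin p) (a b : Fin (nn ℓ)),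
      (starRingEnd ℂ) (Ublk k ℓ a b) = (1 / (nn ℓ : ℂ)) *
        ∑ c : Fin (nn ℓ),
          EE (-(((c:ℤ)+1) * ((b:ℤ) - (a:ℤ)))) (nn ℓ) *
          EE (-(((k:ℤ)+1) * ((Nl ℓ : ℤ) + (a:ℤ) * (nn ℓ : ℤ) + (c:ℤ) + 1))) N := by
    intro k ℓ a b
    rw [hUb]
    simp only [_root_.map_mul, map_sum, map_div₀, _root_.map_one, Complex.conj_natCast, EE_conj]
  -- unitarity of the blocks, row orthogonality
  have hrow : ∀ (k : Fin N) (ℓ : Fin p) (a b : Fin (nn ℓ)),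
      ∑ x : Fin (nn ℓ), (starRingEnd ℂ) (Ublk k ℓ x a) * Ublk k ℓ x b =
        if a = b then 1 else 0 := by
    intro k ℓ a b
    have hn := hnn ℓ
    have hnC : (nn ℓ : ℂ) ≠ 0 := Nat.cast_ne_zero.mpr hn.ne'
    calc ∑ x : Fin (nn ℓ), (starRingEnd ℂ) (Ublk k ℓ x a) * Ublk k ℓ x b
        = ∑ x : Fin (nn ℓ), ∑ c : Fin (nn ℓ), ∑ c' : Fin (nn ℓ),
            (1/(nn ℓ:ℂ) * (1/(nn ℓ:ℂ))) *
            ((EE (-(((c:ℤ)+1) * ((a:ℤ) - (x:ℤ)))) (nn ℓ) *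
              EE (-(((k:ℤ)+1) * ((Nl ℓ:ℤ) + (x:ℤ)*(nn ℓ:ℤ) + (c:ℤ) + 1))) N) *
             (EE (((c':ℤ)+1) * ((b:ℤ) - (x:ℤ))) (nn ℓ) *
              EE (((k:ℤ)+1) * ((Nl ℓ:ℤ) + (x:ℤ)*(nn ℓ:ℤ) + (c':ℤ) + 1)) N)) := by
          refine Finset.sum_congr rfl fun x _ => ?_
          rw [hUbconj, hUb, Finset.mul_sum, Finset.mul_sum, Finset.sum_mul_sum]
          refine Finset.sum_congr rfl fun c _ => ?_
          refine Finset.sum_congr rfl fun c' _ => ?_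
          ring
      _ = ∑ c : Fin (nn ℓ), ∑ c' : Fin (nn ℓ), ∑ x : Fin (nn ℓ),
            (1/(nn ℓ:ℂ) * (1/(nn ℓ:ℂ))) *
            ((EE (-(((c:ℤ)+1) * ((a:ℤ) - (x:ℤ)))) (nn ℓ) *
              EE (-(((k:ℤ)+1) * ((Nl ℓ:ℤ) + (x:ℤ)*(nn ℓ:ℤ) + (c:ℤ) + 1))) N) *
             (EE (((c':ℤ)+1) * ((b:ℤ) - (x:ℤ))) (nn ℓ) *
              EE (((k:ℤ)+1) * ((Nl ℓ:ℤ) + (x:ℤ)*(nn ℓ:ℤ) + (c':ℤ) + 1)) N)) := by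
          rw [Finset.sum_comm]
          exact Finset.sum_congr rfl fun c _ => Finset.sum_comm
      _ = ∑ c : Fin (nn ℓ), ∑ c' : Fin (nn ℓ),
            (1/(nn ℓ:ℂ) * (1/(nn ℓ:ℂ))) *
            ((∑ x : Fin (nn ℓ), EE (((c:ℤ) - (c':ℤ)) * ((x:ℤ)+1)) (nn ℓ)) *
             (EE (((c':ℤ)+1)*(b:ℤ) - ((c:ℤ)+1)*(a:ℤ) - ((c:ℤ) - (c':ℤ))) (nn ℓ) *
              EE (((k:ℤ)+1) * ((c':ℤ) - (c:ℤ))) N)) := by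
          refine Finset.sum_congr rfl fun c _ => Finset.sum_congr rfl fun c' _ => ?_
          rw [Finset.sum_mul, Finset.mul_sum]
          refine Finset.sum_congr rfl fun x _ => ?_
          have key : (EE (-(((c:ℤ)+1) * ((a:ℤ) - (x:ℤ)))) (nn ℓ) *
              EE (-(((k:ℤ)+1) * ((Nl ℓ:ℤ) + (x:ℤ)*(nn ℓ:ℤ) + (c:ℤ) + 1))) N) *
             (EE (((c':ℤ)+1) * ((b:ℤ) - (x:ℤ))) (nn ℓ) *
              EE (((k:ℤ)+1) * ((Nl ℓ:ℤ) + (x:ℤ)*(nn ℓ:ℤ) + (c':ℤ) + 1)) N) =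
              EE (((c:ℤ) - (c':ℤ)) * ((x:ℤ)+1)) (nn ℓ) *
             (EE (((c':ℤ)+1)*(b:ℤ) - ((c:ℤ)+1)*(a:ℤ) - ((c:ℤ) - (c':ℤ))) (nn ℓ) *
              EE (((k:ℤ)+1) * ((c':ℤ) - (c:ℤ))) N) := by
            calc (EE (-(((c:ℤ)+1) * ((a:ℤ) - (x:ℤ)))) (nn ℓ) *
                  EE (-(((k:ℤ)+1) * ((Nl ℓ:ℤ) + (x:ℤ)*(nn ℓ:ℤ) + (c:ℤ) + 1))) N) *
                 (EE (((c':ℤ)+1) * ((b:ℤ) - (x:ℤ))) (nn ℓ) *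
                  EE (((k:ℤ)+1) * ((Nl ℓ:ℤ) + (x:ℤ)*(nn ℓ:ℤ) + (c':ℤ) + 1)) N)
                = (EE (-(((c:ℤ)+1) * ((a:ℤ) - (x:ℤ)))) (nn ℓ) *
                   EE (((c':ℤ)+1) * ((b:ℤ) - (x:ℤ))) (nn ℓ)) *
                  (EE (-(((k:ℤ)+1) * ((Nl ℓ:ℤ) + (x:ℤ)*(nn ℓ:ℤ) + (c:ℤ) + 1))) N *
                   EE (((k:ℤ)+1) * ((Nl ℓ:ℤ) + (x:ℤ)*(nn ℓ:ℤ) + (c':ℤ) + 1)) N) := by ring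
              _ = EE ((((c:ℤ) - (c':ℤ)) * ((x:ℤ)+1)) +
                      (((c':ℤ)+1)*(b:ℤ) - ((c:ℤ)+1)*(a:ℤ) - ((c:ℤ) - (c':ℤ)))) (nn ℓ) *
                  EE (((k:ℤ)+1) * ((c':ℤ) - (c:ℤ))) N := by
                rw [EE_mul, EE_mul,
                  show -(((c:ℤ)+1) * ((a:ℤ) - (x:ℤ))) + ((c':ℤ)+1) * ((b:ℤ) - (x:ℤ)) =
                    (((c:ℤ) - (c':ℤ)) * ((x:ℤ)+1)) +
                      (((c':ℤ)+1)*(b:ℤ) - ((c:ℤ)+1)*(a:ℤ) - ((c:ℤ) - (c':ℤ))) from by ring,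
                  show -(((k:ℤ)+1) * ((Nl ℓ:ℤ) + (x:ℤ)*(nn ℓ:ℤ) + (c:ℤ) + 1)) +
                      ((k:ℤ)+1) * ((Nl ℓ:ℤ) + (x:ℤ)*(nn ℓ:ℤ) + (c':ℤ) + 1) =
                    ((k:ℤ)+1) * ((c':ℤ) - (c:ℤ)) from by ring]
              _ = EE (((c:ℤ) - (c':ℤ)) * ((x:ℤ)+1)) (nn ℓ) *
                 (EE (((c':ℤ)+1)*(b:ℤ) - ((c:ℤ)+1)*(a:ℤ) - ((c:ℤ) - (c':ℤ))) (nn ℓ) *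
                  EE (((k:ℤ)+1) * ((c':ℤ) - (c:ℤ))) N) := by
                rw [← EE_mul, mul_assoc]
          rw [key]
      _ = ∑ c : Fin (nn ℓ), ∑ c' : Fin (nn ℓ),
            (1/(nn ℓ:ℂ) * (1/(nn ℓ:ℂ))) *
            ((if (c:ℤ) - (c':ℤ) = 0 then (nn ℓ : ℂ) else 0) *
             (EE (((c':ℤ)+1)*(b:ℤ) - ((c:ℤ)+1)*(a:ℤ) - ((c:ℤ) - (c':ℤ))) (nn ℓ) *
              EE (((k:ℤ)+1) * ((c':ℤ) - (c:ℤ))) N)) := by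
          refine Finset.sum_congr rfl fun c _ => Finset.sum_congr rfl fun c' _ => ?_
          rw [EE_sum_eq_ite (nn ℓ) hn _ (by omega) (by omega)]
      _ = ∑ c : Fin (nn ℓ),
            (1/(nn ℓ:ℂ)) * EE (((b:ℤ) - (a:ℤ)) * ((c:ℤ)+1)) (nn ℓ) := by
          refine Finset.sum_congr rfl fun c _ => ?_
          rw [Finset.sum_eq_single c]
          · rw [if_pos (sub_self ((c:ℤ)))]
            have h0 : ((c:ℤ)+1)*(b:ℤ) - ((c:ℤ)+1)*(a:ℤ) - ((c:ℤ) - (c:ℤ)) =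
                ((b:ℤ) - (a:ℤ)) * ((c:ℤ)+1) := by ring
            have h1 : ((k:ℤ)+1) * ((c:ℤ) - (c:ℤ)) = 0 := by ring
            rw [h0, h1, show EE 0 N = 1 by simp [EE]]
            field_simp
          · intro c' _ hne
            have : ¬ ((c:ℤ) - (c':ℤ) = 0) := by
              intro hc
              exact hne (Fin.ext (by omega)).symm
            simp [this]
          · intro h
            exact absurd (Finset.mem_univ c) h
      _ = if a = b then 1 else 0 := by
          rw [← Finset.mul_sum, EE_sum_eq_ite (nn ℓ) hn _ (by omega) (by omega)]
          by_cases hab : a = b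
          · subst hab
            simp [hnC]
          · have : ¬ ((b:ℤ) - (a:ℤ) = 0) := by
              intro hc
              exact hab (Fin.ext (by omega))
            simp [this, hab]
  -- the Fourier/averaging computation
  have hC : ∀ (ℓ ℓ' : Fin p) (β γ : Fin (nn ℓ)) (β' γ' : Fin (nn ℓ')),
      ∑ k : Fin N, Ublk k ℓ β γ * (starRingEnd ℂ) (Ublk k ℓ' β' γ') =
        if ℓ = ℓ' then
          (if (β:ℕ) = (β':ℕ) ∧ (γ:ℕ) = (γ':ℕ) then (N:ℂ) / (nn ℓ : ℂ) else 0)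
        else 0 := by
    intro ℓ ℓ' β γ β' γ'
    have hn := hnn ℓ
    have hn' := hnn ℓ'
    have hnC : (nn ℓ : ℂ) ≠ 0 := Nat.cast_ne_zero.mpr hn.ne'
    have hn'C : (nn ℓ' : ℂ) ≠ 0 := Nat.cast_ne_zero.mpr hn'.ne'
    have hNC : (N : ℂ) ≠ 0 := Nat.cast_ne_zero.mpr hNpos.ne'
    have hbd : ∀ (ℓ₀ : Fin p) (a c : Fin (nn ℓ₀)), Nl ℓ₀ + ((a:ℕ) * nn ℓ₀ + (c:ℕ)) < N := by
      intro ℓ₀ a c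
      have h1 := hr_bound ℓ₀ a c
      have h2 := hNl_le ℓ₀
      omega
    calc ∑ k : Fin N, Ublk k ℓ β γ * (starRingEnd ℂ) (Ublk k ℓ' β' γ')
        = ∑ k : Fin N, ∑ c : Fin (nn ℓ), ∑ c' : Fin (nn ℓ'),
            (1/(nn ℓ:ℂ) * (1/(nn ℓ':ℂ))) *
            ((EE (((c:ℤ)+1) * ((γ:ℤ) - (β:ℤ))) (nn ℓ) *
              EE (-(((c':ℤ)+1) * ((γ':ℤ) - (β':ℤ)))) (nn ℓ')) *
             (EE (((k:ℤ)+1) * ((Nl ℓ:ℤ) + (β:ℤ)*(nn ℓ:ℤ) + (c:ℤ) + 1)) N *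
              EE (-(((k:ℤ)+1) * ((Nl ℓ':ℤ) + (β':ℤ)*(nn ℓ':ℤ) + (c':ℤ) + 1))) N)) := by
          refine Finset.sum_congr rfl fun k _ => ?_
          rw [hUb, hUbconj, Finset.mul_sum, Finset.mul_sum, Finset.sum_mul_sum]
          refine Finset.sum_congr rfl fun c _ => ?_
          refine Finset.sum_congr rfl fun c' _ => ?_
          ring
      _ = ∑ c : Fin (nn ℓ), ∑ c' : Fin (nn ℓ'), ∑ k : Fin N,
            (1/(nn ℓ:ℂ) * (1/(nn ℓ':ℂ))) *
            ((EE (((c:ℤ)+1) * ((γ:ℤ) - (β:ℤ))) (nn ℓ) *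
              EE (-(((c':ℤ)+1) * ((γ':ℤ) - (β':ℤ)))) (nn ℓ')) *
             (EE (((k:ℤ)+1) * ((Nl ℓ:ℤ) + (β:ℤ)*(nn ℓ:ℤ) + (c:ℤ) + 1)) N *
              EE (-(((k:ℤ)+1) * ((Nl ℓ':ℤ) + (β':ℤ)*(nn ℓ':ℤ) + (c':ℤ) + 1))) N)) := by
          rw [Finset.sum_comm]
          exact Finset.sum_congr rfl fun c _ => Finset.sum_comm
      _ = ∑ c : Fin (nn ℓ), ∑ c' : Fin (nn ℓ'),
            (1/(nn ℓ:ℂ) * (1/(nn ℓ':ℂ))) *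
            ((EE (((c:ℤ)+1) * ((γ:ℤ) - (β:ℤ))) (nn ℓ) *
              EE (-(((c':ℤ)+1) * ((γ':ℤ) - (β':ℤ)))) (nn ℓ')) *
             (∑ k : Fin N,
                EE ((((Nl ℓ + ((β:ℕ) * nn ℓ + (c:ℕ)) : ℕ) : ℤ) -
                     ((Nl ℓ' + ((β':ℕ) * nn ℓ' + (c':ℕ)) : ℕ) : ℤ)) * ((k:ℤ)+1)) N)) := by
          refine Finset.sum_congr rfl fun c _ => Finset.sum_congr rfl fun c' _ => ?_
          conv_rhs => rw [Finset.mul_sum, Finset.mul_sum]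
          refine Finset.sum_congr rfl fun k _ => ?_
          rw [EE_mul,
            show ((k:ℤ)+1) * ((Nl ℓ:ℤ) + (β:ℤ)*(nn ℓ:ℤ) + (c:ℤ) + 1) +
                -(((k:ℤ)+1) * ((Nl ℓ':ℤ) + (β':ℤ)*(nn ℓ':ℤ) + (c':ℤ) + 1)) =
              (((Nl ℓ + ((β:ℕ) * nn ℓ + (c:ℕ)) : ℕ) : ℤ) -
               ((Nl ℓ' + ((β':ℕ) * nn ℓ' + (c':ℕ)) : ℕ) : ℤ)) * ((k:ℤ)+1) from by
              push_cast
              ring]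
      _ = ∑ c : Fin (nn ℓ), ∑ c' : Fin (nn ℓ'),
            (1/(nn ℓ:ℂ) * (1/(nn ℓ':ℂ))) *
            ((EE (((c:ℤ)+1) * ((γ:ℤ) - (β:ℤ))) (nn ℓ) *
              EE (-(((c':ℤ)+1) * ((γ':ℤ) - (β':ℤ)))) (nn ℓ')) *
             (if ((Nl ℓ + ((β:ℕ) * nn ℓ + (c:ℕ)) : ℕ) : ℤ) -
                 ((Nl ℓ' + ((β':ℕ) * nn ℓ' + (c':ℕ)) : ℕ) : ℤ) = 0 then (N:ℂ) else 0)) := by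
          refine Finset.sum_congr rfl fun c _ => Finset.sum_congr rfl fun c' _ => ?_
          rw [EE_sum_eq_ite N hNpos _
            (by have := hbd ℓ β c; have := hbd ℓ' β' c'; omega)
            (by have := hbd ℓ β c; have := hbd ℓ' β' c'; omega)]
      _ = if ℓ = ℓ' then
            (if (β:ℕ) = (β':ℕ) ∧ (γ:ℕ) = (γ':ℕ) then (N:ℂ) / (nn ℓ : ℂ) else 0)
          else 0 := by
          by_cases hll : ℓ = ℓ'
          · subst hll
            rw [if_pos rfl]
            by_cases hbb : (β:ℕ) = (β':ℕ)
            · have hb : β = β' := Fin.ext hbb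
              subst hb
              calc ∑ c : Fin (nn ℓ), ∑ c' : Fin (nn ℓ),
                    (1/(nn ℓ:ℂ) * (1/(nn ℓ:ℂ))) *
                    ((EE (((c:ℤ)+1) * ((γ:ℤ) - (β:ℤ))) (nn ℓ) *
                      EE (-(((c':ℤ)+1) * ((γ':ℤ) - (β:ℤ)))) (nn ℓ)) *
                     (if ((Nl ℓ + ((β:ℕ) * nn ℓ + (c:ℕ)) : ℕ) : ℤ) -
                         ((Nl ℓ + ((β:ℕ) * nn ℓ + (c':ℕ)) : ℕ) : ℤ) = 0 then (N:ℂ) else 0))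
                  = ∑ c : Fin (nn ℓ),
                    (1/(nn ℓ:ℂ) * (1/(nn ℓ:ℂ))) *
                    (EE (((γ:ℤ) - (γ':ℤ)) * ((c:ℤ)+1)) (nn ℓ) * (N:ℂ)) := by
                    refine Finset.sum_congr rfl fun c _ => ?_
                    rw [Finset.sum_eq_single c]
                    · rw [if_pos (by omega), EE_mul,
                        show ((c:ℤ)+1) * ((γ:ℤ) - (β:ℤ)) + -(((c:ℤ)+1) * ((γ':ℤ) - (β:ℤ))) =
                          ((γ:ℤ) - (γ':ℤ)) * ((c:ℤ)+1) from by ring]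
                    · intro c' _ hne
                      rw [if_neg (by
                        intro hcon
                        exact hne (Fin.ext (by omega)))]
                      rw [mul_zero, mul_zero]
                    · intro h
                      exact absurd (Finset.mem_univ c) h
                _ = (1/(nn ℓ:ℂ) * (1/(nn ℓ:ℂ)) * (N:ℂ)) *
                      ∑ c : Fin (nn ℓ), EE (((γ:ℤ) - (γ':ℤ)) * ((c:ℤ)+1)) (nn ℓ) := by
                    rw [Finset.mul_sum]
                    refine Finset.sum_congr rfl fun c _ => ?_
                    ring
                _ = if (β:ℕ) = (β:ℕ) ∧ (γ:ℕ) = (γ':ℕ) then (N:ℂ) / (nn ℓ : ℂ) else 0 := by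
                    rw [EE_sum_eq_ite (nn ℓ) hn _ (by omega) (by omega)]
                    by_cases hgg : (γ:ℕ) = (γ':ℕ)
                    · rw [if_pos (by omega), if_pos ⟨rfl, hgg⟩]
                      field_simp
                    · rw [if_neg (by omega), if_neg (by simp [hgg])]
                      rw [mul_zero]
            · rw [if_neg (fun h => hbb h.1)]
              refine Finset.sum_eq_zero fun c _ => Finset.sum_eq_zero fun c' _ => ?_
              rw [if_neg (by
                intro hcon
                have hEq : Nl ℓ + ((β:ℕ) * nn ℓ + (c:ℕ)) = Nl ℓ + ((β':ℕ) * nn ℓ + (c':ℕ)) := by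
                  omega
                exact hbb (hinj ℓ ℓ β c β' c' hEq).2.1)]
              rw [mul_zero, mul_zero]
          · rw [if_neg hll]
            refine Finset.sum_eq_zero fun c _ => Finset.sum_eq_zero fun c' _ => ?_
            rw [if_neg (by
              intro hcon
              have hEq : Nl ℓ + ((β:ℕ) * nn ℓ + (c:ℕ)) = Nl ℓ' + ((β':ℕ) * nn ℓ' + (c':ℕ)) := by
                omega
              exact hll (hinj ℓ ℓ' β c β' c' hEq).1)]
            rw [mul_zero, mul_zero]
  -- cleaned versions of hU and hΦ
  have hU0 : ∀ (k : Fin N) (i i' : (ℓ : Fin p) × (Fin (m ℓ) × Fin (nn ℓ))),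
      i.1 ≠ i'.1 → U k i i' = 0 := by
    intro k i i' h
    rw [hU, dif_neg h]
  have hU' : ∀ (k : Fin N) (ℓ : Fin p) (q q' : Fin (m ℓ) × Fin (nn ℓ)),
      U k ⟨ℓ, q⟩ ⟨ℓ, q'⟩ = if q.1 = q'.1 then Ublk k ℓ q.2 q'.2 else 0 := by
    intro k ℓ q q'
    rw [hU]
    simp
  have hΦ0 : ∀ X (i i' : (ℓ : Fin p) × (Fin (m ℓ) × Fin (nn ℓ))),
      i.1 ≠ i'.1 → Φ X i i' = 0 := by
    intro X i i' h
    rw [hΦ, dif_neg h]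
  have hΦ' : ∀ X (ℓ : Fin p) (q q' : Fin (m ℓ) × Fin (nn ℓ)),
      Φ X ⟨ℓ, q⟩ ⟨ℓ, q'⟩ =
        if q.2 = q'.2 then (1/(nn ℓ:ℂ)) * ∑ c : Fin (nn ℓ), X ⟨ℓ, (q.1, c)⟩ ⟨ℓ, (q'.1, c)⟩
        else 0 := by
    intro X ℓ q q'
    rw [hΦ]
    simp
  have hNC : (N : ℂ) ≠ 0 := Nat.cast_ne_zero.mpr hNpos.ne'
  -- unitarity of U k
  have hUnit : ∀ k, (U k)ᴴ * U k = 1 := by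
    intro k
    ext i i'
    rw [Matrix.mul_apply, Matrix.one_apply]
    simp only [Matrix.conjTranspose_apply]
    rw [← Finset.univ_sigma_univ, Finset.sum_sigma]
    obtain ⟨ℓ, α, β⟩ := i
    obtain ⟨ℓ', α', β'⟩ := i'
    by_cases hll : ℓ = ℓ'
    · subst hll
      rw [Finset.sum_eq_single ℓ]
      · rw [Fintype.sum_prod_type]
        by_cases haa : α = α'
        · subst haa
          calc ∑ a'' : Fin (m ℓ), ∑ b'' : Fin (nn ℓ),
                (starRingEnd ℂ) (U k ⟨ℓ, (a'', b'')⟩ ⟨ℓ, (α, β)⟩) *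
                  U k ⟨ℓ, (a'', b'')⟩ ⟨ℓ, (α, β')⟩
              = ∑ a'' : Fin (m ℓ),
                (if a'' = α then
                  ∑ b'' : Fin (nn ℓ),
                    (starRingEnd ℂ) (Ublk k ℓ b'' β) * Ublk k ℓ b'' β' else 0) := by
                refine Finset.sum_congr rfl fun a'' _ => ?_
                by_cases h1 : a'' = α
                · subst h1
                  rw [if_pos rfl]
                  refine Finset.sum_congr rfl fun b'' _ => ?_
                  rw [hU', hU']
                  simp
                · rw [if_neg h1]
                  refine Finset.sum_eq_zero fun b'' _ => ?_
                  rw [hU', hU']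
                  simp [h1]
            _ = ∑ b'' : Fin (nn ℓ), (starRingEnd ℂ) (Ublk k ℓ b'' β) * Ublk k ℓ b'' β' := by
                rw [Finset.sum_ite_eq' Finset.univ α
                  (fun _ => ∑ b'' : Fin (nn ℓ), (starRingEnd ℂ) (Ublk k ℓ b'' β) * Ublk k ℓ b'' β')]
                rw [if_pos (Finset.mem_univ α)]
            _ = if (⟨ℓ, (α, β)⟩ : (ℓ : Fin p) × (Fin (m ℓ) × Fin (nn ℓ))) = ⟨ℓ, (α, β')⟩ then 1
                else 0 := by
                rw [hrow]
                by_cases hb : β = β'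
                · subst hb
                  rw [if_pos rfl, if_pos rfl]
                · rw [if_neg hb, if_neg (by simp [Sigma.mk.inj_iff, hb])]
        · rw [if_neg (by simp [Sigma.mk.inj_iff, haa])]
          refine Finset.sum_eq_zero fun a'' _ => Finset.sum_eq_zero fun b'' _ => ?_
          rw [hU', hU']
          by_cases h1 : a'' = α
          · subst h1
            rw [if_neg haa, mul_zero]
          · rw [if_neg h1]
            simp
      · intro ℓ'' _ hne
        refine Finset.sum_eq_zero fun q'' _ => ?_
        rw [hU0 k ⟨ℓ'', q''⟩ ⟨ℓ, (α, β)⟩ hne, star_zero, zero_mul]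
      · intro h
        exact absurd (Finset.mem_univ ℓ) h
    · rw [if_neg (fun hcon => hll (congrArg Sigma.fst hcon))]
      refine Finset.sum_eq_zero fun ℓ'' _ => Finset.sum_eq_zero fun q'' _ => ?_
      by_cases h1 : ℓ'' = ℓ
      · rw [hU0 k ⟨ℓ'', q''⟩ ⟨ℓ', (α', β')⟩ (by simp only; rw [h1]; exact hll), mul_zero]
      · rw [hU0 k ⟨ℓ'', q''⟩ ⟨ℓ, (α, β)⟩ h1, star_zero, zero_mul]
  refine ⟨fun k => ⟨hUnit k, mul_eq_one_comm.mp (hUnit k)⟩, fun X => ?_⟩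
  -- the channel identity
  have hentry : ∀ (k : Fin N) (ℓ ℓ' : Fin p) (α : Fin (m ℓ)) (β : Fin (nn ℓ))
      (α' : Fin (m ℓ')) (β' : Fin (nn ℓ')),
      (U k * X * (U k)ᴴ) ⟨ℓ, (α, β)⟩ ⟨ℓ', (α', β')⟩ =
        ∑ γ : Fin (nn ℓ), ∑ γ' : Fin (nn ℓ'),
          Ublk k ℓ β γ * X ⟨ℓ, (α, γ)⟩ ⟨ℓ', (α', γ')⟩ * (starRingEnd ℂ) (Ublk k ℓ' β' γ') := by
    intro k ℓ ℓ' α β α' β'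
    have hL : ∀ j' : (ℓ : Fin p) × (Fin (m ℓ) × Fin (nn ℓ)),
        (U k * X) ⟨ℓ, (α, β)⟩ j' = ∑ γ : Fin (nn ℓ), Ublk k ℓ β γ * X ⟨ℓ, (α, γ)⟩ j' := by
      intro j'
      rw [Matrix.mul_apply, ← Finset.univ_sigma_univ, Finset.sum_sigma]
      rw [Finset.sum_eq_single ℓ]
      · rw [Fintype.sum_prod_type]
        rw [Finset.sum_eq_single α]
        · refine Finset.sum_congr rfl fun γ _ => ?_
          rw [hU']
          simp
        · intro a'' _ hne
          refine Finset.sum_eq_zero fun b'' _ => ?_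
          rw [hU']
          simp only
          rw [if_neg (fun h => hne h.symm), zero_mul]
        · intro h
          exact absurd (Finset.mem_univ α) h
      · intro ℓ'' _ hne
        refine Finset.sum_eq_zero fun q'' _ => ?_
        rw [hU0 k ⟨ℓ, (α, β)⟩ ⟨ℓ'', q''⟩ (fun h => hne h.symm), zero_mul]
      · intro h
        exact absurd (Finset.mem_univ ℓ) h
    rw [Matrix.mul_apply]
    simp only [Matrix.conjTranspose_apply]
    rw [← Finset.univ_sigma_univ, Finset.sum_sigma]
    rw [Finset.sum_eq_single ℓ']
    · rw [Fintype.sum_prod_type]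
      rw [Finset.sum_eq_single α']
      · calc ∑ γ' : Fin (nn ℓ'),
              (U k * X) ⟨ℓ, (α, β)⟩ ⟨ℓ', (α', γ')⟩ *
                (starRingEnd ℂ) (U k ⟨ℓ', (α', β')⟩ ⟨ℓ', (α', γ')⟩)
            = ∑ γ' : Fin (nn ℓ'), ∑ γ : Fin (nn ℓ),
              Ublk k ℓ β γ * X ⟨ℓ, (α, γ)⟩ ⟨ℓ', (α', γ')⟩ *
                (starRingEnd ℂ) (Ublk k ℓ' β' γ') := by
              refine Finset.sum_congr rfl fun γ' _ => ?_
              rw [hL, hU']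
              simp only [eq_self_iff_true, if_true]
              rw [Finset.sum_mul]
          _ = ∑ γ : Fin (nn ℓ), ∑ γ' : Fin (nn ℓ'),
              Ublk k ℓ β γ * X ⟨ℓ, (α, γ)⟩ ⟨ℓ', (α', γ')⟩ *
                (starRingEnd ℂ) (Ublk k ℓ' β' γ') := Finset.sum_comm
      · intro a'' _ hne
        refine Finset.sum_eq_zero fun b'' _ => ?_
        rw [hU']
        simp only
        rw [if_neg (fun h : α' = a'' => hne h.symm), star_zero, mul_zero]
      · intro h
        exact absurd (Finset.mem_univ α') h
    · intro ℓ'' _ hne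
      refine Finset.sum_eq_zero fun q'' _ => ?_
      rw [hU0 k ⟨ℓ', (α', β')⟩ ⟨ℓ'', q''⟩ (fun h => hne h.symm), star_zero, mul_zero]
    · intro h
      exact absurd (Finset.mem_univ ℓ') h
  ext i i'
  obtain ⟨ℓ, α, β⟩ := i
  obtain ⟨ℓ', α', β'⟩ := i'
  simp only [Matrix.smul_apply, Matrix.sum_apply, smul_eq_mul]
  rw [Finset.sum_congr rfl fun k _ => hentry k ℓ ℓ' α β α' β']
  rw [Finset.sum_comm]
  rw [Finset.sum_congr rfl fun γ _ => Finset.sum_comm]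
  have hswap : ∀ (γ : Fin (nn ℓ)) (γ' : Fin (nn ℓ')),
      ∑ k : Fin N, Ublk k ℓ β γ * X ⟨ℓ, (α, γ)⟩ ⟨ℓ', (α', γ')⟩ *
        (starRingEnd ℂ) (Ublk k ℓ' β' γ') =
      X ⟨ℓ, (α, γ)⟩ ⟨ℓ', (α', γ')⟩ *
        (if ℓ = ℓ' then
          (if (β:ℕ) = (β':ℕ) ∧ (γ:ℕ) = (γ':ℕ) then (N:ℂ) / (nn ℓ : ℂ) else 0)
        else 0) := by
    intro γ γ'
    rw [← hC ℓ ℓ' β γ β' γ', Finset.mul_sum]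
    refine Finset.sum_congr rfl fun k _ => ?_
    ring
  rw [Finset.sum_congr rfl fun γ _ => Finset.sum_congr rfl fun γ' _ => hswap γ γ']
  by_cases hll : ℓ = ℓ'
  · subst hll
    rw [hΦ']
    simp only [if_true]
    by_cases hbb : β = β'
    · subst hbb
      rw [if_pos rfl]
      have hcol : ∀ γ : Fin (nn ℓ),
          ∑ γ' : Fin (nn ℓ), X ⟨ℓ, (α, γ)⟩ ⟨ℓ, (α', γ')⟩ *
            (if (β:ℕ) = (β:ℕ) ∧ (γ:ℕ) = (γ':ℕ) then (N:ℂ) / (nn ℓ : ℂ) else 0) =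
          X ⟨ℓ, (α, γ)⟩ ⟨ℓ, (α', γ)⟩ * ((N:ℂ) / (nn ℓ : ℂ)) := by
        intro γ
        rw [Finset.sum_eq_single γ]
        · rw [if_pos ⟨rfl, rfl⟩]
        · intro γ' _ hne
          rw [if_neg (fun hcon => hne (Fin.ext hcon.2).symm), mul_zero]
        · intro h
          exact absurd (Finset.mem_univ γ) h
      rw [Finset.sum_congr rfl fun γ _ => hcol γ]
      rw [Finset.mul_sum, Finset.mul_sum]
      refine Finset.sum_congr rfl fun γ _ => ?_
      have hnC : (nn ℓ : ℂ) ≠ 0 := Nat.cast_ne_zero.mpr (hnn ℓ).ne'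
      field_simp
    · rw [if_neg hbb]
      symm
      rw [Finset.mul_sum]
      refine Finset.sum_eq_zero fun γ _ => ?_
      rw [Finset.mul_sum]
      refine Finset.sum_eq_zero fun γ' _ => ?_
      rw [if_neg (fun hcon => hbb (Fin.ext hcon.1)), mul_zero, mul_zero]
  · rw [hΦ0 X ⟨ℓ, (α, β)⟩ ⟨ℓ', (α', β')⟩ hll]
    symm
    rw [Finset.mul_sum]
    refine Finset.sum_eq_zero fun γ _ => ?_
    rw [Finset.mul_sum]
    refine Finset.sum_eq_zero fun γ' _ => ?_
    rw [if_neg hll, mul_zero, mul_zero]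
end

section
/- Let p be a positive integer, let m_1, …, m_p and n_1, …, n_p be positive integers, set d = m_1 n_1 + ⋯ + m_p n_p and N = n_1² + ⋯ + n_p². Index ℂ^d by triples (ℓ, a, b) with ℓ ∈ {1,…,p}, a ∈ {1,…,m_ℓ}, b ∈ {1,…,n_ℓ}, and define Φ : M_d(ℂ) → M_d(ℂ) by Φ(X)((ℓ,a,b),(ℓ',a',b')) = δ_{ℓ,ℓ'}·δ_{b,b'}·(1/n_ℓ)·Σ_{c=1}^{n_ℓ} X((ℓ,a,c),(ℓ,a',c)). Suppose M is a positive integer, q_1, …, q_M are strictly positive reals with Σ_k q_k = 1, and V_1, …, V_M ∈ M_d(ℂ) are unitary matrices such that Φ(X) = Σ_{k=1}^{M} q_k V_k X V_kᴴ for every X ∈ M_d(ℂ). Then M ≥ N. -/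
open Matrix BigOperators

lemma aux_mul_std {α : Type*} [Fintype α] [DecidableEq α] (A : Matrix α α ℂ) (i b j c : α) :
    (A * single i b (1:ℂ) * Aᴴ) j c = A j i * star (A c b) := by
  rw [Matrix.mul_apply, Finset.sum_eq_single b]
  · simp
  · intro u _ hu
    simp [hu]
  · simp

/-- Any mixed-unitary decomposition with strictly positive weights of
the channel `Φ = (𝟙_{M_{m₁}} ⊗ Ω_{n₁}) ⊕ ⋯ ⊕ (𝟙_{M_{m_p}} ⊗ Ω_{n_p})` uses at least
`N = n₁² + ⋯ + n_p²` unitaries. -/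
theorem stmt_12 (p : ℕ) (hp : 0 < p)
    (m nn : Fin p → ℕ) (hm : ∀ ℓ, 0 < m ℓ) (hnn : ∀ ℓ, 0 < nn ℓ)
    (N : ℕ) (hN : N = ∑ ℓ : Fin p, (nn ℓ) ^ 2)
    (Φ : Matrix ((ℓ : Fin p) × (Fin (m ℓ) × Fin (nn ℓ))) ((ℓ : Fin p) × (Fin (m ℓ) × Fin (nn ℓ))) ℂ →
         Matrix ((ℓ : Fin p) × (Fin (m ℓ) × Fin (nn ℓ))) ((ℓ : Fin p) × (Fin (m ℓ) × Fin (nn ℓ))) ℂ)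
    (hΦ : ∀ X (i i' : (ℓ : Fin p) × (Fin (m ℓ) × Fin (nn ℓ))),
      Φ X i i' =
        if h : i.1 = i'.1 then
          (if Fin.cast (congrArg nn h) i.2.2 = i'.2.2 then
            (1 / (nn i'.1 : ℂ)) *
              ∑ c : Fin (nn i'.1),
                X ⟨i'.1, (Fin.cast (congrArg m h) i.2.1, c)⟩ ⟨i'.1, (i'.2.1, c)⟩
          else 0)
        else 0)
    (M : ℕ) (hM : 0 < M)
    (q : Fin M → ℝ) (hq : ∀ k, 0 < q k) (hq1 : ∑ k, q k = 1)
    (V : Fin M →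
      Matrix ((ℓ : Fin p) × (Fin (m ℓ) × Fin (nn ℓ))) ((ℓ : Fin p) × (Fin (m ℓ) × Fin (nn ℓ))) ℂ)
    (hV : ∀ k, (V k)ᴴ * V k = 1 ∧ V k * (V k)ᴴ = 1)
    (hdec : ∀ X, Φ X = ∑ k, (q k : ℂ) • (V k * X * (V k)ᴴ)) :
    N ≤ M := by
  classical
  let e : ((ℓ : Fin p) × (Fin (nn ℓ) × Fin (nn ℓ))) → ((ℓ : Fin p) × (Fin (m ℓ) × Fin (nn ℓ))) :=
    fun t => ⟨t.1, (⟨0, hm t.1⟩, t.2.1)⟩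
  let e' : ((ℓ : Fin p) × (Fin (nn ℓ) × Fin (nn ℓ))) → ((ℓ : Fin p) × (Fin (m ℓ) × Fin (nn ℓ))) :=
    fun t => ⟨t.1, (⟨0, hm t.1⟩, t.2.2)⟩
  let Y : ((ℓ : Fin p) × (Fin (nn ℓ) × Fin (nn ℓ))) →
      Matrix ((ℓ : Fin p) × (Fin (m ℓ) × Fin (nn ℓ))) ((ℓ : Fin p) × (Fin (m ℓ) × Fin (nn ℓ))) ℂ := fun t =>
    Matrix.of fun j i => Φ (single i (e' t) 1) j (e t)
  have hYmem : ∀ t, Y t ∈ Submodule.span ℂ (Set.range V) := by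
    intro t
    have hYt : Y t = ∑ k, ((q k : ℂ) * star (V k (e t) (e' t))) • V k := by
      apply Matrix.ext; intro j i
      simp only [Y, Matrix.of_apply, hdec, Matrix.sum_apply, Matrix.smul_apply, smul_eq_mul]
      refine Finset.sum_congr rfl fun k _ => ?_
      rw [aux_mul_std]
      ring
    rw [hYt]
    exact Submodule.sum_mem _ fun k _ =>
      Submodule.smul_mem _ _ (Submodule.subset_span (Set.mem_range_self k))
  have hYli : LinearIndependent ℂ Y := by
    rw [Fintype.linearIndependent_iff]
    intro g hg t
    have h0 := congrFun (congrFun hg (e t)) (e' t)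
    simp only [Matrix.sum_apply, Matrix.smul_apply, smul_eq_mul, Matrix.zero_apply] at h0
    have hone : ∀ t', g t' * Y t' (e t) (e' t) =
        if t' = t then g t * (1 / (nn t.1 : ℂ)) else 0 := by
      intro t'
      rcases t with ⟨ℓ, β, β'⟩
      rcases t' with ⟨ℓ', γ, γ'⟩
      simp only [Y, Matrix.of_apply, e, e']
      rw [hΦ]
      by_cases hll : ℓ = ℓ'
      · subst hll
        rw [dif_pos rfl]
        simp only [Fin.cast_refl, id_eq]
        by_cases h1 : β = γ
        · subst h1
          rw [if_pos rfl]
          by_cases h2 : β' = γ'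
          · subst h2
            rw [if_pos rfl, Finset.sum_eq_single β']
            · simp
            · intro x _ hx
              rw [Matrix.single_apply_of_ne]
              simp [Sigma.mk.inj_iff, Ne.symm hx]
            · simp
          · rw [Finset.sum_eq_zero, mul_zero, mul_zero, if_neg]
            · simp only [Sigma.mk.inj_iff, heq_eq_eq, Prod.mk.injEq]
              rintro ⟨-, -, hgg⟩
              exact h2 hgg.symm
            · intro x _
              rw [Matrix.single_apply_of_ne]
              simp only [Sigma.mk.inj_iff, heq_eq_eq, Prod.mk.injEq]
              rintro ⟨⟨-, -, hb⟩, -, -, hg⟩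
              exact h2 (hb.trans hg.symm)
        · rw [if_neg (by simpa using fun h => h1 h), mul_zero, if_neg]
          simp only [Sigma.mk.inj_iff, heq_eq_eq, Prod.mk.injEq]
          rintro ⟨-, hbg, -⟩
          exact h1 hbg.symm
      · rw [dif_neg hll, mul_zero, if_neg]
        simp only [Sigma.mk.inj_iff]
        rintro ⟨hll', -⟩
        exact hll hll'.symm
    rw [Finset.sum_congr rfl (fun t' _ => hone t'), Finset.sum_ite_eq' _ t] at h0
    simp only [Finset.mem_univ, if_true] at h0
    rcases mul_eq_zero.mp h0 with h | h
    · exact h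
    · exfalso
      have : (nn t.1 : ℂ) ≠ 0 := Nat.cast_ne_zero.mpr (hnn t.1).ne'
      simp [this] at h
  have hcard : Fintype.card ((ℓ : Fin p) × (Fin (nn ℓ) × Fin (nn ℓ))) = N := by
    simp [hN, Fintype.card_sigma, sq]
  have h1 : Fintype.card ((ℓ : Fin p) × (Fin (nn ℓ) × Fin (nn ℓ))) ≤
      Module.finrank ℂ (Submodule.span ℂ (Set.range V)) := by
    have : LinearIndependent ℂ fun t => (⟨Y t, hYmem t⟩ :
        Submodule.span ℂ (Set.range V)) := by
      apply LinearIndependent.of_comp (Submodule.span ℂ (Set.range V)).subtype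
      exact hYli
    exact this.fintype_card_le_finrank
  have h2 : Module.finrank ℂ (Submodule.span ℂ (Set.range V)) ≤ M := by
    simpa [Set.finrank] using finrank_range_le_card V
  omega
end

section
/- Let n ≥ 2 be an integer. For each permutation σ of {1,…,n}, let V_σ ∈ M_n(ℂ) be the permutation matrix with entries V_σ(i,j) = 1 if i = σ(j) and 0 otherwise. Then for every X ∈ M_n(ℂ), (1/n!) Σ_{σ ∈ Sym(n)} V_σ X V_σᴴ = ⟨J_n/n, X⟩·(J_n/n) + ⟨1_n − J_n/n, X⟩·(1/(n−1))·(1_n − J_n/n), where ⟨A,B⟩ = Tr(AᴴB) and J_n is the n×n all-ones matrix. -/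
open Matrix BigOperators

lemma sum_perm_comp {n : ℕ} (f : Fin n → Fin n → ℂ) (τ : Equiv.Perm (Fin n)) (i j : Fin n) :
    ∑ σ : Equiv.Perm (Fin n), f (σ (τ i)) (σ (τ j)) = ∑ σ : Equiv.Perm (Fin n), f (σ i) (σ j) := by
  exact Fintype.sum_equiv (Equiv.mulRight τ) _ _ (fun σ => by simp)

lemma exists_perm_two {n : ℕ} {i j i' j' : Fin n} (hij : i ≠ j) (h' : i' ≠ j') :
    ∃ τ : Equiv.Perm (Fin n), τ i = i' ∧ τ j = j' := by
  set j₀ := Equiv.swap i i' j with hj0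
  have h1 : i' ≠ j₀ := by
    intro h
    apply hij
    have : Equiv.swap i i' i = Equiv.swap i i' j := by
      rw [Equiv.swap_apply_left, ← hj0, ← h]
    exact (Equiv.swap i i').injective this
  refine ⟨(Equiv.swap i i').trans (Equiv.swap j₀ j'), ?_, ?_⟩
  · simp only [Equiv.trans_apply, Equiv.swap_apply_left]
    exact Equiv.swap_apply_of_ne_of_ne h1 h'
  · simp only [Equiv.trans_apply, ← hj0, Equiv.swap_apply_left]

lemma diag_sum {n : ℕ} (f : Fin n → Fin n → ℂ) (i : Fin n) :
    (n : ℂ) * ∑ σ : Equiv.Perm (Fin n), f (σ i) (σ i) =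
      (n.factorial : ℂ) * ∑ k, f k k := by
  have h1 : ∀ i' : Fin n, ∑ σ : Equiv.Perm (Fin n), f (σ i') (σ i')
      = ∑ σ : Equiv.Perm (Fin n), f (σ i) (σ i) := by
    intro i'
    have := sum_perm_comp f (Equiv.swap i i') i i
    simpa using this
  calc (n : ℂ) * ∑ σ : Equiv.Perm (Fin n), f (σ i) (σ i)
      = ∑ i' : Fin n, ∑ σ : Equiv.Perm (Fin n), f (σ i') (σ i') := by
        simp [h1, Finset.sum_const, Finset.card_univ]
    _ = ∑ σ : Equiv.Perm (Fin n), ∑ i' : Fin n, f (σ i') (σ i') := Finset.sum_comm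
    _ = ∑ σ : Equiv.Perm (Fin n), ∑ k, f k k := by
        refine Finset.sum_congr rfl fun σ _ => ?_
        exact Equiv.sum_comp σ (fun k => f k k)
    _ = (n.factorial : ℂ) * ∑ k, f k k := by
        simp [Finset.sum_const, Finset.card_univ, Fintype.card_perm]

lemma offdiag_sum {n : ℕ} (f : Fin n → Fin n → ℂ) {i j : Fin n} (hij : i ≠ j) :
    (n : ℂ) * ((n : ℂ) - 1) * ∑ σ : Equiv.Perm (Fin n), f (σ i) (σ j) =
      (n.factorial : ℂ) * (∑ k, ∑ l, f k l) - (n.factorial : ℂ) * ∑ k, f k k := by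
  have hn1 : 1 ≤ n := i.pos
  set T : Fin n → Fin n → ℂ := fun a b => ∑ σ : Equiv.Perm (Fin n), f (σ a) (σ b) with hT
  have hinv : ∀ i' j' : Fin n, i' ≠ j' → T i' j' = T i j := by
    intro i' j' h'
    obtain ⟨τ, h1, h2⟩ := exists_perm_two hij h'
    have := sum_perm_comp f τ i j
    rw [h1, h2] at this
    simpa [hT] using this
  have hrow : ∀ i' : Fin n, ∑ j' : Fin n, T i' j' = T i' i' + ((n - 1 : ℕ) : ℂ) * T i j := by
    intro i'
    rw [← Finset.add_sum_erase _ _ (Finset.mem_univ i')]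
    congr 1
    rw [Finset.sum_congr rfl (fun j' hj' => hinv i' j' (Finset.ne_of_mem_erase hj').symm)]
    rw [Finset.sum_const, Finset.card_erase_of_mem (Finset.mem_univ i'), Finset.card_univ,
      Fintype.card_fin, nsmul_eq_mul]
  have htotal : ∑ i' : Fin n, ∑ j' : Fin n, T i' j' =
      (n.factorial : ℂ) * (∑ k, ∑ l, f k l) := by
    have : ∀ σ : Equiv.Perm (Fin n), ∑ i' : Fin n, ∑ j' : Fin n, f (σ i') (σ j')
        = ∑ k, ∑ l, f k l := by
      intro σ
      rw [Equiv.sum_comp σ (fun k => ∑ j' : Fin n, f k (σ j'))]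
      exact Finset.sum_congr rfl fun k _ => Equiv.sum_comp σ (fun l => f k l)
    calc ∑ i' : Fin n, ∑ j' : Fin n, T i' j'
        = ∑ σ : Equiv.Perm (Fin n), ∑ i' : Fin n, ∑ j' : Fin n, f (σ i') (σ j') := by
          simp only [hT]
          have h2 : ∀ i' : Fin n, ∑ j' : Fin n, ∑ σ : Equiv.Perm (Fin n), f (σ i') (σ j')
              = ∑ σ : Equiv.Perm (Fin n), ∑ j' : Fin n, f (σ i') (σ j') :=
            fun i' => Finset.sum_comm
          rw [Finset.sum_congr rfl fun i' _ => h2 i']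
          exact Finset.sum_comm
      _ = ∑ σ : Equiv.Perm (Fin n), ∑ k, ∑ l, f k l := Finset.sum_congr rfl fun σ _ => this σ
      _ = (n.factorial : ℂ) * (∑ k, ∑ l, f k l) := by
          simp [Finset.sum_const, Finset.card_univ, Fintype.card_perm]
  have hdiag : ∑ i' : Fin n, T i' i' = (n.factorial : ℂ) * ∑ k, f k k := by
    calc ∑ i' : Fin n, T i' i' = ∑ σ : Equiv.Perm (Fin n), ∑ i' : Fin n, f (σ i') (σ i') :=
        Finset.sum_comm
      _ = ∑ σ : Equiv.Perm (Fin n), ∑ k, f k k :=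
        Finset.sum_congr rfl fun σ _ => Equiv.sum_comp σ (fun k => f k k)
      _ = (n.factorial : ℂ) * ∑ k, f k k := by
          simp [Finset.sum_const, Finset.card_univ, Fintype.card_perm]
  have hsum : ∑ i' : Fin n, ∑ j' : Fin n, T i' j'
      = (∑ i' : Fin n, T i' i') + (n : ℂ) * (((n - 1 : ℕ) : ℂ) * T i j) := by
    rw [Finset.sum_congr rfl (fun i' _ => hrow i'), Finset.sum_add_distrib]
    simp [Finset.sum_const, Finset.card_univ, mul_comm]
  rw [htotal, hdiag] at hsum
  have hc : ((n - 1 : ℕ) : ℂ) = (n : ℂ) - 1 := by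
    push_cast [Nat.cast_sub hn1]; ring
  rw [hc] at hsum
  simp only [hT] at hsum
  linear_combination -hsum

/-- The permutation-twirling channel equals
`X ↦ ⟨J/n, X⟩·(J/n) + ⟨1 − J/n, X⟩·(1/(n−1))·(1 − J/n)`. -/
theorem stmt_14 (n : ℕ) (hn : 2 ≤ n)
    (V : Equiv.Perm (Fin n) → Matrix (Fin n) (Fin n) ℂ)
    (hV : ∀ (σ : Equiv.Perm (Fin n)) (i j : Fin n), V σ i j = if i = σ j then 1 else 0)
    (J : Matrix (Fin n) (Fin n) ℂ) (hJ : ∀ i j, J i j = 1) :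
    ∀ X : Matrix (Fin n) (Fin n) ℂ,
      (1 / (n.factorial : ℂ)) • ∑ σ : Equiv.Perm (Fin n), V σ * X * (V σ)ᴴ =
        Matrix.trace (((1 / (n : ℂ)) • J)ᴴ * X) • ((1 / (n : ℂ)) • J) +
        (Matrix.trace ((1 - (1 / (n : ℂ)) • J)ᴴ * X) * (1 / ((n : ℂ) - 1))) •
          (1 - (1 / (n : ℂ)) • J) := by
  intro X
  have hn0 : (n : ℂ) ≠ 0 := Nat.cast_ne_zero.mpr (by omega)
  have hn1 : (n : ℂ) - 1 ≠ 0 := sub_ne_zero.mpr (by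
    exact_mod_cast (by omega : n ≠ 1))
  have hfac : (n.factorial : ℂ) ≠ 0 := Nat.cast_ne_zero.mpr n.factorial_ne_zero
  -- entries of the twirl
  have hentry : ∀ (σ : Equiv.Perm (Fin n)) (i j : Fin n),
      (V σ * X * (V σ)ᴴ) i j = X (σ⁻¹ i) (σ⁻¹ j) := by
    intro σ i j
    have h1 : ∀ l, (V σ * X) i l = X (σ⁻¹ i) l := by
      intro l
      rw [Matrix.mul_apply, Finset.sum_eq_single (σ⁻¹ i)]
      · rw [hV]; simp
      · intro k _ hk
        rw [hV, if_neg, zero_mul]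
        intro h; apply hk; rw [h]; simp
      · simp
    rw [Matrix.mul_apply, Finset.sum_eq_single (σ⁻¹ j)]
    · rw [h1, Matrix.conjTranspose_apply, hV]; simp
    · intro l _ hl
      rw [Matrix.conjTranspose_apply, hV, if_neg]
      · simp
      · intro h; apply hl; rw [h]; simp
    · simp
  -- traces
  have ht1 : Matrix.trace (((1 / (n : ℂ)) • J)ᴴ * X)
      = (1 / (n : ℂ)) * ∑ k, ∑ l, X k l := by
    rw [Matrix.trace]
    simp only [Matrix.diag, Matrix.mul_apply, Matrix.conjTranspose_apply,
      Matrix.smul_apply, hJ, smul_eq_mul, mul_one, star_mul', star_one]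
    rw [Finset.sum_comm]
    simp [Finset.mul_sum, Finset.sum_mul, star_div₀, star_one, star_natCast, mul_comm]
  have ht2 : Matrix.trace ((1 - (1 / (n : ℂ)) • J)ᴴ * X)
      = (∑ k, X k k) - (1 / (n : ℂ)) * ∑ k, ∑ l, X k l := by
    rw [Matrix.conjTranspose_sub, Matrix.sub_mul, Matrix.trace_sub,
      Matrix.conjTranspose_one, Matrix.one_mul, ht1, Matrix.trace]
    rfl
  ext i j
  simp only [Matrix.smul_apply, Matrix.sum_apply, Matrix.add_apply, Matrix.sub_apply,
    Matrix.one_apply, hJ, smul_eq_mul, mul_one, ht1, ht2]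
  rw [Finset.sum_congr rfl (fun σ _ => hentry σ i j)]
  have hre : ∑ σ : Equiv.Perm (Fin n), X (σ⁻¹ i) (σ⁻¹ j)
      = ∑ σ : Equiv.Perm (Fin n), X (σ i) (σ j) := by
    exact Fintype.sum_equiv (Equiv.inv (Equiv.Perm (Fin n))) _ _ (fun σ => rfl)
  rw [hre]
  rcases eq_or_ne i j with h | h
  · subst h
    have hd := diag_sum (fun a b => X a b) i
    simp only [if_pos rfl]
    have hSd : ∑ σ : Equiv.Perm (Fin n), X (σ i) (σ i)
        = (n.factorial : ℂ) * (∑ k, X k k) / n := by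
      rw [eq_div_iff hn0]; linear_combination hd
    rw [hSd]; field_simp; simp only [ite_true, mul_one]; ring
  · have ho := offdiag_sum (fun a b => X a b) h
    simp only [if_neg h]
    have hSo : ∑ σ : Equiv.Perm (Fin n), X (σ i) (σ j)
        = ((n.factorial : ℂ) * (∑ k, ∑ l, X k l) - (n.factorial : ℂ) * ∑ k, X k k)
          / ((n : ℂ) * ((n : ℂ) - 1)) := by
      rw [eq_div_iff (mul_ne_zero hn0 hn1)]; linear_combination ho
    rw [hSo]; field_simp; ring
end

section
/- Let n be a positive integer and set N = (n−1)² + 1. For each permutation σ of {1,…,n}, let V_σ ∈ M_n(ℂ) be the permutation matrix with entries V_σ(i,j) = 1 if i = σ(j) and 0 otherwise. Then there exist unitary matrices W_1, …, W_N ∈ M_n(ℂ) such that (1/n!) Σ_{σ ∈ Sym(n)} V_σ X V_σᴴ = (1/N) Σ_{k=1}^{N} W_k X W_kᴴ for every X ∈ M_n(ℂ). -/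
open Matrix BigOperators Complex

noncomputable def s15ω (m : ℕ) : ℂ := Complex.exp (2 * Real.pi * Complex.I / m)

lemma s15ω_zpow (m : ℕ) (c : ℤ) : (s15ω m) ^ c = Complex.exp (2 * Real.pi * Complex.I * c / m) := by
  rw [s15ω, ← Complex.exp_int_mul]
  ring_nf

lemma s15ω_zpow_eq_one_iff (m : ℕ) (hm : 0 < m) (c : ℤ) :
    (s15ω m) ^ c = 1 ↔ (m : ℤ) ∣ c := by
  rw [s15ω_zpow, Complex.exp_eq_one_iff]
  have hm' : (m : ℂ) ≠ 0 := Nat.cast_ne_zero.2 hm.ne'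
  have hπ : (Real.pi : ℂ) ≠ 0 := by simpa using Real.pi_ne_zero
  have h2 : (2 : ℂ) * Real.pi * Complex.I ≠ 0 := by
    simp [hπ, Complex.I_ne_zero]
  constructor
  · rintro ⟨k, hk⟩
    refine ⟨k, ?_⟩
    have : (c : ℂ) = m * k := by
      field_simp at hk
      -- hk should now be linear
      have h3 : (2 : ℂ) * Real.pi * Complex.I * c = 2 * Real.pi * Complex.I * (m * k) := by
        rw [hk]
      exact mul_left_cancel₀ h2 h3
    exact_mod_cast this
  · rintro ⟨k, rfl⟩
    refine ⟨k, ?_⟩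
    field_simp
    push_cast; ring

lemma s15_geom {z : ℂ} {m : ℕ} (hz : z ≠ 1) (h : z ^ m = 1) :
    ∑ j : Fin m, z ^ (j : ℕ) = 0 := by
  rw [Fin.sum_univ_eq_sum_range, geom_sum_eq hz, h]
  simp

lemma s15_conj (m : ℕ) (c : ℤ) :
    (starRingEnd ℂ) ((s15ω m) ^ c) = (s15ω m) ^ (-c) := by
  rw [s15ω_zpow, s15ω_zpow, ← Complex.exp_conj]
  congr 1
  have : (starRingEnd ℂ) (2 * Real.pi * Complex.I * c / m)
      = (2 * Real.pi * (-Complex.I) * c / m) := by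
    simp [_root_.map_mul, map_div₀, Complex.conj_I, Complex.conj_ofNat]
  rw [this]; push_cast; ring

lemma s15_sum_zero (m : ℕ) (hm : 0 < m) (c : ℤ) (h : ¬ (m : ℤ) ∣ c) :
    ∑ j : Fin m, (s15ω m) ^ (c * (j : ℕ)) = 0 := by
  have hz : (s15ω m) ^ c ≠ 1 := fun hc => h ((s15ω_zpow_eq_one_iff m hm c).1 hc)
  have hzm : ((s15ω m) ^ c) ^ m = 1 := by
    have hm1 : (s15ω m) ^ (m : ℤ) = 1 := (s15ω_zpow_eq_one_iff m hm m).2 dvd_rfl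
    rw [← zpow_natCast, ← _root_.zpow_mul, mul_comm, _root_.zpow_mul, hm1, _root_.one_zpow]
  have := s15_geom hz hzm
  rw [← this]
  apply Finset.sum_congr rfl
  intro j _
  rw [← zpow_natCast ((s15ω m) ^ c), ← _root_.zpow_mul]

lemma s15_not_dvd {m : ℕ} {c : ℤ} (h1 : c ≠ 0) (h2 : |c| < m) : ¬ (m : ℤ) ∣ c := by
  intro hd
  exact h1 (Int.eq_zero_of_abs_lt_dvd hd h2)

lemma s15ω_ne_zero (m : ℕ) : s15ω m ≠ 0 := Complex.exp_ne_zero _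

noncomputable def s15F (n : ℕ) : Matrix (Fin n) (Fin n) ℂ :=
  Matrix.of fun a b => (s15ω n) ^ ((a.val : ℤ) * b.val) / Real.sqrt n

lemma s15F_orth (n : ℕ) (hn : 0 < n) (a b : Fin n) :
    ∑ c, s15F n a c * (starRingEnd ℂ) (s15F n b c) = if a = b then 1 else 0 := by
  have hsq : (Real.sqrt n : ℂ) * (Real.sqrt n : ℂ) = n := by
    rw [← Complex.ofReal_mul, Real.mul_self_sqrt (Nat.cast_nonneg n)]
    simp
  have hn' : (n : ℂ) ≠ 0 := Nat.cast_ne_zero.2 hn.ne'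
  have key : ∀ c : Fin n, s15F n a c * (starRingEnd ℂ) (s15F n b c)
      = (s15ω n) ^ (((a.val : ℤ) - b.val) * c.val) / n := by
    intro c
    rw [s15F]
    simp only [Matrix.of_apply, map_div₀, s15_conj, Complex.conj_ofReal]
    rw [div_mul_div_comm, ← zpow_add₀ (s15ω_ne_zero n), hsq]
    congr 1
    ring_nf
  rw [Finset.sum_congr rfl (fun c _ => key c), ← Finset.sum_div]
  by_cases hab : a = b
  · subst hab
    simp [sub_self, hn']
  · have hab' : (a.val : ℤ) - b.val ≠ 0 := by
      have := Fin.val_ne_of_ne hab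
      omega
    have habs : |(a.val : ℤ) - b.val| < n := by
      have := a.isLt; have := b.isLt
      rw [abs_lt]; omega
    rw [s15_sum_zero n hn _ (s15_not_dvd hab' habs)]
    simp [hab]

lemma s15F_symm (n : ℕ) (a b : Fin n) : s15F n a b = s15F n b a := by
  simp only [s15F, Matrix.of_apply]
  congr 1
  ring_nf

lemma s15F_mul_conjT (n : ℕ) (hn : 0 < n) : s15F n * (s15F n)ᴴ = 1 := by
  ext a b
  rw [Matrix.mul_apply, Matrix.one_apply]
  simpa using s15F_orth n hn a b

lemma s15F_conjT_mul (n : ℕ) (hn : 0 < n) : (s15F n)ᴴ * s15F n = 1 := by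
  ext a b
  rw [Matrix.mul_apply, Matrix.one_apply]
  have : ∀ c, (s15F n)ᴴ a c * s15F n c b
      = (starRingEnd ℂ) (s15F n a c * (starRingEnd ℂ) (s15F n b c)) := by
    intro c
    rw [Matrix.conjTranspose_apply, s15F_symm n c a, s15F_symm n c b]
    simp [mul_comm]
  rw [Finset.sum_congr rfl (fun c _ => this c), ← map_sum, s15F_orth n hn a b]
  by_cases hab : a = b <;> simp [hab]

noncomputable def s15C (n : ℕ) (k : ℕ) : Matrix (Fin n) (Fin n) ℂ :=
  Matrix.of fun p q =>
    if p.val = 0 then (if q.val = 0 then 1 else 0)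
    else if q.val = 0 then 0
    else (s15ω (n-1)) ^ (((p.val : ℤ) - 1) * ((q.val : ℤ) - 1)) *
         (s15ω ((n-1)^2+1)) ^ ((k : ℤ) * (((p.val : ℤ) - 1) * ((n : ℤ) - 1) + q.val)) /
         Real.sqrt (n-1)

lemma s15_sum_shift (n : ℕ) (hn : 2 ≤ n) (h : ℕ → ℂ) :
    ∑ p : Fin n, (if p.val = 0 then 0 else h (p.val - 1)) = ∑ j : Fin (n-1), h j.val := by
  cases n with
  | zero => omega
  | succ m =>
    rw [Fin.sum_univ_succ]
    simp [Fin.val_succ]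

lemma s15_sqrtd (n : ℕ) (hn : 2 ≤ n) :
    (Real.sqrt (n-1) : ℂ) * (Real.sqrt (n-1) : ℂ) = ((n:ℂ) - 1) := by
  rw [← Complex.ofReal_mul, Real.mul_self_sqrt (by
    have : (2:ℝ) ≤ n := by exact_mod_cast hn
    linarith)]
  push_cast
  ring

lemma s15C_prod_ne (n : ℕ) (hn : 2 ≤ n) (k : ℕ) (p a b : Fin n)
    (hp : p.val ≠ 0) (ha : a.val ≠ 0) (hb : b.val ≠ 0) :
    (starRingEnd ℂ) (s15C n k p a) * s15C n k p b =
      (s15ω (n-1)) ^ (((b.val : ℤ) - a.val) * ((p.val : ℤ) - 1)) *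
        (s15ω ((n-1)^2+1)) ^ ((k : ℤ) * ((b.val : ℤ) - a.val)) / ((n:ℂ) - 1) := by
  simp only [s15C, Matrix.of_apply, if_neg hp, if_neg ha, if_neg hb,
    map_div₀, _root_.map_mul, s15_conj, Complex.conj_ofReal]
  rw [div_mul_div_comm]
  rw [show ((Real.sqrt ((n:ℝ)-1) : ℂ) * (Real.sqrt ((n:ℝ)-1) : ℂ)) = ((n:ℂ) - 1) from
    s15_sqrtd n hn]
  have hω := s15ω_ne_zero (n-1)
  have hζ := s15ω_ne_zero ((n-1)^2+1)
  rw [mul_mul_mul_comm, ← zpow_add₀ hω, ← zpow_add₀ hζ]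
  congr 2 <;> ring

lemma s15C_prod_ne' (n : ℕ) (hn : 2 ≤ n) (k : ℕ) (q a b : Fin n)
    (hq : q.val ≠ 0) (ha : a.val ≠ 0) (hb : b.val ≠ 0) :
    s15C n k a q * (starRingEnd ℂ) (s15C n k b q) =
      (s15ω (n-1)) ^ (((a.val : ℤ) - b.val) * ((q.val : ℤ) - 1)) *
        (s15ω ((n-1)^2+1)) ^ ((k : ℤ) * (((a.val : ℤ) - b.val) * ((n:ℤ) - 1))) / ((n:ℂ) - 1) := by
  simp only [s15C, Matrix.of_apply, if_neg hq, if_neg ha, if_neg hb,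
    map_div₀, _root_.map_mul, s15_conj, Complex.conj_ofReal]
  rw [div_mul_div_comm]
  rw [show ((Real.sqrt ((n:ℝ)-1) : ℂ) * (Real.sqrt ((n:ℝ)-1) : ℂ)) = ((n:ℂ) - 1) from
    s15_sqrtd n hn]
  have hω := s15ω_ne_zero (n-1)
  have hζ := s15ω_ne_zero ((n-1)^2+1)
  rw [mul_mul_mul_comm, ← zpow_add₀ hω, ← zpow_add₀ hζ]
  congr 2 <;> ring

lemma s15C_conjT_mul (n : ℕ) (hn : 2 ≤ n) (k : ℕ) :
    (s15C n k)ᴴ * s15C n k = 1 := by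
  haveI : NeZero n := ⟨by omega⟩
  ext a b
  rw [Matrix.mul_apply, Matrix.one_apply]
  simp only [Matrix.conjTranspose_apply, Complex.star_def]
  by_cases ha : a.val = 0 <;> by_cases hb : b.val = 0
  · have hab : a = b := Fin.val_injective (ha.trans hb.symm)
    subst hab
    rw [if_pos rfl]
    have key : ∀ p : Fin n, (starRingEnd ℂ) (s15C n k p a) * s15C n k p a
        = if p = 0 then 1 else 0 := by
      intro p
      by_cases hp : p.val = 0
      · have : p = 0 := Fin.val_injective hp
        simp [s15C, this, ha, -Fin.val_eq_zero_iff]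
      · have : p ≠ 0 := fun h => hp (by simp [h])
        simp [s15C, hp, ha, this, -Fin.val_eq_zero_iff]
    rw [Finset.sum_congr rfl fun p _ => key p, Finset.sum_ite_eq' Finset.univ (0 : Fin n)]
    simp
  · have hab : a ≠ b := fun h => hb (h ▸ ha)
    rw [if_neg hab]
    apply Finset.sum_eq_zero
    intro p _
    by_cases hp : p.val = 0
    · simp [s15C, hp, hb, -Fin.val_eq_zero_iff]
    · simp [s15C, hp, ha, -Fin.val_eq_zero_iff]
  · have hab : a ≠ b := fun h => ha (h ▸ hb)
    rw [if_neg hab]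
    apply Finset.sum_eq_zero
    intro p _
    by_cases hp : p.val = 0
    · simp [s15C, hp, ha, -Fin.val_eq_zero_iff]
    · simp [s15C, hp, hb, -Fin.val_eq_zero_iff]
  · -- both a, b nonzero
    set c : ℤ := (b.val : ℤ) - a.val with hc
    set K : ℂ := (s15ω ((n-1)^2+1)) ^ ((k : ℤ) * c) / ((n:ℂ) - 1) with hK
    have key : ∀ p : Fin n, (starRingEnd ℂ) (s15C n k p a) * s15C n k p b
        = if p.val = 0 then 0 else (s15ω (n-1)) ^ (c * ((p.val - 1 : ℕ) : ℤ)) * K := by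
      intro p
      by_cases hp : p.val = 0
      · simp [s15C, hp, ha, -Fin.val_eq_zero_iff]
      · rw [if_neg hp, s15C_prod_ne n hn k p a b hp ha hb]
        have hcast : ((p.val - 1 : ℕ) : ℤ) = (p.val : ℤ) - 1 := by omega
        rw [hcast, hK, mul_div_assoc]
    rw [Finset.sum_congr rfl fun p _ => key p,
      s15_sum_shift n hn (fun j => (s15ω (n-1)) ^ (c * (j : ℤ)) * K), ← Finset.sum_mul]
    by_cases hab : a = b
    · subst hab
      have hc0 : c = 0 := by omega
      rw [if_pos rfl]
      simp only [hc0, zero_mul, zpow_zero, hK, mul_zero]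
      rw [Finset.sum_const, Finset.card_univ, Fintype.card_fin]
      have h1n : (1:ℕ) ≤ n := by omega
      have hd : ((n - 1 : ℕ) : ℂ) = (n : ℂ) - 1 := by
        rw [Nat.cast_sub h1n]; simp
      have hne : ((n : ℂ) - 1) ≠ 0 := by
        rw [← hd]
        exact_mod_cast Nat.cast_ne_zero.2 (by omega : n - 1 ≠ 0)
      simp [hd, hne]
    · rw [if_neg hab]
      have hc0 : c ≠ 0 := fun h => hab (Fin.val_injective (by omega))
      have habs : |c| < (n-1 : ℕ) := by
        have := a.isLt; have := b.isLt
        rw [abs_lt]; omega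
      rw [s15_sum_zero (n-1) (by omega) c (s15_not_dvd hc0 habs), zero_mul]

lemma s15C_mul_conjT (n : ℕ) (hn : 2 ≤ n) (k : ℕ) :
    s15C n k * (s15C n k)ᴴ = 1 := by
  haveI : NeZero n := ⟨by omega⟩
  ext a b
  rw [Matrix.mul_apply, Matrix.one_apply]
  simp only [Matrix.conjTranspose_apply, Complex.star_def]
  by_cases ha : a.val = 0 <;> by_cases hb : b.val = 0
  · have hab : a = b := Fin.val_injective (ha.trans hb.symm)
    subst hab
    rw [if_pos rfl]
    have key : ∀ q : Fin n, s15C n k a q * (starRingEnd ℂ) (s15C n k a q)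
        = if q = 0 then 1 else 0 := by
      intro q
      by_cases hq : q.val = 0
      · have : q = 0 := Fin.val_injective hq
        simp [s15C, this, ha, -Fin.val_eq_zero_iff]
      · have hq' : q ≠ 0 := fun h => hq (by simp [h])
        simp [s15C, hq, ha, hq', -Fin.val_eq_zero_iff]
    rw [Finset.sum_congr rfl fun q _ => key q, Finset.sum_ite_eq' Finset.univ (0 : Fin n)]
    simp
  · have hab : a ≠ b := fun h => hb (h ▸ ha)
    rw [if_neg hab]
    apply Finset.sum_eq_zero
    intro q _
    by_cases hq : q.val = 0
    · simp [s15C, hq, hb, -Fin.val_eq_zero_iff]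
    · simp [s15C, hq, ha, -Fin.val_eq_zero_iff]
  · have hab : a ≠ b := fun h => ha (h ▸ hb)
    rw [if_neg hab]
    apply Finset.sum_eq_zero
    intro q _
    by_cases hq : q.val = 0
    · simp [s15C, hq, ha, -Fin.val_eq_zero_iff]
    · simp [s15C, hq, hb, -Fin.val_eq_zero_iff]
  · set c : ℤ := (a.val : ℤ) - b.val with hc
    set K : ℂ := (s15ω ((n-1)^2+1)) ^ ((k : ℤ) * (c * ((n:ℤ) - 1))) / ((n:ℂ) - 1) with hK
    have key : ∀ q : Fin n, s15C n k a q * (starRingEnd ℂ) (s15C n k b q)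
        = if q.val = 0 then 0 else (s15ω (n-1)) ^ (c * ((q.val - 1 : ℕ) : ℤ)) * K := by
      intro q
      by_cases hq : q.val = 0
      · simp [s15C, hq, ha, -Fin.val_eq_zero_iff]
      · rw [if_neg hq, s15C_prod_ne' n hn k q a b hq ha hb]
        have hcast : ((q.val - 1 : ℕ) : ℤ) = (q.val : ℤ) - 1 := by omega
        rw [hcast, hK, mul_div_assoc]
    rw [Finset.sum_congr rfl fun q _ => key q,
      s15_sum_shift n hn (fun j => (s15ω (n-1)) ^ (c * (j : ℤ)) * K), ← Finset.sum_mul]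
    by_cases hab : a = b
    · subst hab
      have hc0 : c = 0 := by omega
      rw [if_pos rfl]
      simp only [hc0, zero_mul, zpow_zero, hK, mul_zero]
      rw [Finset.sum_const, Finset.card_univ, Fintype.card_fin]
      have h1n : (1:ℕ) ≤ n := by omega
      have hd : ((n - 1 : ℕ) : ℂ) = (n : ℂ) - 1 := by
        rw [Nat.cast_sub h1n]; simp
      have hne : ((n : ℂ) - 1) ≠ 0 := by
        rw [← hd]
        exact_mod_cast Nat.cast_ne_zero.2 (by omega : n - 1 ≠ 0)
      simp [hd, hne]
    · rw [if_neg hab]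
      have hc0 : c ≠ 0 := fun h => hab (Fin.val_injective (by omega))
      have habs : |c| < (n-1 : ℕ) := by
        have := a.isLt; have := b.isLt
        rw [abs_lt]; omega
      rw [s15_sum_zero (n-1) (by omega) c (s15_not_dvd hc0 habs), zero_mul]

lemma s15_f_bound (n p q : ℤ) (hn : 2 ≤ n) (hp : 1 ≤ p) (hp2 : p ≤ n-1)
    (hq : 1 ≤ q) (hq2 : q ≤ n-1) :
    1 ≤ (p-1)*(n-1)+q ∧ (p-1)*(n-1)+q ≤ (n-1)^2 := by
  constructor
  · nlinarith
  · nlinarith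

lemma s15_f_inj (n p q p' q' : ℤ) (hn : 2 ≤ n) (hp : 1 ≤ p) (hp2 : p ≤ n-1)
    (hq : 1 ≤ q) (hq2 : q ≤ n-1) (hp' : 1 ≤ p') (hp'2 : p' ≤ n-1)
    (hq' : 1 ≤ q') (hq'2 : q' ≤ n-1)
    (h : (p-1)*(n-1)+q = (p'-1)*(n-1)+q') : p = p' ∧ q = q' := by
  have hD : (p - p') * (n-1) = q' - q := by nlinarith
  have h1 : p ≤ p' := by nlinarith
  have h2 : p' ≤ p := by nlinarith
  have : p = p' := le_antisymm h1 h2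
  refine ⟨this, ?_⟩
  subst this
  nlinarith

lemma s15C_prod_gen (n : ℕ) (hn : 2 ≤ n) (k : ℕ) (p q p' q' : Fin n)
    (hp : p.val ≠ 0) (hq : q.val ≠ 0) (hp' : p'.val ≠ 0) (hq' : q'.val ≠ 0) :
    s15C n k p q * (starRingEnd ℂ) (s15C n k p' q') =
      (s15ω (n-1)) ^ ((((p.val:ℤ)-1) * ((q.val:ℤ)-1)) - (((p'.val:ℤ)-1) * ((q'.val:ℤ)-1))) *
        (s15ω ((n-1)^2+1)) ^
          (((((p.val:ℤ)-1)*((n:ℤ)-1) + q.val) - ((((p'.val:ℤ)-1)*((n:ℤ)-1)) + q'.val)) * (k:ℤ))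
        / ((n:ℂ) - 1) := by
  simp only [s15C, Matrix.of_apply, if_neg hp, if_neg hq, if_neg hp', if_neg hq',
    map_div₀, _root_.map_mul, s15_conj, Complex.conj_ofReal]
  rw [div_mul_div_comm]
  rw [show ((Real.sqrt ((n:ℝ)-1) : ℂ) * (Real.sqrt ((n:ℝ)-1) : ℂ)) = ((n:ℂ) - 1) from
    s15_sqrtd n hn]
  have hω := s15ω_ne_zero (n-1)
  have hζ := s15ω_ne_zero ((n-1)^2+1)
  rw [mul_mul_mul_comm, ← zpow_add₀ hω, ← zpow_add₀ hζ]
  congr 2 <;> ring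

lemma s15_Ncast (n : ℕ) (hn : 2 ≤ n) : (((n-1)^2+1 : ℕ) : ℤ) = ((n:ℤ)-1)^2+1 := by
  have h1 : ((n-1 : ℕ) : ℤ) = (n:ℤ) - 1 := by omega
  push_cast [h1]
  ring

lemma s15C_ksum (n : ℕ) (hn : 2 ≤ n) (p q p' q' : Fin n) :
    ∑ k : Fin ((n-1)^2+1), s15C n k.val p q * (starRingEnd ℂ) (s15C n k.val p' q') =
      if p = p' ∧ q = q' then
        (if q.val = 0 then (if p.val = 0 then ((((n-1)^2+1 : ℕ)) : ℂ) else 0)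
         else if p.val = 0 then 0 else ((((n-1)^2+1 : ℕ)) : ℂ) / ((n:ℂ)-1))
      else 0 := by
  have hNpos : 0 < (n-1)^2+1 := Nat.succ_pos _
  have hNcast := s15_Ncast n hn
  by_cases hp : p.val = 0 <;> by_cases hp' : p'.val = 0
  · -- both p, p' zero
    have hpp' : p = p' := Fin.val_injective (hp.trans hp'.symm)
    by_cases hq : q.val = 0 <;> by_cases hq' : q'.val = 0
    · have hqq' : q = q' := Fin.val_injective (hq.trans hq'.symm)
      rw [if_pos ⟨hpp', hqq'⟩, if_pos hq, if_pos hp]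
      have : ∀ k : Fin ((n-1)^2+1),
          s15C n k.val p q * (starRingEnd ℂ) (s15C n k.val p' q') = 1 := by
        intro k; simp [s15C, hp, hp', hq, hq']
      rw [Finset.sum_congr rfl fun k _ => this k, Finset.sum_const, Finset.card_univ,
        Fintype.card_fin]
      simp
    · rw [if_neg (by rintro ⟨_, h⟩; exact hq' (h ▸ hq))]
      apply Finset.sum_eq_zero; intro k _; simp [s15C, hp', hq']
    · rw [if_neg (by rintro ⟨_, h⟩; exact hq (h ▸ hq'))]
      apply Finset.sum_eq_zero; intro k _; simp [s15C, hp, hq]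
    · by_cases hqq' : q = q'
      · rw [if_pos ⟨hpp', hqq'⟩, if_neg hq, if_pos hp]
        apply Finset.sum_eq_zero; intro k _; simp [s15C, hp, hq]
      · rw [if_neg (by rintro ⟨_, h⟩; exact hqq' h)]
        apply Finset.sum_eq_zero; intro k _; simp [s15C, hp, hq]
  · -- p zero, p' nonzero
    rw [if_neg (by rintro ⟨h, _⟩; exact hp' (h ▸ hp))]
    by_cases hq : q.val = 0
    · by_cases hq' : q'.val = 0
      · apply Finset.sum_eq_zero; intro k _; simp [s15C, hp', hq']
      · have key : ∀ k : Fin ((n-1)^2+1),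
            s15C n k.val p q * (starRingEnd ℂ) (s15C n k.val p' q') =
              (s15ω ((n-1)^2+1)) ^
                  ((-((((p'.val:ℤ)-1))*((n:ℤ)-1) + (q'.val:ℤ))) * (k.val : ℤ)) *
                ((s15ω (n-1)) ^ (-(((p'.val:ℤ)-1) * ((q'.val:ℤ)-1))) / Real.sqrt ((n:ℝ)-1)) := by
          intro k
          simp only [s15C, Matrix.of_apply, if_pos hp, if_pos hq, if_neg hp', if_neg hq',
            map_div₀, _root_.map_mul, s15_conj, Complex.conj_ofReal, one_mul]
          rw [show (-((k.val:ℤ) * ((((p'.val:ℤ)-1))*((n:ℤ)-1) + (q'.val:ℤ)))) =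
              (-((((p'.val:ℤ)-1))*((n:ℤ)-1) + (q'.val:ℤ))) * (k.val : ℤ) from by ring,
            mul_div_assoc]
          ring
        rw [Finset.sum_congr rfl fun k _ => key k, ← Finset.sum_mul]
        have hb := s15_f_bound n p'.val q'.val (by exact_mod_cast hn)
          (by omega) (by have := p'.isLt; omega) (by omega) (by have := q'.isLt; omega)
        rw [s15_sum_zero ((n-1)^2+1) hNpos _ (s15_not_dvd (by
            intro h
            omega) (by
            rw [hNcast, abs_lt]
            constructor <;> [linarith [hb.2]; linarith [hb.1]]))]
        simp
    · apply Finset.sum_eq_zero; intro k _; simp [s15C, hp, hq]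
  · -- p nonzero, p' zero
    rw [if_neg (by rintro ⟨h, _⟩; exact hp (h ▸ hp'))]
    by_cases hq' : q'.val = 0
    · by_cases hq : q.val = 0
      · apply Finset.sum_eq_zero; intro k _; simp [s15C, hp, hq]
      · have key : ∀ k : Fin ((n-1)^2+1),
            s15C n k.val p q * (starRingEnd ℂ) (s15C n k.val p' q') =
              (s15ω ((n-1)^2+1)) ^
                  (((((p.val:ℤ)-1))*((n:ℤ)-1) + (q.val:ℤ)) * (k.val : ℤ)) *
                ((s15ω (n-1)) ^ ((((p.val:ℤ)-1) * ((q.val:ℤ)-1))) / Real.sqrt ((n:ℝ)-1)) := by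
          intro k
          simp only [s15C, Matrix.of_apply, if_pos hp', if_pos hq', if_neg hp, if_neg hq,
            _root_.map_one, mul_one]
          rw [show ((k.val:ℤ) * ((((p.val:ℤ)-1))*((n:ℤ)-1) + (q.val:ℤ))) =
              ((((p.val:ℤ)-1))*((n:ℤ)-1) + (q.val:ℤ)) * (k.val : ℤ) from by ring,
            mul_comm ((s15ω (n-1)) ^ ((((p.val:ℤ)-1) * ((q.val:ℤ)-1)))), mul_div_assoc]
        rw [Finset.sum_congr rfl fun k _ => key k, ← Finset.sum_mul]
        have hb := s15_f_bound n p.val q.val (by exact_mod_cast hn)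
          (by omega) (by have := p.isLt; omega) (by omega) (by have := q.isLt; omega)
        rw [s15_sum_zero ((n-1)^2+1) hNpos _ (s15_not_dvd (by
            intro h
            omega) (by
            rw [hNcast, abs_lt]
            constructor <;> [linarith [hb.1]; linarith [hb.2]]))]
        simp
    · apply Finset.sum_eq_zero; intro k _; simp [s15C, hp', hq']
  · -- both p, p' nonzero
    by_cases hq : q.val = 0
    · by_cases hqq' : q = q'
      · have hval : (if p = p' ∧ q = q' then
            (if q.val = 0 then (if p.val = 0 then ((((n-1)^2+1 : ℕ)) : ℂ) else 0)
             else if p.val = 0 then 0 else ((((n-1)^2+1 : ℕ)) : ℂ) / ((n:ℂ)-1))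
            else 0) = 0 := by
          by_cases h : p = p' ∧ q = q'
          · rw [if_pos h, if_pos hq, if_neg hp]
          · rw [if_neg h]
        rw [hval]
        apply Finset.sum_eq_zero; intro k _; simp [s15C, hp, hq]
      · rw [if_neg (by rintro ⟨_, h⟩; exact hqq' h)]
        apply Finset.sum_eq_zero; intro k _; simp [s15C, hp, hq]
    · by_cases hq' : q'.val = 0
      · rw [if_neg (by rintro ⟨_, h⟩; exact hq (h ▸ hq'))]
        apply Finset.sum_eq_zero; intro k _; simp [s15C, hp', hq']
      · -- all four relevant indices nonzero: main case
        have key : ∀ k : Fin ((n-1)^2+1),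
            s15C n k.val p q * (starRingEnd ℂ) (s15C n k.val p' q') =
              (s15ω ((n-1)^2+1)) ^
                (((((p.val:ℤ)-1)*((n:ℤ)-1) + (q.val:ℤ)) -
                  ((((p'.val:ℤ)-1)*((n:ℤ)-1)) + (q'.val:ℤ))) * (k.val:ℤ)) *
              ((s15ω (n-1)) ^ ((((p.val:ℤ)-1) * ((q.val:ℤ)-1)) -
                  (((p'.val:ℤ)-1) * ((q'.val:ℤ)-1))) / ((n:ℂ) - 1)) := by
          intro k
          rw [s15C_prod_gen n hn k.val p q p' q' hp hq hp' hq',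
            mul_comm ((s15ω (n-1)) ^ _), mul_div_assoc]
        rw [Finset.sum_congr rfl fun k _ => key k, ← Finset.sum_mul]
        have hb := s15_f_bound n p.val q.val (by exact_mod_cast hn)
          (by omega) (by have := p.isLt; omega) (by omega) (by have := q.isLt; omega)
        have hb' := s15_f_bound n p'.val q'.val (by exact_mod_cast hn)
          (by omega) (by have := p'.isLt; omega) (by omega) (by have := q'.isLt; omega)
        by_cases hpq : p = p' ∧ q = q'
        · obtain ⟨rfl, rfl⟩ := hpq
          rw [if_pos ⟨rfl, rfl⟩, if_neg hq, if_neg hp]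
          simp only [sub_self, zero_mul, zpow_zero, Finset.sum_const, Finset.card_univ,
            Fintype.card_fin, nsmul_eq_mul, mul_one, one_div, one_mul]
          rw [div_eq_mul_inv]
        · rw [if_neg hpq]
          have hne : ((((p.val:ℤ)-1)*((n:ℤ)-1) + (q.val:ℤ)) -
              ((((p'.val:ℤ)-1)*((n:ℤ)-1)) + (q'.val:ℤ))) ≠ 0 := by
            intro h
            have heq := s15_f_inj n p.val q.val p'.val q'.val (by exact_mod_cast hn)
              (by omega) (by have := p.isLt; omega) (by omega) (by have := q.isLt; omega)
              (by omega) (by have := p'.isLt; omega) (by omega) (by have := q'.isLt; omega)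
              (by linarith)
            exact hpq ⟨Fin.val_injective (by exact_mod_cast heq.1),
              Fin.val_injective (by exact_mod_cast heq.2)⟩
          rw [s15_sum_zero ((n-1)^2+1) hNpos _ (s15_not_dvd hne (by
            rw [hNcast, abs_lt]
            constructor <;> [linarith [hb.1, hb'.2]; linarith [hb.2, hb'.1]])), zero_mul]

open Finset in
lemma s15_card1 (n : ℕ) (i p p' : Fin n) :
    (univ.filter fun σ : Equiv.Perm (Fin n) => σ i = p).card =
    (univ.filter fun σ : Equiv.Perm (Fin n) => σ i = p').card := by
  apply Finset.card_bij' (fun σ _ => Equiv.swap p p' * σ) (fun σ _ => Equiv.swap p p' * σ)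
  · intro σ hσ
    simp only [mem_filter, mem_univ, true_and] at hσ ⊢
    simp [Equiv.Perm.mul_apply, hσ, Equiv.swap_apply_left]
  · intro σ hσ
    simp only [mem_filter, mem_univ, true_and] at hσ ⊢
    simp [Equiv.Perm.mul_apply, hσ, Equiv.swap_apply_right]
  · intro σ _
    simp [← mul_assoc]
  · intro σ _
    simp [← mul_assoc]

open Finset in
lemma s15_card1_val (n : ℕ) (i p : Fin n) :
    (univ.filter fun σ : Equiv.Perm (Fin n) => σ i = p).card * n = n.factorial := by
  have h0 : (univ : Finset (Equiv.Perm (Fin n))).card =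
      ∑ y : Fin n, (univ.filter fun σ : Equiv.Perm (Fin n) => σ i = y).card :=
    Finset.card_eq_sum_card_fiberwise (fun x _ => mem_univ _)
  rw [Finset.card_univ, Fintype.card_perm, Fintype.card_fin] at h0
  rw [Finset.sum_congr rfl (fun y _ => s15_card1 n i y p), Finset.sum_const,
    Finset.card_univ, Fintype.card_fin, smul_eq_mul] at h0
  rw [h0, mul_comm]

open Finset in
lemma s15_card2 (n : ℕ) (i j p q p' q' : Fin n) (hpq : p ≠ q) (hpq' : p' ≠ q') :
    (univ.filter fun σ : Equiv.Perm (Fin n) => σ i = p ∧ σ j = q).card =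
    (univ.filter fun σ : Equiv.Perm (Fin n) => σ i = p' ∧ σ j = q').card := by
  set q₁ : Fin n := Equiv.swap p p' q with hq₁
  have hq₁p' : q₁ ≠ p' := by
    intro h
    rw [hq₁] at h
    have := (Equiv.swap_apply_eq_iff).1 h
    rw [Equiv.swap_apply_right] at this
    exact hpq this.symm
  set τ : Equiv.Perm (Fin n) := Equiv.swap q₁ q' * Equiv.swap p p' with hτ
  have hτp : τ p = p' := by
    rw [hτ, Equiv.Perm.mul_apply, Equiv.swap_apply_left,
      Equiv.swap_apply_of_ne_of_ne (Ne.symm hq₁p') hpq']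
  have hτq : τ q = q' := by
    rw [hτ, Equiv.Perm.mul_apply, ← hq₁, Equiv.swap_apply_left]
  apply Finset.card_bij' (fun σ _ => τ * σ) (fun σ _ => τ⁻¹ * σ)
  · intro σ hσ
    simp only [mem_filter, mem_univ, true_and] at hσ ⊢
    constructor
    · rw [Equiv.Perm.mul_apply, hσ.1, hτp]
    · rw [Equiv.Perm.mul_apply, hσ.2, hτq]
  · intro σ hσ
    simp only [mem_filter, mem_univ, true_and] at hσ ⊢
    constructor
    · rw [Equiv.Perm.mul_apply, hσ.1, ← hτp]
      simp
    · rw [Equiv.Perm.mul_apply, hσ.2, ← hτq]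
      simp
  · intro σ _
    simp [← mul_assoc]
  · intro σ _
    simp [← mul_assoc]

open Finset in
lemma s15_card2_val (n : ℕ) (i j p q : Fin n) (hij : i ≠ j) (hpq : p ≠ q) :
    (univ.filter fun σ : Equiv.Perm (Fin n) => σ i = p ∧ σ j = q).card * (n * (n-1)) =
      n.factorial := by
  have h0 : (univ : Finset (Equiv.Perm (Fin n))).card =
      ∑ y : Fin n × Fin n,
        (univ.filter fun σ : Equiv.Perm (Fin n) => (σ i, σ j) = y).card :=
    Finset.card_eq_sum_card_fiberwise (fun x _ => mem_univ _)
  rw [Finset.card_univ, Fintype.card_perm, Fintype.card_fin] at h0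
  have hcong : ∀ y : Fin n × Fin n,
      (univ.filter fun σ : Equiv.Perm (Fin n) => (σ i, σ j) = y).card =
      if y.1 = y.2 then 0 else
        (univ.filter fun σ : Equiv.Perm (Fin n) => σ i = p ∧ σ j = q).card := by
    intro y
    by_cases hy : y.1 = y.2
    · rw [if_pos hy, Finset.card_eq_zero, Finset.filter_eq_empty_iff]
      intro σ _
      rw [Prod.ext_iff]
      rintro ⟨h1, h2⟩
      exact hij (σ.injective ((h1.trans hy).trans h2.symm))
    · rw [if_neg hy]
      have : (univ.filter fun σ : Equiv.Perm (Fin n) => (σ i, σ j) = y) =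
          (univ.filter fun σ : Equiv.Perm (Fin n) => σ i = y.1 ∧ σ j = y.2) := by
        apply Finset.filter_congr
        intro σ _
        simp [Prod.ext_iff]
      rw [this]
      exact s15_card2 n i j y.1 y.2 p q hy hpq
  rw [Finset.sum_congr rfl (fun y _ => hcong y)] at h0
  rw [Fintype.sum_prod_type] at h0
  have hinner : ∀ a : Fin n,
      (∑ b : Fin n, if a = b then 0 else
        (univ.filter fun σ : Equiv.Perm (Fin n) => σ i = p ∧ σ j = q).card) =
      (n - 1) * (univ.filter fun σ : Equiv.Perm (Fin n) => σ i = p ∧ σ j = q).card := by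
    intro a
    rw [Finset.sum_ite, Finset.sum_const, Finset.sum_const, smul_zero, zero_add, smul_eq_mul]
    congr 1
    have : (univ.filter fun b : Fin n => ¬ a = b) = univ.erase a := by
      ext b
      simp [Finset.mem_filter, Finset.mem_erase, ne_comm, eq_comm]
    rw [this, Finset.card_erase_of_mem (mem_univ a), Finset.card_univ, Fintype.card_fin]
  rw [Finset.sum_congr rfl (fun a _ => hinner a), Finset.sum_const, Finset.card_univ,
    Fintype.card_fin, smul_eq_mul] at h0
  rw [h0]
  ring

open Finset in
lemma s15_perm_sum_diag (n : ℕ) (X : Matrix (Fin n) (Fin n) ℂ) (i : Fin n) :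
    (n : ℂ) * ∑ σ : Equiv.Perm (Fin n), X (σ i) (σ i) =
      (n.factorial : ℂ) * ∑ p, X p p := by
  have h0 : ∑ σ : Equiv.Perm (Fin n), X (σ i) (σ i)
      = ∑ p : Fin n, ∑ σ ∈ univ.filter (fun σ : Equiv.Perm (Fin n) => σ i = p),
          X (σ i) (σ i) :=
    (Finset.sum_fiberwise_of_maps_to (fun x _ => mem_univ _) _).symm
  have hin : ∀ p : Fin n,
      (∑ σ ∈ univ.filter (fun σ : Equiv.Perm (Fin n) => σ i = p), X (σ i) (σ i))
        = ((univ.filter fun σ : Equiv.Perm (Fin n) => σ i = p).card : ℂ) * X p p := by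
    intro p
    rw [Finset.sum_congr rfl (fun σ hσ => by
      rw [(Finset.mem_filter.1 hσ).2]), Finset.sum_const, nsmul_eq_mul]
  rw [h0, Finset.sum_congr rfl (fun p _ => hin p), Finset.mul_sum, Finset.mul_sum]
  apply Finset.sum_congr rfl
  intro p _
  have hc := s15_card1_val n i p
  calc (n:ℂ) * (((univ.filter fun σ : Equiv.Perm (Fin n) => σ i = p).card : ℂ) * X p p)
      = ((((univ.filter fun σ : Equiv.Perm (Fin n) => σ i = p).card * n : ℕ)) : ℂ) * X p p := by
        push_cast; ring
    _ = (n.factorial : ℂ) * X p p := by rw [hc]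

open Finset in
lemma s15_perm_sum_off (n : ℕ) (X : Matrix (Fin n) (Fin n) ℂ) (i j : Fin n) (hij : i ≠ j) :
    ((n * (n-1) : ℕ) : ℂ) * ∑ σ : Equiv.Perm (Fin n), X (σ i) (σ j) =
      (n.factorial : ℂ) * ((∑ p, ∑ q, X p q) - ∑ p, X p p) := by
  have h0 : ∑ σ : Equiv.Perm (Fin n), X (σ i) (σ j)
      = ∑ y : Fin n × Fin n,
          ∑ σ ∈ univ.filter (fun σ : Equiv.Perm (Fin n) => (σ i, σ j) = y),
            X (σ i) (σ j) :=
    (Finset.sum_fiberwise_of_maps_to (fun x _ => mem_univ _) _).symm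
  have hin : ∀ y : Fin n × Fin n,
      (∑ σ ∈ univ.filter (fun σ : Equiv.Perm (Fin n) => (σ i, σ j) = y), X (σ i) (σ j))
        = ((univ.filter fun σ : Equiv.Perm (Fin n) => (σ i, σ j) = y).card : ℂ) * X y.1 y.2 := by
    intro y
    have h1 : ∀ σ ∈ univ.filter (fun σ : Equiv.Perm (Fin n) => (σ i, σ j) = y),
        X (σ i) (σ j) = X y.1 y.2 := by
      intro σ hσ
      have h2 := (Finset.mem_filter.1 hσ).2
      rw [Prod.ext_iff] at h2
      simp only [] at h2
      rw [show σ i = y.1 from h2.1, show σ j = y.2 from h2.2]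
    rw [Finset.sum_congr rfl h1, Finset.sum_const, nsmul_eq_mul]
  rw [h0, Finset.sum_congr rfl (fun y _ => hin y), Finset.mul_sum]
  have hterm : ∀ y : Fin n × Fin n,
      ((n * (n-1) : ℕ) : ℂ) *
        (((univ.filter fun σ : Equiv.Perm (Fin n) => (σ i, σ j) = y).card : ℂ) * X y.1 y.2)
      = if y.1 = y.2 then 0 else (n.factorial : ℂ) * X y.1 y.2 := by
    intro y
    by_cases hy : y.1 = y.2
    · rw [if_pos hy]
      have hz : (univ.filter fun σ : Equiv.Perm (Fin n) => (σ i, σ j) = y).card = 0 := by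
        rw [Finset.card_eq_zero, Finset.filter_eq_empty_iff]
        intro σ _
        rw [Prod.ext_iff]
        rintro ⟨h1, h2⟩
        exact hij (σ.injective ((h1.trans hy).trans h2.symm))
      rw [hz]
      simp
    · rw [if_neg hy]
      have hfilt : (univ.filter fun σ : Equiv.Perm (Fin n) => (σ i, σ j) = y) =
          (univ.filter fun σ : Equiv.Perm (Fin n) => σ i = y.1 ∧ σ j = y.2) := by
        apply Finset.filter_congr
        intro σ _
        simp [Prod.ext_iff]
      have hc := s15_card2_val n i j y.1 y.2 hij hy
      rw [hfilt]
      calc ((n * (n-1) : ℕ) : ℂ) *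
          (((univ.filter fun σ : Equiv.Perm (Fin n) => σ i = y.1 ∧ σ j = y.2).card : ℂ) *
            X y.1 y.2)
          = ((((univ.filter fun σ : Equiv.Perm (Fin n) => σ i = y.1 ∧ σ j = y.2).card *
              (n * (n-1)) : ℕ)) : ℂ) * X y.1 y.2 := by push_cast; ring
        _ = (n.factorial : ℂ) * X y.1 y.2 := by rw [hc]
  rw [Finset.sum_congr rfl (fun y _ => hterm y)]
  rw [Fintype.sum_prod_type]
  have hrow : ∀ p : Fin n,
      (∑ q : Fin n, if p = q then 0 else (n.factorial : ℂ) * X p q)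
        = (n.factorial : ℂ) * ((∑ q, X p q) - X p p) := by
    intro p
    have : ∀ q : Fin n, (if p = q then 0 else (n.factorial : ℂ) * X p q)
        = (n.factorial : ℂ) * X p q - (if p = q then (n.factorial : ℂ) * X p q else 0) := by
      intro q
      by_cases h : p = q <;> simp [h]
    rw [Finset.sum_congr rfl (fun q _ => this q), Finset.sum_sub_distrib,
      Finset.sum_ite_eq univ p (fun q => (n.factorial : ℂ) * X p q), if_pos (mem_univ p),
      ← Finset.mul_sum, ← mul_sub]
  rw [Finset.sum_congr rfl (fun p _ => hrow p), ← Finset.mul_sum, Finset.sum_sub_distrib]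

lemma s15_lhs (n : ℕ) (hn : 0 < n) (V : Equiv.Perm (Fin n) → Matrix (Fin n) (Fin n) ℂ)
    (hV : ∀ (σ : Equiv.Perm (Fin n)) (i j : Fin n), V σ i j = if i = σ j then 1 else 0)
    (X : Matrix (Fin n) (Fin n) ℂ) (a b : Fin n) :
    (∑ σ : Equiv.Perm (Fin n), V σ * X * (V σ)ᴴ) a b =
      if a = b then ((n.factorial : ℂ) / n) * ∑ p, X p p
      else ((n.factorial : ℂ) / (n * (n-1) : ℕ)) * ((∑ p, ∑ q, X p q) - ∑ p, X p p) := by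
  have hentry : ∀ σ : Equiv.Perm (Fin n), (V σ * X * (V σ)ᴴ) a b = X (σ⁻¹ a) (σ⁻¹ b) := by
    intro σ
    have hcond : ∀ p : Fin n, (a = σ p) = (p = σ⁻¹ a) := by
      intro p
      apply propext
      constructor
      · intro h; simp [h]
      · intro h; simp [h]
    have hcond2 : ∀ c : Fin n, (b = σ c) = (c = σ⁻¹ b) := by
      intro c
      apply propext
      constructor
      · intro h; simp [h]
      · intro h; simp [h]
    simp only [Matrix.mul_apply, Matrix.conjTranspose_apply, Complex.star_def, hV,
      hcond, hcond2, ite_mul, one_mul, zero_mul, Finset.sum_ite_eq', Finset.mem_univ,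
      if_true, apply_ite (starRingEnd ℂ), _root_.map_one, _root_.map_zero, mul_ite,
      mul_one, mul_zero]
  rw [Matrix.sum_apply, Finset.sum_congr rfl (fun σ _ => hentry σ)]
  have hswap : ∑ σ : Equiv.Perm (Fin n), X (σ⁻¹ a) (σ⁻¹ b)
      = ∑ σ : Equiv.Perm (Fin n), X (σ a) (σ b) := by
    apply Fintype.sum_equiv (Equiv.inv (Equiv.Perm (Fin n)))
    intro σ
    rfl
  rw [hswap]
  have hn' : (n : ℂ) ≠ 0 := Nat.cast_ne_zero.2 hn.ne'
  by_cases hab : a = b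
  · subst hab
    rw [if_pos rfl]
    have := s15_perm_sum_diag n X a
    rw [div_mul_eq_mul_div, eq_div_iff hn']
    linear_combination this
  · rw [if_neg hab]
    have h2n : 2 ≤ n := by
      have h1 := a.isLt
      have h2 := b.isLt
      have h3 : a.val ≠ b.val := Fin.val_ne_of_ne hab
      omega
    have hnn : ((n * (n-1) : ℕ) : ℂ) ≠ 0 := Nat.cast_ne_zero.2 (by
      have : 0 < n * (n - 1) := Nat.mul_pos (by omega) (by omega)
      omega)
    have := s15_perm_sum_off n X a b hab
    rw [div_mul_eq_mul_div, eq_div_iff hnn]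
    linear_combination this

lemma s15_stepB (n : ℕ) (hn : 2 ≤ n) (Y : Matrix (Fin n) (Fin n) ℂ) (p p' : Fin n) :
    (∑ k : Fin ((n-1)^2+1), s15C n k.val * Y * (s15C n k.val)ᴴ) p p' =
      if p = p' then
        (if p.val = 0 then ((((n-1)^2+1 : ℕ)) : ℂ) * ∑ q, (if q.val = 0 then Y q q else 0)
         else ((((n-1)^2+1 : ℕ)) : ℂ) / ((n:ℂ)-1) *
           ∑ q, (if q.val = 0 then 0 else Y q q))
      else 0 := by
  rw [Matrix.sum_apply]
  have hterm : ∀ k : Fin ((n-1)^2+1),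
      (s15C n k.val * Y * (s15C n k.val)ᴴ) p p' =
        ∑ q' : Fin n, ∑ q : Fin n,
          s15C n k.val p q * Y q q' * (starRingEnd ℂ) (s15C n k.val p' q') := by
    intro k
    simp only [Matrix.mul_apply, Matrix.conjTranspose_apply, Complex.star_def,
      Finset.sum_mul]
  rw [Finset.sum_congr rfl (fun k _ => hterm k), Finset.sum_comm]
  have hswap2 : ∀ q' : Fin n,
      (∑ k : Fin ((n-1)^2+1), ∑ q : Fin n,
        s15C n k.val p q * Y q q' * (starRingEnd ℂ) (s15C n k.val p' q')) =
      ∑ q : Fin n, Y q q' *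
        ∑ k : Fin ((n-1)^2+1), s15C n k.val p q * (starRingEnd ℂ) (s15C n k.val p' q') := by
    intro q'
    rw [Finset.sum_comm]
    apply Finset.sum_congr rfl
    intro q _
    rw [Finset.mul_sum]
    apply Finset.sum_congr rfl
    intro k _
    ring
  rw [Finset.sum_congr rfl (fun q' _ => hswap2 q')]
  have hinner : ∀ q' q : Fin n, Y q q' *
      (∑ k : Fin ((n-1)^2+1), s15C n k.val p q * (starRingEnd ℂ) (s15C n k.val p' q')) =
      if q = q' ∧ p = p' then
        Y q q' * (if q.val = 0 then (if p.val = 0 then ((((n-1)^2+1 : ℕ)) : ℂ) else 0)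
         else if p.val = 0 then 0 else ((((n-1)^2+1 : ℕ)) : ℂ) / ((n:ℂ)-1))
      else 0 := by
    intro q' q
    rw [s15C_ksum n hn p q p' q']
    by_cases h : p = p' ∧ q = q'
    · rw [if_pos h, if_pos (show q = q' ∧ p = p' from ⟨h.2, h.1⟩)]
    · rw [if_neg h, mul_zero, if_neg (fun hh : q = q' ∧ p = p' => h ⟨hh.2, hh.1⟩)]
  rw [Finset.sum_congr rfl (fun q' _ => Finset.sum_congr rfl (fun q _ => hinner q' q))]
  by_cases hpp' : p = p'
  · subst hpp'
    rw [if_pos rfl]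
    have hrow : ∀ q' : Fin n,
        (∑ q : Fin n, if q = q' ∧ p = p then
          Y q q' * (if q.val = 0 then (if p.val = 0 then ((((n-1)^2+1 : ℕ)) : ℂ) else 0)
           else if p.val = 0 then 0 else ((((n-1)^2+1 : ℕ)) : ℂ) / ((n:ℂ)-1))
          else 0) =
        Y q' q' * (if q'.val = 0 then (if p.val = 0 then ((((n-1)^2+1 : ℕ)) : ℂ) else 0)
           else if p.val = 0 then 0 else ((((n-1)^2+1 : ℕ)) : ℂ) / ((n:ℂ)-1)) := by
      intro q'
      have h1 : ∀ q : Fin n, (if q = q' ∧ p = p then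
          Y q q' * (if q.val = 0 then (if p.val = 0 then ((((n-1)^2+1 : ℕ)) : ℂ) else 0)
           else if p.val = 0 then 0 else ((((n-1)^2+1 : ℕ)) : ℂ) / ((n:ℂ)-1))
          else 0) = (if q = q' then
          Y q q' * (if q.val = 0 then (if p.val = 0 then ((((n-1)^2+1 : ℕ)) : ℂ) else 0)
           else if p.val = 0 then 0 else ((((n-1)^2+1 : ℕ)) : ℂ) / ((n:ℂ)-1))
          else 0) := by
        intro q
        by_cases h : q = q'
        · rw [if_pos ⟨h, rfl⟩, if_pos h]
        · rw [if_neg (by rintro ⟨hh, _⟩; exact h hh), if_neg h]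
      rw [Finset.sum_congr rfl (fun q _ => h1 q),
        Finset.sum_ite_eq' Finset.univ q', if_pos (Finset.mem_univ q')]
    rw [Finset.sum_congr rfl (fun q' _ => hrow q')]
    by_cases hp : p.val = 0
    · simp only [if_pos hp]
      rw [Finset.mul_sum]
      apply Finset.sum_congr rfl
      intro q' _
      by_cases h : q'.val = 0
      · rw [if_pos h, if_pos h]
        ring
      · rw [if_neg h, if_neg h]
        ring
    · simp only [if_neg hp]
      rw [Finset.mul_sum]
      apply Finset.sum_congr rfl
      intro q' _
      by_cases h : q'.val = 0
      · rw [if_pos h, if_pos h]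
        ring
      · rw [if_neg h, if_neg h]
        ring
  · rw [if_neg hpp']
    apply Finset.sum_eq_zero
    intro q' _
    apply Finset.sum_eq_zero
    intro q _
    rw [if_neg (by rintro ⟨_, h⟩; exact hpp' h)]

lemma s15_sum_ind (n : ℕ) (hn : 0 < n) (g : Fin n → ℂ) :
    ∑ p : Fin n, (if p.val = 0 then g p else 0) = g ⟨0, hn⟩ := by
  cases n with
  | zero => omega
  | succ m =>
    rw [Fin.sum_univ_succ]
    simp [Fin.val_succ]

lemma s15_trace_conj (n : ℕ) (hn : 2 ≤ n) (X : Matrix (Fin n) (Fin n) ℂ) :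
    ∑ q, ((s15F n)ᴴ * X * s15F n) q q = ∑ p, X p p := by
  have h : ((s15F n)ᴴ * X * s15F n).trace = X.trace := by
    rw [Matrix.mul_assoc, Matrix.trace_mul_comm, Matrix.mul_assoc,
      s15F_mul_conjT n (by omega), Matrix.mul_one]
  simpa [Matrix.trace, Matrix.diag] using h

lemma s15_F0 (n : ℕ) (hn : 2 ≤ n) (a b p : Fin n) (hp : p.val = 0) :
    s15F n a p * (starRingEnd ℂ) (s15F n b p) = 1 / n := by
  have h1 : s15F n a p = 1 / Real.sqrt n := by
    simp only [s15F, Matrix.of_apply, hp]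
    norm_num
  have h2 : s15F n b p = 1 / Real.sqrt n := by
    simp only [s15F, Matrix.of_apply, hp]
    norm_num
  rw [h1, h2]
  have hsq : (Real.sqrt n : ℂ) * (Real.sqrt n : ℂ) = n := by
    rw [← Complex.ofReal_mul, Real.mul_self_sqrt (Nat.cast_nonneg n)]
    simp
  rw [map_div₀, Complex.conj_ofReal, _root_.map_one, div_mul_div_comm, one_mul, hsq]

lemma s15_rhs (n : ℕ) (hn : 2 ≤ n) (X : Matrix (Fin n) (Fin n) ℂ) (a b : Fin n) :
    (∑ k : Fin ((n-1)^2+1),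
      (s15F n * s15C n k.val * (s15F n)ᴴ) * X * (s15F n * s15C n k.val * (s15F n)ᴴ)ᴴ) a b
    = ((((n-1)^2+1 : ℕ)) : ℂ) *
        (if a = b then (∑ p, X p p) / n
         else ((∑ p, ∑ q, X p q) - ∑ p, X p p) / ((n : ℂ) * ((n:ℂ)-1))) := by
  have hn0 : 0 < n := by omega
  set F := s15F n with hF
  set Y := Fᴴ * X * F with hYdef
  set N : ℕ := (n-1)^2+1 with hN
  -- Step 1: rewrite each summand
  have hW : ∀ k : Fin N, (F * s15C n k.val * Fᴴ) * X * (F * s15C n k.val * Fᴴ)ᴴ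
      = F * (s15C n k.val * Y * (s15C n k.val)ᴴ) * Fᴴ := by
    intro k
    simp only [Matrix.conjTranspose_mul, Matrix.conjTranspose_conjTranspose, hYdef,
      Matrix.mul_assoc]
  rw [Finset.sum_congr rfl (fun k _ => hW k), ← Matrix.sum_mul, ← Matrix.mul_sum]
  -- Step 2: the inner sum is the pinched matrix
  set t0 : ℂ := ∑ q, (if q.val = 0 then Y q q else 0) with ht0
  set t1 : ℂ := ∑ q, (if q.val = 0 then 0 else Y q q) with ht1
  have hO : ∀ p p' : Fin n, (∑ k : Fin N, s15C n k.val * Y * (s15C n k.val)ᴴ) p p' =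
      if p = p' then (if p.val = 0 then (N : ℂ) * t0 else (N : ℂ) / ((n:ℂ)-1) * t1) else 0 :=
    fun p p' => s15_stepB n hn Y p p'
  -- Step 3: entry computation
  rw [Matrix.mul_apply]
  have hrow : ∀ p' : Fin n, (F * ∑ k : Fin N, s15C n k.val * Y * (s15C n k.val)ᴴ) a p'
      = F a p' * (if p'.val = 0 then (N : ℂ) * t0 else (N : ℂ) / ((n:ℂ)-1) * t1) := by
    intro p'
    rw [Matrix.mul_apply]
    have : ∀ p : Fin n, F a p * (∑ k : Fin N, s15C n k.val * Y * (s15C n k.val)ᴴ) p p'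
        = if p = p' then F a p *
            (if p.val = 0 then (N : ℂ) * t0 else (N : ℂ) / ((n:ℂ)-1) * t1) else 0 := by
      intro p
      rw [hO p p']
      by_cases h : p = p'
      · rw [if_pos h, if_pos h]
      · rw [if_neg h, if_neg h, mul_zero]
    rw [Finset.sum_congr rfl (fun p _ => this p), Finset.sum_ite_eq' Finset.univ p',
      if_pos (Finset.mem_univ p')]
  have hsplit : ∀ p' : Fin n,
      F a p' * (if p'.val = 0 then (N : ℂ) * t0 else (N : ℂ) / ((n:ℂ)-1) * t1) *
        (Fᴴ) p' b
      = (if p'.val = 0 then (N : ℂ) * t0 * (F a p' * (starRingEnd ℂ) (F b p')) else 0) +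
        (if p'.val = 0 then 0 else
          (N : ℂ) / ((n:ℂ)-1) * t1 * (F a p' * (starRingEnd ℂ) (F b p'))) := by
    intro p'
    rw [Matrix.conjTranspose_apply, Complex.star_def]
    by_cases h : p'.val = 0
    · rw [if_pos h, if_pos h, if_pos h, add_zero]
      ring
    · rw [if_neg h, if_neg h, if_neg h, zero_add]
      ring
  rw [Finset.sum_congr rfl (fun p' _ => by rw [hrow p', hsplit p']),
    Finset.sum_add_distrib]
  -- First part
  rw [s15_sum_ind n hn0 _]
  rw [s15_F0 n hn a b ⟨0, hn0⟩ rfl]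
  -- Second part: complement sum
  have hcompl : ∑ p' : Fin n, (if p'.val = 0 then 0 else
      (N : ℂ) / ((n:ℂ)-1) * t1 * (F a p' * (starRingEnd ℂ) (F b p')))
      = (N : ℂ) / ((n:ℂ)-1) * t1 * ((if a = b then 1 else 0) - 1/n) := by
    have hsub : ∀ p' : Fin n, (if p'.val = 0 then 0 else
        (N : ℂ) / ((n:ℂ)-1) * t1 * (F a p' * (starRingEnd ℂ) (F b p')))
        = (N : ℂ) / ((n:ℂ)-1) * t1 * (F a p' * (starRingEnd ℂ) (F b p')) -
          (if p'.val = 0 then (N : ℂ) / ((n:ℂ)-1) * t1 *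
            (F a p' * (starRingEnd ℂ) (F b p')) else 0) := by
      intro p'
      by_cases h : p'.val = 0
      · rw [if_pos h, if_pos h]; ring
      · rw [if_neg h, if_neg h]; ring
    rw [Finset.sum_congr rfl (fun p' _ => hsub p'), Finset.sum_sub_distrib,
      s15_sum_ind n hn0 _, s15_F0 n hn a b ⟨0, hn0⟩ rfl, ← Finset.mul_sum,
      s15F_orth n hn0 a b]
    ring
  rw [hcompl]
  -- now express t0 and t1
  have hY00 : ∀ q : Fin n, q.val = 0 → Y q q = (∑ p, ∑ r, X p r) / n := by
    intro q hq
    rw [hYdef]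
    rw [Matrix.mul_apply]
    have hcol : ∀ r : Fin n, (Fᴴ * X) q r * F r q = (∑ p, X p r) * (1/n) := by
      intro r
      rw [Matrix.mul_apply, Finset.sum_mul, Finset.sum_mul]
      apply Finset.sum_congr rfl
      intro p _
      rw [Matrix.conjTranspose_apply, Complex.star_def]
      have : (starRingEnd ℂ) (F p q) * F r q = 1 / n := by
        have h1 : F r q * (starRingEnd ℂ) (F p q) = 1 / n := s15_F0 n hn r p q hq
        rw [← h1]; ring
      calc (starRingEnd ℂ) (F p q) * X p r * F r q
          = X p r * ((starRingEnd ℂ) (F p q) * F r q) := by ring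
        _ = X p r * (1/n) := by rw [this]
        _ = X p r * (1/n) := rfl
    rw [Finset.sum_congr rfl (fun r _ => hcol r), ← Finset.sum_mul]
    rw [Finset.sum_comm]
    ring
  have ht0v : t0 = (∑ p, ∑ r, X p r) / n := by
    have hterm2 : ∀ q : Fin n, (if q.val = 0 then Y q q else 0)
        = (if q.val = 0 then (fun _ : Fin n => (∑ p, ∑ r, X p r) / (n:ℂ)) q else 0) := by
      intro q
      by_cases h : q.val = 0
      · rw [if_pos h, if_pos h, hY00 q h]
      · rw [if_neg h, if_neg h]
    rw [ht0, Finset.sum_congr rfl (fun q _ => hterm2 q),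
      s15_sum_ind n hn0 (fun _ => (∑ p, ∑ r, X p r) / n)]
  have ht1v : t1 = (∑ p, X p p) - (∑ p, ∑ r, X p r) / n := by
    have hsub : ∀ q : Fin n, (if q.val = 0 then 0 else Y q q)
        = Y q q - (if q.val = 0 then Y q q else 0) := by
      intro q
      by_cases h : q.val = 0
      · rw [if_pos h, if_pos h]; ring
      · rw [if_neg h, if_neg h]; ring
    rw [ht1, Finset.sum_congr rfl (fun q _ => hsub q), Finset.sum_sub_distrib,
      s15_trace_conj n hn X, ← ht0, ht0v]
  rw [ht0v, ht1v]
  have hn' : (n : ℂ) ≠ 0 := Nat.cast_ne_zero.2 hn0.ne'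
  have hd' : ((n : ℂ) - 1) ≠ 0 := by
    have h1n : (1:ℕ) ≤ n := by omega
    have : ((n - 1 : ℕ) : ℂ) = (n : ℂ) - 1 := by
      rw [Nat.cast_sub h1n]; simp
    rw [← this]
    exact Nat.cast_ne_zero.2 (by omega)
  by_cases hab : a = b
  · rw [if_pos hab, if_pos hab]
    field_simp
    ring
  · rw [if_neg hab, if_neg hab]
    field_simp
    ring

lemma s15_unit_mul {n : ℕ} {A B : Matrix (Fin n) (Fin n) ℂ}
    (hA1 : Aᴴ*A = 1) (hA2 : A*Aᴴ = 1) (hB1 : Bᴴ*B = 1) (hB2 : B*Bᴴ = 1) :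
    ((A*B)ᴴ*(A*B) = 1) ∧ ((A*B)*(A*B)ᴴ = 1) := by
  constructor
  · rw [Matrix.conjTranspose_mul, Matrix.mul_assoc, ← Matrix.mul_assoc Aᴴ A B, hA1,
      Matrix.one_mul, hB1]
  · rw [Matrix.conjTranspose_mul, Matrix.mul_assoc, ← Matrix.mul_assoc B Bᴴ Aᴴ, hB2,
      Matrix.one_mul, hA2]

/-- The permutation-twirling channel admits a mixed-unitary
decomposition as a uniform average of `N = (n−1)² + 1` unitary conjugations. -/
theorem stmt_15 (n : ℕ) (hn : 0 < n)
    (V : Equiv.Perm (Fin n) → Matrix (Fin n) (Fin n) ℂ)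
    (hV : ∀ (σ : Equiv.Perm (Fin n)) (i j : Fin n), V σ i j = if i = σ j then 1 else 0) :
    ∃ W : Fin ((n - 1) ^ 2 + 1) → Matrix (Fin n) (Fin n) ℂ,
      (∀ k, (W k)ᴴ * W k = 1 ∧ W k * (W k)ᴴ = 1) ∧
      ∀ X : Matrix (Fin n) (Fin n) ℂ,
        (1 / (n.factorial : ℂ)) • ∑ σ : Equiv.Perm (Fin n), V σ * X * (V σ)ᴴ =
          (1 / (((n - 1) ^ 2 + 1 : ℕ) : ℂ)) • ∑ k, W k * X * (W k)ᴴ := by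
  rcases Nat.lt_or_ge n 2 with h1 | h2
  · -- n = 1
    have hn1 : n = 1 := by omega
    subst hn1
    refine ⟨fun _ => 1, fun k => by simp, ?_⟩
    intro X
    have hV1 : ∀ σ : Equiv.Perm (Fin 1), V σ = 1 := by
      intro σ
      ext i j
      rw [hV, Matrix.one_apply]
      have h1 : i = σ j := Subsingleton.elim _ _
      have h2 : i = j := Subsingleton.elim _ _
      simp [h1, h2, Subsingleton.elim (σ j) j]
    simp only [hV1, Matrix.conjTranspose_one, Matrix.mul_one, Matrix.one_mul]
    rw [Finset.sum_const, Finset.sum_const, Finset.card_univ, Finset.card_univ]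
    simp [Fintype.card_perm]
  · -- main case
    have h2' : 2 ≤ n := h2
    refine ⟨fun k => s15F n * s15C n k.val * (s15F n)ᴴ, ?_, ?_⟩
    · intro k
      have hF1 := s15F_conjT_mul n (by omega)
      have hF2 := s15F_mul_conjT n (by omega)
      have hC1 := s15C_conjT_mul n h2' k.val
      have hC2 := s15C_mul_conjT n h2' k.val
      have hFC := s15_unit_mul hF1 hF2 hC1 hC2
      have hFh1 : ((s15F n)ᴴ)ᴴ * (s15F n)ᴴ = 1 := by
        rw [Matrix.conjTranspose_conjTranspose]; exact hF2
      have hFh2 : (s15F n)ᴴ * ((s15F n)ᴴ)ᴴ = 1 := by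
        rw [Matrix.conjTranspose_conjTranspose]; exact hF1
      exact s15_unit_mul hFC.1 hFC.2 hFh1 hFh2
    · intro X
      ext a b
      rw [Matrix.smul_apply, Matrix.smul_apply, Matrix.sum_apply, Matrix.sum_apply]
      rw [show (∑ σ : Equiv.Perm (Fin n), (V σ * X * (V σ)ᴴ) a b)
          = (∑ σ : Equiv.Perm (Fin n), V σ * X * (V σ)ᴴ) a b from
        (Matrix.sum_apply a b _ _).symm]
      rw [show (∑ k : Fin ((n-1)^2+1),
            ((s15F n * s15C n k.val * (s15F n)ᴴ) * X *
              (s15F n * s15C n k.val * (s15F n)ᴴ)ᴴ) a b)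
          = (∑ k : Fin ((n-1)^2+1),
            (s15F n * s15C n k.val * (s15F n)ᴴ) * X *
              (s15F n * s15C n k.val * (s15F n)ᴴ)ᴴ) a b from
        (Matrix.sum_apply a b _ _).symm]
      rw [s15_lhs n hn V hV X a b, s15_rhs n h2' X a b]
      have hfac : (n.factorial : ℂ) ≠ 0 := Nat.cast_ne_zero.2 n.factorial_ne_zero
      have hNne : ((((n-1)^2+1 : ℕ)) : ℂ) ≠ 0 := Nat.cast_ne_zero.2 (Nat.succ_ne_zero _)
      have hn' : (n : ℂ) ≠ 0 := Nat.cast_ne_zero.2 (by omega)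
      have hnn : ((n * (n-1) : ℕ) : ℂ) ≠ 0 := Nat.cast_ne_zero.2 (by
        have : 0 < n * (n-1) := Nat.mul_pos (by omega) (by omega)
        omega)
      have hd' : ((n:ℂ) - 1) ≠ 0 := by
        have h1n : (1:ℕ) ≤ n := by omega
        have hc : ((n - 1 : ℕ) : ℂ) = (n : ℂ) - 1 := by
          rw [Nat.cast_sub h1n]; simp
        rw [← hc]
        exact Nat.cast_ne_zero.2 (by omega)
      have hcast : ((n * (n-1) : ℕ) : ℂ) = (n:ℂ) * ((n:ℂ) - 1) := by
        have h1n : (1:ℕ) ≤ n := by omega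
        push_cast [Nat.cast_sub h1n]
        ring
      have hNc : ((((n-1)^2+1 : ℕ)) : ℂ) = ((n:ℂ)-1)^2+1 := by
        have h1n : (1:ℕ) ≤ n := by omega
        push_cast [Nat.cast_sub h1n]
        ring
      have hc2 : ((n:ℂ)-1)^2+1 ≠ 0 := by rw [← hNc]; exact hNne
      by_cases hab : a = b
      · rw [if_pos hab, if_pos hab]
        simp only [smul_eq_mul]
        field_simp
      · rw [if_neg hab, if_neg hab]
        simp only [smul_eq_mul]
        rw [hcast]
        field_simp
end
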